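/- arXiv:0902.4569 — 7 statements merged into one kernel-verified Lean document; each statement's English description precedes it below -/
import Mathlib

section
/- Let K ≥ 1 be an integer and ℛ ⊆ ℝ₊^K a nonempty compact convex coordinate-convex rate region. Then there exists a quasi-continuous function H : ℝ₊^K → ℝ₊^K such that for every w ∈ ℝ₊^K one has H(w) ∈ ℛ and ⟨H(w), w⟩ ≥ ⟨r, w⟩ for all r ∈ ℛ (i.e., H is a quasi-continuous selection of the max-weight correspondence w ↦ argmax_{r∈ℛ} ⟨r,w⟩). -/
open Filter Topology MeasureTheory
open scoped ENNReal NNReal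

/-- The nonnegative orthant ℝ₊^K as a metric subspace of `Fin K → ℝ`
(the latter carrying the square/sup product metric, as in the paper). -/
abbrev Orth (K : ℕ) := {w : Fin K → ℝ // ∀ k, 0 ≤ w k}

instance (K : ℕ) : Nonempty (Orth K) := ⟨⟨fun _ => 0, fun _ => le_rfl⟩⟩

/-- Euclidean inner product on `Fin K → ℝ`. -/
def ip {K : ℕ} (x y : Fin K → ℝ) : ℝ := ∑ k, x k * y k

/-- `F` is quasi-continuous at `x`: there is a sequence `xₙ → x` with `F xₙ → F x`
and `F` continuous at every `xₙ`. -/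
def QuasiContinuousAt {X Y : Type*} [MetricSpace X] [MetricSpace Y] (F : X → Y) (x : X) : Prop :=
  ∃ u : ℕ → X, Tendsto u atTop (nhds x) ∧
    Tendsto (fun n => F (u n)) atTop (nhds (F x)) ∧ ∀ n, ContinuousAt F (u n)

/-- `F` is quasi-continuous if it is quasi-continuous at every point. -/
def QuasiContinuous {X Y : Type*} [MetricSpace X] [MetricSpace Y] (F : X → Y) : Prop :=
  ∀ x, QuasiContinuousAt F x

section MWAux

variable {K : ℕ}

/-- The argmax set of `r ↦ ip r w` over `R`. -/
def mwPhi (R : Set (Fin K → ℝ)) (w : Fin K → ℝ) : Set (Fin K → ℝ) :=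
  {r | r ∈ R ∧ ∀ s ∈ R, ip s w ≤ ip r w}

lemma continuous_ip_right (r : Fin K → ℝ) : Continuous fun w => ip r w := by
  unfold ip
  exact continuous_finset_sum _ fun k _ => continuous_const.mul (continuous_apply k)

lemma continuous_ip_left (w : Fin K → ℝ) : Continuous fun r => ip r w := by
  unfold ip
  exact continuous_finset_sum _ fun k _ => (continuous_apply k).mul continuous_const

lemma continuous_ip_pair :
    Continuous fun p : (Fin K → ℝ) × (Fin K → ℝ) => ip p.1 p.2 := by
  unfold ip
  exact continuous_finset_sum _ fun k _ =>
    ((continuous_apply k).comp continuous_fst).mul ((continuous_apply k).comp continuous_snd)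

lemma mwPhi_nonempty {R : Set (Fin K → ℝ)} (hRcomp : IsCompact R) (hRne : R.Nonempty)
    (w : Fin K → ℝ) : (mwPhi R w).Nonempty := by
  obtain ⟨r, hrR, hmax⟩ := hRcomp.exists_isMaxOn hRne (continuous_ip_left w).continuousOn
  exact ⟨r, hrR, fun s hs => hmax hs⟩

lemma ip_add_smul (r a v : Fin K → ℝ) (t : ℝ) :
    ip r (a + t • v) = ip r a + t * ip r v := by
  simp only [ip, Pi.add_apply, Pi.smul_apply, smul_eq_mul, mul_add, Finset.sum_add_distrib,
    Finset.mul_sum]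
  congr 1
  exact Finset.sum_congr rfl fun k _ => by ring

lemma ip_sub (r a b : Fin K → ℝ) : ip r (a - b) = ip r a - ip r b := by
  simp only [ip, Pi.sub_apply, mul_sub, Finset.sum_sub_distrib]

lemma ip_single (r : Fin K → ℝ) (k : Fin K) : ip r (Pi.single k 1) = r k := by
  simp [ip, Pi.single_apply, mul_ite]

lemma abs_ip_le {R : Set (Fin K → ℝ)} {M : ℝ} (hM : ∀ r ∈ R, ‖r‖ ≤ M)
    {r : Fin K → ℝ} (hr : r ∈ R) (v : Fin K → ℝ) :
    |ip r v| ≤ (K * max M 0) * ‖v‖ := by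
  have h1 : |ip r v| ≤ ∑ k, |r k * v k| := Finset.abs_sum_le_sum_abs _ _
  have h2 : ∀ k : Fin K, |r k * v k| ≤ max M 0 * ‖v‖ := by
    intro k
    rw [abs_mul]
    have hrk : |r k| ≤ max M 0 := le_trans (norm_le_pi_norm r k) (le_trans (hM r hr) (le_max_left _ _))
    have hvk : |v k| ≤ ‖v‖ := norm_le_pi_norm v k
    exact mul_le_mul hrk hvk (abs_nonneg _) (le_max_right _ _)
  have h4 : (∑ _k : Fin K, max M 0 * ‖v‖) = (K * max M 0) * ‖v‖ := by
    rw [Finset.sum_const, Finset.card_univ, Fintype.card_fin, nsmul_eq_mul]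
    ring
  exact h4 ▸ le_trans h1 (Finset.sum_le_sum fun k _ => h2 k)

set_option maxHeartbeats 1000000 in
/-- Closed graph of the argmax correspondence. -/
lemma mwPhi_mem_of_tendsto {R : Set (Fin K → ℝ)} (hRcomp : IsCompact R)
    {w r : ℕ → Fin K → ℝ} {w0 r0 : Fin K → ℝ}
    (hw : Tendsto w atTop (𝓝 w0)) (hr : Tendsto r atTop (𝓝 r0))
    (hmem : ∀ n, r n ∈ mwPhi R (w n)) : r0 ∈ mwPhi R w0 := by
  have hr0R : r0 ∈ R :=
    hRcomp.isClosed.mem_of_tendsto hr (Eventually.of_forall fun n => (hmem n).1)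
  refine ⟨hr0R, fun s hs => ?_⟩
  have h1 : Tendsto (fun n => ip s (w n)) atTop (𝓝 (ip s w0)) :=
    ((continuous_ip_right s).tendsto w0).comp hw
  have h2 : Tendsto (fun n => ip (r n) (w n)) atTop (𝓝 (ip r0 w0)) :=
    (continuous_ip_pair.tendsto (r0, w0)).comp (hr.prodMk_nhds hw)
  exact le_of_tendsto_of_tendsto' h1 h2 fun n => (hmem n).2 s hs

/-- If `h` dominates `ip r ·` over `R` and touches it at `w` (for `r ∈ R`), and `h` is
differentiable at `w`, then the derivative of `h` at `w` is `ip r ·`. -/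
lemma fderiv_eq_ip {R : Set (Fin K → ℝ)} {h : (Fin K → ℝ) → ℝ}
    (hub : ∀ w, ∀ r ∈ R, ip r w ≤ h w) {w r : Fin K → ℝ}
    (hrR : r ∈ R) (hre : ip r w = h w) (hd : DifferentiableAt ℝ h w) (v : Fin K → ℝ) :
    fderiv ℝ h w v = ip r v := by
  have h1 : HasDerivAt (fun t : ℝ => w + t • v) v 0 := by
    simpa using ((hasDerivAt_id (0 : ℝ)).smul_const v).const_add w
  have h0 : HasFDerivAt h (fderiv ℝ h w) ((fun t : ℝ => w + t • v) 0) := by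
    simpa using hd.hasFDerivAt
  have hline : HasDerivAt (fun t : ℝ => h (w + t • v)) (fderiv ℝ h w v) 0 :=
    h0.comp_hasDerivAt 0 h1
  set g : ℝ → ℝ := fun t => h (w + t • v) with hg
  have key : ∀ t : ℝ, h w + t * ip r v ≤ g t := by
    intro t
    calc h w + t * ip r v = ip r (w + t • v) := by rw [ip_add_smul, hre]
    _ ≤ g t := hub _ r hrR
  have hg0 : g 0 = h w := by simp [hg]
  have hslope := hasDerivAt_iff_tendsto_slope.1 hline
  have hge : ip r v ≤ fderiv ℝ h w v := by
    refine ge_of_tendsto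
      (hslope.mono_left (nhdsWithin_mono 0 fun t (ht : t ∈ Set.Ioi 0) => ne_of_gt ht)) ?_
    filter_upwards [self_mem_nhdsWithin] with t (ht : (0:ℝ) < t)
    rw [slope_def_field, sub_zero, le_div_iff₀ ht, mul_comm]
    have := key t
    linarith
  have hle : fderiv ℝ h w v ≤ ip r v := by
    refine le_of_tendsto
      (hslope.mono_left (nhdsWithin_mono 0 fun t (ht : t ∈ Set.Iio 0) => ne_of_lt ht)) ?_
    filter_upwards [self_mem_nhdsWithin] with t (ht : t < (0:ℝ))
    rw [slope_def_field, sub_zero, div_le_iff_of_neg ht, mul_comm]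
    have := key t
    linarith
  exact le_antisymm hle hge

/-- At a differentiability point of the support function, the argmax is a singleton. -/
lemma mwPhi_subsingleton {R : Set (Fin K → ℝ)} {h : (Fin K → ℝ) → ℝ}
    (hub : ∀ w, ∀ r ∈ R, ip r w ≤ h w)
    (hach : ∀ w, ∃ r ∈ R, h w = ip r w)
    {w : Fin K → ℝ} (hd : DifferentiableAt ℝ h w) :
    (mwPhi R w).Subsingleton := by
  have htouch : ∀ r ∈ mwPhi R w, ip r w = h w := by
    intro r hr
    obtain ⟨r0, hr0R, hr0⟩ := hach w
    exact le_antisymm (hub w r hr.1) (hr0 ▸ hr.2 r0 hr0R)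
  intro r1 h1 r2 h2
  funext k
  have e1 := fderiv_eq_ip hub h1.1 (htouch r1 h1) hd (Pi.single k 1)
  have e2 := fderiv_eq_ip hub h2.1 (htouch r2 h2) hd (Pi.single k 1)
  have := e1.symm.trans e2
  rwa [ip_single, ip_single] at this

end MWAux

/-- There is a quasi-continuous selection of the max-weight
correspondence `w ↦ argmax_{r ∈ ℛ} ⟨r, w⟩` on the nonnegative orthant. -/
theorem maxweight_quasicontinuous_selection
    (K : ℕ) (hK : 1 ≤ K) (R : Set (Fin K → ℝ))
    (hRne : R.Nonempty) (hRcomp : IsCompact R) (hRconv : Convex ℝ R)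
    (hRpos : ∀ r ∈ R, ∀ k, 0 ≤ r k)
    (hRcc : ∀ r ∈ R, ∀ r' : Fin K → ℝ, (∀ k, 0 ≤ r' k) → (∀ k, r' k ≤ r k) → r' ∈ R) :
    ∃ H : Orth K → Orth K, QuasiContinuous H ∧
      ∀ w : Orth K, (H w).1 ∈ R ∧ ∀ r ∈ R, ip r w.1 ≤ ip (H w).1 w.1 := by
  classical
  -- A measurable selection of the argmax correspondence and the support function `h`.
  obtain ⟨sel, hsel⟩ : ∃ sel : (Fin K → ℝ) → (Fin K → ℝ), ∀ w, sel w ∈ mwPhi R w :=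
    ⟨fun w => (mwPhi_nonempty hRcomp hRne w).choose,
      fun w => (mwPhi_nonempty hRcomp hRne w).choose_spec⟩
  set h : (Fin K → ℝ) → ℝ := fun w => ip (sel w) w with hh
  have hub : ∀ w, ∀ r ∈ R, ip r w ≤ h w := fun w r hr => (hsel w).2 r hr
  have hach : ∀ w, ∃ r ∈ R, h w = ip r w := fun w => ⟨sel w, (hsel w).1, rfl⟩
  have hsub : ∀ w : Fin K → ℝ, DifferentiableAt ℝ h w → (mwPhi R w).Subsingleton :=
    fun w hd => mwPhi_subsingleton hub hach hd
  -- `h` is Lipschitz.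
  obtain ⟨M, hM⟩ := hRcomp.isBounded.exists_norm_le
  set C : ℝ≥0 := Real.toNNReal (K * max M 0) with hC
  have hCr : (C : ℝ) = K * max M 0 := Real.coe_toNNReal _ (by positivity)
  have hlip : LipschitzWith C h := by
    apply LipschitzWith.of_dist_le_mul
    intro x y
    rw [Real.dist_eq, dist_eq_norm, hCr]
    rw [abs_sub_le_iff]
    constructor
    · have h1 : h y ≥ ip (sel x) y := hub y (sel x) (hsel x).1
      have h2 : h x - ip (sel x) y = ip (sel x) (x - y) := by rw [ip_sub]
      have h3 : |ip (sel x) (x - y)| ≤ (K * max M 0) * ‖x - y‖ := abs_ip_le hM (hsel x).1 _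
      have := le_trans (le_abs_self _) h3
      linarith [this, h1, h2.le, h2.ge]
    · have h1 : h x ≥ ip (sel y) x := hub x (sel y) (hsel y).1
      have h2 : h y - ip (sel y) x = ip (sel y) (y - x) := by rw [ip_sub]
      have h3 : |ip (sel y) (y - x)| ≤ (K * max M 0) * ‖y - x‖ := abs_ip_le hM (hsel y).1 _
      rw [← norm_neg]
      have h4 : -(x - y) = y - x := by ring
      rw [h4]
      have := le_trans (le_abs_self _) h3
      linarith [this, h1, h2.le, h2.ge]
  -- Rademacher: differentiability points are dense.
  have hdense : Dense {w : Fin K → ℝ | DifferentiableAt ℝ h w} :=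
    Measure.dense_of_ae (hlip.ae_differentiableAt (μ := volume))
  -- Density of differentiability points inside the orthant.
  have hD : ∀ (x : Orth K) (ε : ℝ), 0 < ε →
      ∃ y : Orth K, DifferentiableAt ℝ h y.1 ∧ dist y x < ε := by
    intro x ε hε
    set c : Fin K → ℝ := x.1 + (ε / 2) • ((fun _ => 1) : Fin K → ℝ) with hc
    obtain ⟨y, hyb, hyD⟩ := Metric.dense_iff.1 hdense c (ε / 4) (by positivity)
    have hyc : dist y c < ε / 4 := Metric.mem_ball.1 hyb
    have hyk : ∀ k, 0 ≤ y k := by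
      intro k
      have h1 : dist (y k) (c k) ≤ dist y c := dist_le_pi_dist y c k
      have h2 : c k = x.1 k + ε / 2 := by simp [hc]
      have h3 := x.2 k
      rw [Real.dist_eq] at h1
      have h4 : |y k - c k| < ε / 4 := lt_of_le_of_lt h1 hyc
      have h5 := abs_lt.1 h4
      rw [h2] at h5
      linarith [h5.1]
    have hcx : dist c x.1 ≤ ε / 2 := by
      rw [dist_eq_norm]
      have h6 : c - x.1 = (ε / 2) • ((fun _ => (1:ℝ)) : Fin K → ℝ) := by rw [hc]; abel
      rw [h6, norm_smul]
      have h7 : ‖((fun _ => (1:ℝ)) : Fin K → ℝ)‖ ≤ 1 := by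
        apply pi_norm_le_iff_of_nonneg zero_le_one |>.2
        intro k; simp
      have h8 : ‖(ε/2 : ℝ)‖ = ε / 2 := by rw [Real.norm_eq_abs, abs_of_pos (by positivity)]
      calc ‖(ε/2 : ℝ)‖ * ‖((fun _ => (1:ℝ)) : Fin K → ℝ)‖ ≤ ‖(ε/2 : ℝ)‖ * 1 :=
            mul_le_mul_of_nonneg_left h7 (norm_nonneg _)
      _ = ε / 2 := by rw [mul_one, h8]
    refine ⟨⟨y, hyk⟩, hyD, ?_⟩
    have hdd : dist (⟨y, hyk⟩ : Orth K) x = dist y x.1 := rfl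
    rw [hdd]
    calc dist y x.1 ≤ dist y c + dist c x.1 := dist_triangle _ _ _
    _ < ε := by linarith
  -- For every `x`, choose a limit of argmax values along differentiability points.
  have hP : ∀ x : Orth K, ∃ r : Fin K → ℝ, r ∈ mwPhi R x.1 ∧ ∃ u : ℕ → Orth K,
      (∀ n, DifferentiableAt ℝ h (u n).1) ∧ Tendsto (fun n => (u n).1) atTop (𝓝 x.1) ∧
      Tendsto (fun n => sel (u n).1) atTop (𝓝 r) := by
    intro x
    choose v hvD hvd using fun n : ℕ => hD x (1 / ((n : ℝ) + 1)) (by positivity)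
    have hvx : Tendsto (fun n => (v n).1) atTop (𝓝 x.1) := by
      rw [tendsto_iff_dist_tendsto_zero]
      refine squeeze_zero (fun n => dist_nonneg) (fun n => ?_) tendsto_one_div_add_atTop_nhds_zero_nat
      exact le_of_lt (hvd n)
    obtain ⟨r, hrR, ψ, hψ, hψt⟩ := hRcomp.tendsto_subseq (fun n => (hsel (v n).1).1)
    have hwψ : Tendsto (fun n => (v (ψ n)).1) atTop (𝓝 x.1) := hvx.comp hψ.tendsto_atTop
    have hrphi : r ∈ mwPhi R x.1 :=
      mwPhi_mem_of_tendsto hRcomp hwψ hψt (fun n => hsel (v (ψ n)).1)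
    exact ⟨r, hrphi, fun n => v (ψ n), fun n => hvD (ψ n), hwψ, hψt⟩
  choose Hr hHphi Hu hHuD hHux hHus using hP
  set H : Orth K → Orth K := fun x => ⟨Hr x, fun k => hRpos _ (hHphi x).1 k⟩ with hH
  have hHval : ∀ x, (H x).1 = Hr x := fun x => rfl
  have hHmem : ∀ x : Orth K, (H x).1 ∈ mwPhi R x.1 := fun x => hHphi x
  -- Continuity of `H` at differentiability points of `h`.
  have hcont : ∀ x : Orth K, DifferentiableAt ℝ h x.1 → ContinuousAt H x := by
    intro x hx
    rw [ContinuousAt]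
    apply tendsto_of_subseq_tendsto
    intro ns hns
    have hmem : ∀ n, (H (ns n)).1 ∈ R := fun n => (hHmem (ns n)).1
    obtain ⟨r', hr'R, ms, hms, hmst⟩ := hRcomp.tendsto_subseq hmem
    have hwms : Tendsto (fun n => (ns (ms n)).1) atTop (𝓝 x.1) :=
      ((continuous_subtype_val.tendsto x).comp hns).comp hms.tendsto_atTop
    have hr' : r' ∈ mwPhi R x.1 :=
      mwPhi_mem_of_tendsto hRcomp hwms hmst (fun n => hHmem (ns (ms n)))
    have hre : r' = (H x).1 := hsub x.1 hx hr' (hHmem x)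
    refine ⟨ms, ?_⟩
    rw [tendsto_subtype_rng]
    rw [← hre]
    exact hmst
  refine ⟨H, ?_, fun w => ⟨(hHmem w).1, fun r hr => (hHmem w).2 r hr⟩⟩
  intro x
  refine ⟨Hu x, ?_, ?_, fun n => hcont _ (hHuD x n)⟩
  · rw [tendsto_subtype_rng]
    exact hHux x
  · have heq : ∀ n, (H (Hu x n)).1 = sel (Hu x n).1 := fun n =>
      hsub _ (hHuD x n) (hHmem (Hu x n)) (hsel (Hu x n).1)
    rw [tendsto_subtype_rng]
    have : (fun n => (H (Hu x n)).1) = fun n => sel (Hu x n).1 := funext heq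
    rw [this, hHval]
    exact hHus x
end

section
/- Let K ≥ 1 be an integer and ℛ ⊆ ℝ₊^K a nonempty compact convex coordinate-convex rate region with C^k := max{r^k : r ∈ ℛ}. Then there exists a quasi-continuous function H^wc : ℝ₊^K → ℝ₊^K such that H^wc(w) equals the metric projection of w onto ℛ (well defined since ℛ is nonempty, closed and convex) whenever w ∈ Π_{k=1}^K [0, C^k), and H^wc(w) ∈ argmax_{r∈ℛ} ⟨r, w⟩ for every other w ∈ ℝ₊^K. -/
open Filter Topology MeasureTheory
open scoped ENNReal NNReal

section Aux
variable {K : ℕ}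

/-- Generic argmax set of `Φ w ·` over `R`. -/
def MaxSet (R : Set (Fin K → ℝ)) (Φ : (Fin K → ℝ) → (Fin K → ℝ) → ℝ) (w : Fin K → ℝ) :
    Set (Fin K → ℝ) := {p | p ∈ R ∧ ∀ r ∈ R, Φ w r ≤ Φ w p}

lemma maxSet_nonempty {R : Set (Fin K → ℝ)} (hRne : R.Nonempty) (hRcomp : IsCompact R)
    {Φ : (Fin K → ℝ) → (Fin K → ℝ) → ℝ}
    (hΦ : Continuous fun q : (Fin K → ℝ) × (Fin K → ℝ) => Φ q.1 q.2) (w : Fin K → ℝ) :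
    (MaxSet R Φ w).Nonempty := by
  obtain ⟨p, hp, hmax⟩ := hRcomp.exists_isMaxOn hRne
    (Continuous.continuousOn (by exact hΦ.comp (Continuous.prodMk_right w)) :
      ContinuousOn (fun r => Φ w r) R)
  exact ⟨p, hp, fun r hr => hmax hr⟩

lemma maxSet_mem_of_tendsto {R : Set (Fin K → ℝ)} (hRcl : IsClosed R)
    {Φ : (Fin K → ℝ) → (Fin K → ℝ) → ℝ}
    (hΦ : Continuous fun q : (Fin K → ℝ) × (Fin K → ℝ) => Φ q.1 q.2)
    {u t : ℕ → Fin K → ℝ} {w s : Fin K → ℝ}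
    (hu : Tendsto u atTop (𝓝 w)) (ht : Tendsto t atTop (𝓝 s))
    (h : ∀ᶠ n in atTop, t n ∈ MaxSet R Φ (u n)) : s ∈ MaxSet R Φ w := by
  constructor
  · exact hRcl.mem_of_tendsto ht (h.mono fun n hn => hn.1)
  · intro r hr
    have h1 : Tendsto (fun n => Φ (u n) r) atTop (𝓝 (Φ w r)) :=
      (hΦ.tendsto (w, r)).comp (hu.prodMk_nhds tendsto_const_nhds)
    have h2 : Tendsto (fun n => Φ (u n) (t n)) atTop (𝓝 (Φ w s)) :=
      (hΦ.tendsto (w, s)).comp (hu.prodMk_nhds ht)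
    exact le_of_tendsto_of_tendsto h1 h2 (h.mono fun n hn => hn.2 r hr)

lemma selection_continuousAt {R : Set (Fin K → ℝ)} (hRcomp : IsCompact R)
    {Φ : (Fin K → ℝ) → (Fin K → ℝ) → ℝ}
    (hΦ : Continuous fun q : (Fin K → ℝ) × (Fin K → ℝ) => Φ q.1 q.2)
    {G : Orth K → Orth K} {x0 : Orth K}
    (hG : ∀ w, (G w).1 ∈ R)
    (hnb : ∀ᶠ w' in 𝓝 x0, (G w').1 ∈ MaxSet R Φ w'.1)
    (hsing : ∀ p ∈ MaxSet R Φ x0.1, p = (G x0).1) :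
    ContinuousAt G x0 := by
  rw [ContinuousAt]
  apply tendsto_iff_seq_tendsto.2
  intro w hw
  rw [tendsto_subtype_rng]
  apply tendsto_of_subseq_tendsto
  intro ns hns
  obtain ⟨a, haR, φ, hφ, hconv⟩ :=
    hRcomp.tendsto_subseq (x := fun n => (G (w (ns n))).1) (fun n => hG _)
  refine ⟨φ, ?_⟩
  have hwns : Tendsto (fun n => w (ns (φ n))) atTop (𝓝 x0) :=
    hw.comp (hns.comp hφ.tendsto_atTop)
  have hmem : ∀ᶠ n in atTop, (G (w (ns (φ n)))).1 ∈ MaxSet R Φ (w (ns (φ n))).1 :=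
    hwns.eventually hnb
  have hvals : Tendsto (fun n => (w (ns (φ n))).1) atTop (𝓝 x0.1) :=
    (continuous_subtype_val.tendsto x0).comp hwns
  have ha : a ∈ MaxSet R Φ x0.1 :=
    maxSet_mem_of_tendsto hRcomp.isClosed hΦ hvals hconv hmem
  have : a = (G x0).1 := hsing a ha
  rw [this] at hconv
  exact hconv

lemma proj_unique {R : Set (Fin K → ℝ)} (hRconv : Convex ℝ R) {w p q : Fin K → ℝ}
    (hp : p ∈ MaxSet R (fun w r => -∑ k, (w k - r k) ^ 2) w)
    (hq : q ∈ MaxSet R (fun w r => -∑ k, (w k - r k) ^ 2) w) : p = q := by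
  set m : Fin K → ℝ := (1/2 : ℝ) • p + (1/2 : ℝ) • q with hm
  have hmR : m ∈ R := hRconv hp.1 hq.1 (by norm_num) (by norm_num) (by norm_num)
  have hmk : ∀ k, m k = (p k + q k) / 2 := fun k => by
    simp [hm]; ring
  have key : (∑ k, (w k - m k) ^ 2) + (1/4) * ∑ k, (p k - q k) ^ 2
      = ((∑ k, (w k - p k) ^ 2) + ∑ k, (w k - q k) ^ 2) / 2 := by
    rw [Finset.mul_sum, ← Finset.sum_add_distrib, ← Finset.sum_add_distrib, Finset.sum_div]
    refine Finset.sum_congr rfl fun k _ => by rw [hmk k]; ring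
  have h1 := hp.2 m hmR
  have h2 := hq.2 m hmR
  simp only at h1 h2
  have hd : ∑ k, (p k - q k) ^ 2 ≤ 0 := by linarith
  have hz : ∑ k, (p k - q k) ^ 2 = 0 :=
    le_antisymm hd (Finset.sum_nonneg fun k _ => sq_nonneg _)
  funext k
  have := (Finset.sum_eq_zero_iff_of_nonneg (fun k _ => sq_nonneg (p k - q k))).1 hz k
    (Finset.mem_univ k)
  have := sq_eq_zero_iff.1 this
  linarith

/-- the linear functional `x ↦ ip r x` as a continuous linear map -/
noncomputable def ipL (r : Fin K → ℝ) : (Fin K → ℝ) →L[ℝ] ℝ :=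
  ∑ k, r k • (ContinuousLinearMap.proj k)

lemma ipL_apply (r x : Fin K → ℝ) : ipL r x = ip r x := by
  simp [ipL, ip, ContinuousLinearMap.sum_apply, ContinuousLinearMap.proj_apply]

lemma hasFDerivAt_ip (r v : Fin K → ℝ) : HasFDerivAt (ip r) (ipL r) v := by
  have h := (ipL (K := K) r).hasFDerivAt (x := v)
  have e : ⇑(ipL r) = ip r := funext fun x => ipL_apply r x
  rwa [e] at h

/-- support function -/
noncomputable def supf (R : Set (Fin K → ℝ)) (v : Fin K → ℝ) : ℝ :=
  sSup ((fun r => ip r v) '' R)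

lemma le_supf {R : Set (Fin K → ℝ)} (hRcomp : IsCompact R) {r : Fin K → ℝ} (hr : r ∈ R)
    (v : Fin K → ℝ) : ip r v ≤ supf R v := by
  refine le_csSup ?_ ⟨r, hr, rfl⟩
  exact (hRcomp.image (by continuity : Continuous fun r : Fin K → ℝ => ip r v)).bddAbove

lemma supf_le {R : Set (Fin K → ℝ)} (hRne : R.Nonempty) {v : Fin K → ℝ} {a : ℝ}
    (h : ∀ r ∈ R, ip r v ≤ a) : supf R v ≤ a :=
  csSup_le (hRne.image _) (by rintro x ⟨r, hr, rfl⟩; exact h r hr)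

lemma maxSet_fderiv {R : Set (Fin K → ℝ)} (hRne : R.Nonempty) (hRcomp : IsCompact R)
    {v r : Fin K → ℝ} (hd : DifferentiableAt ℝ (supf R) v)
    (hmem : r ∈ MaxSet R (fun w r => ip r w) v) :
    ipL r = fderiv ℝ (supf R) v := by
  have h0 : supf R v = ip r v :=
    le_antisymm (supf_le hRne fun r' hr' => hmem.2 r' hr') (le_supf hRcomp hmem.1 v)
  have hmin : IsLocalMin (fun x => supf R x - ip r x) v := by
    refine Filter.Eventually.of_forall fun x => ?_
    have := le_supf hRcomp hmem.1 x
    simp only [h0]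
    linarith
  have hder : HasFDerivAt (fun x => supf R x - ip r x) (fderiv ℝ (supf R) v - ipL r) v :=
    hd.hasFDerivAt.sub (hasFDerivAt_ip r v)
  have := hmin.hasFDerivAt_eq_zero hder
  have := sub_eq_zero.1 this
  exact this.symm

lemma maxSet_subsingleton_of_diff {R : Set (Fin K → ℝ)} (hRne : R.Nonempty)
    (hRcomp : IsCompact R) {v : Fin K → ℝ} (hd : DifferentiableAt ℝ (supf R) v) :
    ∀ p ∈ MaxSet R (fun w r => ip r w) v, ∀ q ∈ MaxSet R (fun w r => ip r w) v, p = q := by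
  intro p hp q hq
  have h1 := maxSet_fderiv hRne hRcomp hd hp
  have h2 := maxSet_fderiv hRne hRcomp hd hq
  have h3 : ipL p = ipL q := h1.trans h2.symm
  funext k
  have := congrArg (fun L : (Fin K → ℝ) →L[ℝ] ℝ => L (Pi.single k 1)) h3
  simpa [ipL_apply, ip, Pi.single_apply, mul_ite, Finset.sum_ite_eq'] using this

lemma supf_lipschitz {R : Set (Fin K → ℝ)} (hRne : R.Nonempty) (hRcomp : IsCompact R)
    {M : ℝ} (hM : ∀ r ∈ R, ∀ k, |r k| ≤ M) (hM0 : 0 ≤ M) :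
    LipschitzWith ⟨K * M, by positivity⟩ (supf R) := by
  apply LipschitzWith.of_dist_le_mul
  intro x y
  have bound : ∀ x y : Fin K → ℝ, ∀ r ∈ R, ip r x - ip r y ≤ (K * M) * dist x y := by
    intro x y r hr
    have : ip r x - ip r y = ∑ k, r k * (x k - y k) := by
      simp only [ip, ← Finset.sum_sub_distrib]
      exact Finset.sum_congr rfl fun k _ => by ring
    rw [this]
    calc ∑ k, r k * (x k - y k) ≤ ∑ k, |r k * (x k - y k)| :=
          Finset.sum_le_sum fun k _ => le_abs_self _
      _ ≤ ∑ _k : Fin K, M * dist x y := by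
          refine Finset.sum_le_sum fun k _ => ?_
          rw [abs_mul]
          have h1 : |x k - y k| ≤ dist x y := by
            rw [← Real.dist_eq]
            exact dist_le_pi_dist x y k
          exact mul_le_mul (hM r hr k) h1 (abs_nonneg _) hM0
      _ = (K * M) * dist x y := by
          rw [Finset.sum_const, Finset.card_univ, Fintype.card_fin, nsmul_eq_mul]; ring
  have key : ∀ x y : Fin K → ℝ, supf R x - supf R y ≤ (K * M) * dist x y := by
    intro x y
    have : supf R x ≤ supf R y + (K * M) * dist x y := by
      refine supf_le hRne fun r hr => ?_
      have h1 := bound x y r hr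
      have h2 := le_supf hRcomp hr y
      linarith
    linarith
  rw [Real.dist_eq, abs_sub_le_iff]
  constructor
  · exact key x y
  · have := key y x
    rw [dist_comm] at this
    exact this

lemma diff_dense {R : Set (Fin K → ℝ)} (hRne : R.Nonempty) (hRcomp : IsCompact R) :
    Dense {v : Fin K → ℝ | DifferentiableAt ℝ (supf R) v} := by
  obtain ⟨M', hM'⟩ := hRcomp.isBounded.subset_closedBall 0
  have hM : ∀ r ∈ R, ∀ k, |r k| ≤ max M' 0 := by
    intro r hr k
    have h1 : dist r 0 ≤ M' := by simpa [Metric.mem_closedBall] using hM' hr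
    have h2 : dist (r k) 0 ≤ dist r (0 : Fin K → ℝ) := by
      simpa using dist_le_pi_dist r (0 : Fin K → ℝ) k
    rw [Real.dist_eq, sub_zero] at h2
    exact le_trans (le_trans h2 h1) (le_max_left _ _)
  have hlip := supf_lipschitz hRne hRcomp hM (le_max_right _ _)
  exact MeasureTheory.Measure.dense_of_ae (μ := (volume : Measure (Fin K → ℝ)))
    (hlip.ae_differentiableAt)

lemma ip_cont : Continuous fun q : (Fin K → ℝ) × (Fin K → ℝ) => ip q.2 q.1 := by
  unfold ip
  exact continuous_finset_sum _ fun k _ =>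
    (((continuous_apply k).comp continuous_snd).mul ((continuous_apply k).comp continuous_fst))

lemma exists_spec {R : Set (Fin K → ℝ)} (hRne : R.Nonempty) (hRcomp : IsCompact R)
    (C : Fin K → ℝ)
    (w : Orth K) (hb : ¬∀ k, w.1 k < C k) :
    ∃ s : Fin K → ℝ, s ∈ MaxSet R (fun w r => ip r w) w.1 ∧
      ∃ (u : ℕ → Orth K) (t : ℕ → Fin K → ℝ),
        Tendsto u atTop (𝓝 w) ∧ Tendsto t atTop (𝓝 s) ∧
        ∀ n, (∃ k, C k < (u n).1 k) ∧ t n ∈ MaxSet R (fun w r => ip r w) (u n).1 ∧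
          ∀ p ∈ MaxSet R (fun w r => ip r w) (u n).1, p = t n := by
  push_neg at hb
  obtain ⟨k0, hk0⟩ := hb
  -- pick differentiability points in shifted balls
  have hpick : ∀ n : ℕ, ∃ v : Fin K → ℝ, DifferentiableAt ℝ (supf R) v ∧
      dist v (fun k => w.1 k + (if k = k0 then 3 else 1) * (1 / (n + 1 : ℝ)))
        < (1 / (n + 1 : ℝ)) / 2 := by
    intro n
    have hpos : (0:ℝ) < (1 / (n + 1 : ℝ)) / 2 := by positivity
    obtain ⟨v, hv1, hv2⟩ := (diff_dense hRne hRcomp).exists_mem_open Metric.isOpen_ball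
      ⟨_, Metric.mem_ball_self hpos⟩
    exact ⟨v, hv1, by simpa [Metric.mem_ball] using hv2⟩
  choose v hvdiff hvball using hpick
  -- basic estimates
  have hδpos : ∀ n : ℕ, (0:ℝ) < 1 / (n + 1 : ℝ) := fun n => by positivity
  have hcoord : ∀ n k, |v n k - (w.1 k + (if k = k0 then 3 else 1) * (1 / (n + 1 : ℝ)))| <
      (1 / (n + 1 : ℝ)) / 2 := by
    intro n k
    have := dist_le_pi_dist (v n)
      (fun k => w.1 k + (if k = k0 then 3 else 1) * (1 / (n + 1 : ℝ))) k
    rw [Real.dist_eq] at this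
    exact lt_of_le_of_lt this (hvball n)
  have hvnonneg : ∀ n k, 0 ≤ v n k := by
    intro n k
    have h := hcoord n k
    have h1 : (1:ℝ) ≤ (if k = k0 then 3 else 1) := by split <;> norm_num
    have h2 := w.2 k
    have h3 := hδpos n
    rw [abs_lt] at h
    nlinarith [h.1]
  have hvU : ∀ n, C k0 < v n k0 := by
    intro n
    have h := hcoord n k0
    rw [abs_lt] at h
    have h3 := hδpos n
    simp only [eq_self_iff_true, if_true] at h
    nlinarith [h.1, hk0]
  have hvtend : Tendsto (fun n => v n) atTop (𝓝 w.1) := by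
    rw [tendsto_iff_dist_tendsto_zero]
    have hub : ∀ n : ℕ, dist (v n) w.1 ≤ 4 * (1 / (n + 1 : ℝ)) := by
      intro n
      have htri := dist_triangle (v n)
        (fun k => w.1 k + (if k = k0 then 3 else 1) * (1 / (n + 1 : ℝ))) w.1
      have h2 : dist (fun k => w.1 k + (if k = k0 then 3 else 1) * (1 / (n + 1 : ℝ))) w.1
          ≤ 3 * (1 / (n + 1 : ℝ)) := by
        apply dist_pi_le_iff (by positivity) |>.2
        intro k
        rw [Real.dist_eq]
        have h3 := hδpos n
        have h1 : (if k = k0 then (3:ℝ) else 1) ≤ 3 := by split <;> norm_num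
        have h1' : (0:ℝ) ≤ (if k = k0 then (3:ℝ) else 1) := by split <;> norm_num
        rw [abs_le]
        constructor <;> nlinarith
      have h1 := (hvball n).le
      have h3 := hδpos n
      linarith
    refine squeeze_zero (fun n => dist_nonneg) hub ?_
    have : Tendsto (fun n : ℕ => (1 / (n + 1 : ℝ))) atTop (𝓝 0) :=
      tendsto_one_div_add_atTop_nhds_zero_nat
    simpa using this.const_mul 4
  -- unique maximizers at each v n
  have htn : ∀ n, ∃ t, t ∈ MaxSet R (fun w r => ip r w) (v n) :=
    fun n => maxSet_nonempty hRne hRcomp ip_cont (v n)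
  choose t' ht' using htn
  -- compactness: convergent subsequence
  obtain ⟨s, hsR, φ, hφ, hconv⟩ := hRcomp.tendsto_subseq (x := t') (fun n => (ht' n).1)
  have huφ : Tendsto (fun n => v (φ n)) atTop (𝓝 w.1) := hvtend.comp hφ.tendsto_atTop
  have hsmem : s ∈ MaxSet R (fun w r => ip r w) w.1 :=
    maxSet_mem_of_tendsto hRcomp.isClosed ip_cont huφ hconv
      (Filter.Eventually.of_forall fun n => ht' (φ n))
  refine ⟨s, hsmem, fun n => ⟨v (φ n), hvnonneg (φ n)⟩, fun n => t' (φ n), ?_, hconv, ?_⟩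
  · rw [tendsto_subtype_rng]
    exact huφ
  · intro n
    refine ⟨⟨k0, hvU (φ n)⟩, ht' (φ n), fun p hp => ?_⟩
    exact maxSet_subsingleton_of_diff hRne hRcomp (hvdiff (φ n)) p hp (t' (φ n)) (ht' (φ n))

end Aux

/-- There is a quasi-continuous work-conserving max-weight scheduler:
on `Π_k [0, C^k)` it is the (Euclidean) metric projection onto `ℛ` (the point of `ℛ`
minimizing the Euclidean distance to `w`), and elsewhere it is a max-weight choice. -/
theorem wc_maxweight_quasicontinuous_selection
    (K : ℕ) (hK : 1 ≤ K) (R : Set (Fin K → ℝ))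
    (hRne : R.Nonempty) (hRcomp : IsCompact R) (hRconv : Convex ℝ R)
    (hRpos : ∀ r ∈ R, ∀ k, 0 ≤ r k)
    (hRcc : ∀ r ∈ R, ∀ r' : Fin K → ℝ, (∀ k, 0 ≤ r' k) → (∀ k, r' k ≤ r k) → r' ∈ R)
    (C : Fin K → ℝ) (hC : ∀ k, IsGreatest ((fun r => r k) '' R) (C k)) :
    ∃ H : Orth K → Orth K, QuasiContinuous H ∧
      ∀ w : Orth K,
        ((∀ k, w.1 k < C k) →
          ((H w).1 ∈ R ∧
            ∀ r ∈ R, ∑ k, (w.1 k - (H w).1 k) ^ 2 ≤ ∑ k, (w.1 k - r k) ^ 2)) ∧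
        ((¬ ∀ k, w.1 k < C k) →
          ((H w).1 ∈ R ∧ ∀ r ∈ R, ip r w.1 ≤ ip (H w).1 w.1)) := by
  classical
  have hcontp : Continuous fun q : (Fin K → ℝ) × (Fin K → ℝ) =>
      (fun w r : Fin K → ℝ => -∑ k, (w k - r k) ^ 2) q.1 q.2 := by
    apply Continuous.neg
    exact continuous_finset_sum _ fun k _ =>
      (((continuous_apply k).comp continuous_fst).sub
        ((continuous_apply k).comp continuous_snd)).pow 2
  have hcontm : Continuous fun q : (Fin K → ℝ) × (Fin K → ℝ) =>
      (fun w r : Fin K → ℝ => ip r w) q.1 q.2 := ip_cont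
  -- pointwise existence of a suitable value
  have hex : ∀ w : Orth K, ∃ hw : Orth K,
      ((∀ k, w.1 k < C k) → hw.1 ∈ MaxSet R (fun w r => -∑ k, (w k - r k) ^ 2) w.1) ∧
      ((¬ ∀ k, w.1 k < C k) → hw.1 ∈ MaxSet R (fun w r => ip r w) w.1 ∧
        ∃ (u : ℕ → Orth K) (t : ℕ → Fin K → ℝ),
          Tendsto u atTop (𝓝 w) ∧ Tendsto t atTop (𝓝 hw.1) ∧
          ∀ n, (∃ k, C k < (u n).1 k) ∧ t n ∈ MaxSet R (fun w r => ip r w) (u n).1 ∧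
            ∀ p ∈ MaxSet R (fun w r => ip r w) (u n).1, p = t n) := by
    intro w
    by_cases hb : ∀ k, w.1 k < C k
    · obtain ⟨p, hp⟩ := maxSet_nonempty (Φ := fun w r => -∑ k, (w k - r k) ^ 2) hRne hRcomp hcontp w.1
      exact ⟨⟨p, fun k => hRpos p hp.1 k⟩, fun _ => hp, fun h => absurd hb h⟩
    · by_cases hs : (∃ k, C k < w.1 k) ∧
          ∀ p ∈ MaxSet R (fun w r => ip r w) w.1,
            ∀ q ∈ MaxSet R (fun w r => ip r w) w.1, p = q
      · obtain ⟨p, hp⟩ := maxSet_nonempty (Φ := fun w r => ip r w) hRne hRcomp hcontm w.1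
        exact ⟨⟨p, fun k => hRpos p hp.1 k⟩, fun h => absurd h hb,
          fun _ => ⟨hp, fun _ => w, fun _ => p, tendsto_const_nhds, tendsto_const_nhds,
            fun n => ⟨hs.1, hp, fun q hq => hs.2 q hq p hp⟩⟩⟩
      · obtain ⟨s, hsmem, u, t, hu, ht, hprop⟩ := exists_spec hRne hRcomp C w hb
        exact ⟨⟨s, fun k => hRpos s hsmem.1 k⟩, fun h => absurd h hb,
          fun _ => ⟨hsmem, u, t, hu, ht, hprop⟩⟩
  choose H hP using hex
  have hH_R : ∀ w, (H w).1 ∈ R := by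
    intro w
    by_cases hb : ∀ k, w.1 k < C k
    · exact ((hP w).1 hb).1
    · exact ((hP w).2 hb).1.1
  have hHout : ∀ w, (¬ ∀ k, w.1 k < C k) → (H w).1 ∈ MaxSet R (fun w r => ip r w) w.1 :=
    fun w hb => ((hP w).2 hb).1
  have hUnotbox : ∀ w' : Orth K, (∃ k, C k < w'.1 k) → ¬ ∀ k, w'.1 k < C k := by
    rintro w' ⟨k, hk⟩ hall
    exact absurd (hall k) (not_lt.2 hk.le)
  have hUopen : IsOpen {w' : Orth K | ∃ k, C k < w'.1 k} := by
    have : {w' : Orth K | ∃ k, C k < w'.1 k} = ⋃ k, {w' : Orth K | C k < w'.1 k} := by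
      ext w'; simp
    rw [this]
    exact isOpen_iUnion fun k =>
      isOpen_lt continuous_const ((continuous_apply k).comp continuous_subtype_val)
  have contU : ∀ u0 : Orth K, (∃ k, C k < u0.1 k) →
      (∀ p ∈ MaxSet R (fun w r => ip r w) u0.1,
        ∀ q ∈ MaxSet R (fun w r => ip r w) u0.1, p = q) → ContinuousAt H u0 := by
    intro u0 hU huniq
    refine selection_continuousAt (Φ := fun w r => ip r w) hRcomp hcontm hH_R ?_ ?_
    · filter_upwards [hUopen.mem_nhds hU] with w' hw' using hHout w' (hUnotbox w' hw')
    · intro p hp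
      exact huniq p hp _ (hHout u0 (hUnotbox u0 hU))
  refine ⟨H, ?_, ?_⟩
  · intro w
    by_cases hb : ∀ k, w.1 k < C k
    · refine ⟨fun _ => w, tendsto_const_nhds, tendsto_const_nhds, fun _ => ?_⟩
      have hboxopen : IsOpen {w' : Orth K | ∀ k, w'.1 k < C k} := by
        have : {w' : Orth K | ∀ k, w'.1 k < C k} = ⋂ k, {w' : Orth K | w'.1 k < C k} := by
          ext w'; simp
        rw [this]
        exact isOpen_iInter_of_finite fun k =>
          isOpen_lt ((continuous_apply k).comp continuous_subtype_val) continuous_const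
      refine selection_continuousAt (Φ := fun w r => -∑ k, (w k - r k) ^ 2) hRcomp hcontp hH_R ?_ ?_
      · filter_upwards [hboxopen.mem_nhds hb] with w' hw' using (hP w').1 hw'
      · intro p hp
        exact proj_unique hRconv hp ((hP w).1 hb)
    · obtain ⟨hmw, u, t, hu, ht, hprop⟩ := (hP w).2 hb
      have hHu : ∀ n, (H (u n)).1 = t n := fun n =>
        (hprop n).2.2 _ (hHout (u n) (hUnotbox (u n) (hprop n).1))
      refine ⟨u, hu, ?_, fun n => contU (u n) (hprop n).1
        (fun p hp q hq => ((hprop n).2.2 p hp).trans ((hprop n).2.2 q hq).symm)⟩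
      rw [tendsto_subtype_rng]
      have he : (fun n => (H (u n)).1) = t := funext hHu
      show Tendsto (fun n => (H (u n)).1) atTop (𝓝 (H w).1)
      rw [he]
      exact ht
  · intro w
    constructor
    · intro hb
      have h := (hP w).1 hb
      refine ⟨h.1, fun r hr => ?_⟩
      have := h.2 r hr
      simp only at this
      linarith
    · intro hb
      exact ⟨(hHout w hb).1, fun r hr => (hHout w hb).2 r hr⟩
end

section
/- Let K ≥ 1, C^1,…,C^K > 0, and let ℛ_s be the simplex rate region. Let H : ℝ₊^K → ℝ₊^K be quasi-continuous with H(w) ∈ argmax_{r∈ℛ_s} ⟨r,w⟩ for every w, and define H^wc by H^wc(w) = metric projection of w onto ℛ_s if w ∈ Π_{k=1}^K [0, C^k) and H^wc(w) = H(w) otherwise; assume H^wc is quasi-continuous. Then for every t ∈ ℕ the finite-horizon work-conserving workload map G_t^wc : (ℝ₊^K)^t → ℝ₊^K is quasi-continuous with respect to the product metric. -/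
open Filter Topology MeasureTheory
open scoped ENNReal NNReal

/-- Componentwise positive part, landing in the nonnegative orthant. -/
def posPart {K : ℕ} (w : Fin K → ℝ) : Orth K := ⟨fun k => max (w k) 0, fun k => le_max_right _ _⟩

def addO {K : ℕ} (a b : Orth K) : Orth K :=
  ⟨fun k => a.1 k + b.1 k, fun k => add_nonneg (a.2 k) (b.2 k)⟩

/-- The finite-horizon workload map under scheduler `H`, on the list of arrivals
`[a_1, …, a_t]` (`a_1` the most recent arrival):
`G_1(a_1) = a_1`, `G_t(a_1,…,a_t) = a_1 + [G_{t-1}(a_2,…,a_t) - H (G_{t-1}(a_2,…,a_t))]⁺`. -/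
def GwcL {K : ℕ} (H : Orth K → Orth K) : List (Orth K) → Orth K
  | [] => ⟨fun _ => 0, fun _ => le_rfl⟩
  | [a] => a
  | a :: b :: rest =>
      addO a (posPart ((GwcL H (b :: rest)).1 - (H (GwcL H (b :: rest))).1))

/-- The simplex rate region `ℛ_s = {r ∈ ℝ₊^K : ∑_k r^k / C^k ≤ 1}`. -/
def simplexRegion {K : ℕ} (C : Fin K → ℝ) : Set (Fin K → ℝ) :=
  {r | (∀ k, 0 ≤ r k) ∧ ∑ k, r k / C k ≤ 1}

section Aux
variable {K : ℕ} {C : Fin K → ℝ}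

def vertFn (C : Fin K → ℝ) (k : Fin K) : Fin K → ℝ := fun j => if j = k then C k else 0

lemma vertFn_nonneg (hC : ∀ k, 0 < C k) (k j : Fin K) : 0 ≤ vertFn C k j := by
  unfold vertFn; split <;> simp [le_of_lt (hC k)]

lemma vertFn_mem (hC : ∀ k, 0 < C k) (k : Fin K) : vertFn C k ∈ simplexRegion C := by
  refine ⟨vertFn_nonneg hC k, ?_⟩
  have : ∀ j : Fin K, vertFn C k j / C j = if j = k then 1 else 0 := by
    intro j; unfold vertFn; split
    · rename_i h; subst h; exact div_self (ne_of_gt (hC j))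
    · simp
  rw [Finset.sum_congr rfl (fun j _ => this j)]
  simp

lemma ip_vertFn (C : Fin K → ℝ) (k : Fin K) (x : Fin K → ℝ) :
    ip (vertFn C k) x = C k * x k := by
  unfold ip vertFn
  have : ∀ j : Fin K, (if j = k then C k else 0) * x j = if j = k then C k * x j else 0 := by
    intro j; split <;> simp
  rw [Finset.sum_congr rfl (fun j _ => this j), Finset.sum_ite_eq' Finset.univ k]
  simp

/-- If `x` has a strict argmax at `k` with positive max, any optimizer in the region is the
vertex `C k • e k`. -/
lemma forced (hC : ∀ k, 0 < C k) {h : Fin K → ℝ} (hmem : h ∈ simplexRegion C)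
    {x : Fin K → ℝ} (k : Fin K) (hmax : ∀ j, j ≠ k → C j * x j < C k * x k)
    (hpos : 0 < C k * x k) (hopt : ip (vertFn C k) x ≤ ip h x) :
    h = vertFn C k := by
  obtain ⟨hnn, hsum⟩ := hmem
  rw [ip_vertFn] at hopt
  set M := C k * x k with hM
  have hrw : ∀ j : Fin K, h j * x j = (h j / C j) * (C j * x j) := by
    intro j
    have hCj := (hC j).ne'
    field_simp
  have hterm : ∀ j : Fin K, h j * x j ≤ (h j / C j) * M := by
    intro j
    rw [hrw j]
    refine mul_le_mul_of_nonneg_left ?_ (div_nonneg (hnn j) (hC j).le)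
    by_cases hj : j = k
    · subst hj; exact le_rfl
    · exact (hmax j hj).le
  have hub : ip h x ≤ M := by
    calc ip h x ≤ ∑ j, (h j / C j) * M := Finset.sum_le_sum (fun j _ => hterm j)
    _ = (∑ j, h j / C j) * M := by rw [Finset.sum_mul]
    _ ≤ 1 * M := mul_le_mul_of_nonneg_right hsum hpos.le
    _ = M := one_mul M
  have hzero : ∀ j, j ≠ k → h j = 0 := by
    intro j hj
    by_contra hne
    have hjpos : 0 < h j := lt_of_le_of_ne (hnn j) (Ne.symm hne)
    have hstrict : ip h x < M := by
      have hlt : h j * x j < (h j / C j) * M := by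
        rw [hrw j]
        exact mul_lt_mul_of_pos_left (hmax j hj) (div_pos hjpos (hC j))
      calc ip h x < ∑ j, (h j / C j) * M := by
            refine Finset.sum_lt_sum (fun i _ => hterm i) ⟨j, Finset.mem_univ j, hlt⟩
      _ = (∑ j, h j / C j) * M := by rw [Finset.sum_mul]
      _ ≤ 1 * M := mul_le_mul_of_nonneg_right hsum hpos.le
      _ = M := one_mul M
    exact absurd hopt (not_le.2 hstrict)
  have hxk : 0 < x k := by
    have := hpos
    nlinarith [hC k, (hC k).le]
  have hipk : ip h x = h k * x k := by
    unfold ip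
    rw [Finset.sum_eq_single k]
    · intro j _ hj; rw [hzero j hj]; ring
    · intro h'; exact absurd (Finset.mem_univ k) h'
  have hkC : h k ≤ C k := by
    have h1 : h k / C k ≤ ∑ j, h j / C j :=
      Finset.single_le_sum (fun j _ => div_nonneg (hnn j) (hC j).le) (Finset.mem_univ k)
    have := le_trans h1 hsum
    rwa [div_le_one (hC k)] at this
  have hkk : h k = C k := by
    have hge : C k ≤ h k := by
      have := hopt; rw [hipk] at this
      exact le_of_mul_le_mul_right (by linarith [this]) hxk
    linarith
  funext j
  by_cases hj : j = k
  · subst hj; simp [vertFn, hkk]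
  · simp [vertFn, hj, hzero j hj]

end Aux

section Aux2
variable {K : ℕ} {C : Fin K → ℝ}

def vertO (hC : ∀ k, 0 < C k) (k : Fin K) : Orth K := ⟨vertFn C k, vertFn_nonneg hC k⟩

/-- At every point, a quasi-continuous optimal selector takes a vertex value at an argmax. -/
lemma Hvert (hK : 1 ≤ K) (hC : ∀ k, 0 < C k) {H : Orth K → Orth K}
    (hHqc : QuasiContinuous H)
    (hHsel : ∀ w : Orth K, (H w).1 ∈ simplexRegion C ∧
      ∀ r ∈ simplexRegion C, ip r w.1 ≤ ip (H w).1 w.1) (w : Orth K) :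
    ∃ k, (H w).1 = vertFn C k ∧ ∀ j, C j * w.1 j ≤ C k * w.1 k := by
  obtain ⟨u, hu, hFu, hcont⟩ := hHqc w
  -- each H (u n) is a vertex
  have hvert : ∀ n, ∃ j, (H (u n)).1 = vertFn C j := by
    intro n
    set x := u n with hx
    obtain ⟨j, -, hj⟩ := Finset.exists_max_image Finset.univ (fun j => C j * x.1 j)
      ⟨⟨0, hK⟩, Finset.mem_univ _⟩
    refine ⟨j, ?_⟩
    -- perturbation sequence
    set y : ℕ → Orth K := fun m =>
      ⟨fun i => x.1 i + if i = j then 1 / (m + 1 : ℝ) else 0, by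
        intro i
        refine add_nonneg (x.2 i) ?_
        split
        · positivity
        · exact le_rfl⟩ with hy
    have hytend : Tendsto y atTop (𝓝 x) := by
      rw [tendsto_subtype_rng]
      rw [tendsto_pi_nhds]
      intro i
      by_cases hij : i = j
      · subst hij
        simp only [hy, if_pos rfl]
        have h1 : Tendsto (fun _ : ℕ => x.1 i) atTop (𝓝 (x.1 i)) := tendsto_const_nhds
        have h2 := h1.add tendsto_one_div_add_atTop_nhds_zero_nat
        simpa using h2
      · simp only [hy, if_neg hij]
        simp
    have hHy : ∀ m, H (y m) = vertO hC j := by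
      intro m
      have hm1 : (0:ℝ) < 1 / (m + 1 : ℝ) := by positivity
      apply Subtype.ext
      refine forced hC (x := (y m).1) (hHsel (y m)).1 j ?_ ?_ ?_
      · intro i hij
        have : (y m).1 i = x.1 i := by simp [hy, hij]
        rw [this]
        have : (y m).1 j = x.1 j + 1 / (m + 1 : ℝ) := by simp [hy]
        rw [this]
        calc C i * x.1 i ≤ C j * x.1 j := hj i (Finset.mem_univ i)
        _ < C j * (x.1 j + 1 / (m + 1 : ℝ)) := by nlinarith [hC j]
      · have : (y m).1 j = x.1 j + 1 / (m + 1 : ℝ) := by simp [hy]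
        rw [this]
        have := x.2 j
        nlinarith [hC j]
      · exact (hHsel (y m)).2 _ (vertFn_mem hC j)
    have := (hcont n).tendsto.comp hytend
    have hconst : Tendsto (fun m => H (y m)) atTop (𝓝 (vertO hC j)) := by
      rw [show (fun m => H (y m)) = fun _ => vertO hC j from funext hHy]
      exact tendsto_const_nhds
    have hxeq : H x = vertO hC j := tendsto_nhds_unique this hconst
    rw [hxeq]
    rfl
  -- limit is in the (finite, closed) vertex set
  have hV : IsClosed (Set.range (vertFn C) : Set (Fin K → ℝ)) :=
    (Set.finite_range _).isClosed
  have hlim : Tendsto (fun n => (H (u n)).1) atTop (𝓝 (H w).1) :=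
    (continuous_subtype_val.tendsto _).comp hFu
  have hmem : (H w).1 ∈ Set.range (vertFn C) := by
    refine hV.mem_of_tendsto hlim (Filter.Eventually.of_forall ?_)
    intro n
    obtain ⟨j, hj⟩ := hvert n
    exact ⟨j, hj.symm⟩
  obtain ⟨k, hk⟩ := hmem
  refine ⟨k, hk.symm, ?_⟩
  intro j
  have h1 := (hHsel w).2 (vertFn C j) (vertFn_mem hC j)
  rw [ip_vertFn] at h1
  have h2 : ip (H w).1 w.1 = C k * w.1 k := by rw [← hk, ip_vertFn]
  linarith

end Aux2

section Aux3
variable {K : ℕ} {C : Fin K → ℝ}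

lemma region_convex (hC : ∀ k, 0 < C k) {r s : Fin K → ℝ} (hr : r ∈ simplexRegion C)
    (hs : s ∈ simplexRegion C) {t : ℝ} (ht0 : 0 ≤ t) (ht1 : t ≤ 1) :
    (fun k => (1 - t) * r k + t * s k) ∈ simplexRegion C := by
  refine ⟨fun k => add_nonneg (mul_nonneg (by linarith) (hr.1 k)) (mul_nonneg ht0 (hs.1 k)), ?_⟩
  have : ∀ k : Fin K, ((1 - t) * r k + t * s k) / C k = (1 - t) * (r k / C k) + t * (s k / C k) := by
    intro k; field_simp
  rw [Finset.sum_congr rfl (fun k _ => this k), Finset.sum_add_distrib,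
    ← Finset.mul_sum, ← Finset.mul_sum]
  nlinarith [hr.2, hs.2]

/-- Variational inequality for the metric projection onto the region. -/
lemma varIneq (hC : ∀ k, 0 < C k) {P : Fin K → ℝ} (hPmem : P ∈ simplexRegion C)
    {w : Fin K → ℝ}
    (hmin : ∀ r ∈ simplexRegion C, ∑ k, (w k - P k) ^ 2 ≤ ∑ k, (w k - r k) ^ 2)
    {r : Fin K → ℝ} (hr : r ∈ simplexRegion C) :
    ∑ k, (w k - P k) * (r k - P k) ≤ 0 := by
  set S := ∑ k, (w k - P k) * (r k - P k) with hS
  set Q := ∑ k, (r k - P k) ^ 2 with hQ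
  have hQ0 : 0 ≤ Q := Finset.sum_nonneg (fun k _ => sq_nonneg _)
  have key : ∀ t : ℝ, 0 ≤ t → t ≤ 1 → 2 * t * S ≤ t ^ 2 * Q := by
    intro t ht0 ht1
    have hmem : (fun k => (1 - t) * P k + t * r k) ∈ simplexRegion C :=
      region_convex hC hPmem hr ht0 ht1
    have h1 := hmin _ hmem
    have hexp : ∀ k : Fin K, (w k - ((1 - t) * P k + t * r k)) ^ 2
        = (w k - P k) ^ 2 - 2 * t * ((w k - P k) * (r k - P k)) + t ^ 2 * (r k - P k) ^ 2 := by
      intro k; ring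
    rw [Finset.sum_congr rfl (fun k _ => hexp k)] at h1
    rw [Finset.sum_add_distrib, Finset.sum_sub_distrib, ← Finset.mul_sum, ← Finset.mul_sum] at h1
    linarith
  by_contra hpos
  push_neg at hpos
  rcases eq_or_lt_of_le hQ0 with hQz | hQp
  · have := key 1 zero_le_one le_rfl
    rw [← hQz] at this
    nlinarith
  · set t := min 1 (S / Q) with htdef
    have ht0 : 0 < t := lt_min one_pos (div_pos hpos hQp)
    have ht1 : t ≤ 1 := min_le_left _ _
    have h2 := key t ht0.le ht1
    have h3 : t * Q ≤ (S / Q) * Q := mul_le_mul_of_nonneg_right (min_le_right _ _) hQ0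
    have h4 : (S / Q) * Q = S := div_mul_cancel₀ S hQp.ne'
    nlinarith

/-- Projection-type Lipschitz bound inside the box. -/
lemma proj_lip (hC : ∀ k, 0 < C k) {Hwc : Orth K → Orth K}
    {u u' : Orth K}
    (hPmem : (Hwc u).1 ∈ simplexRegion C)
    (hPmin : ∀ r ∈ simplexRegion C, ∑ k, (u.1 k - (Hwc u).1 k) ^ 2 ≤ ∑ k, (u.1 k - r k) ^ 2)
    (hP'mem : (Hwc u').1 ∈ simplexRegion C)
    (hP'min : ∀ r ∈ simplexRegion C, ∑ k, (u'.1 k - (Hwc u').1 k) ^ 2 ≤ ∑ k, (u'.1 k - r k) ^ 2) :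
    dist (Hwc u) (Hwc u') ≤ K * dist u u' := by
  set P := (Hwc u).1
  set P' := (Hwc u').1
  have h1 := varIneq hC hPmem hPmin hP'mem
  have h2 := varIneq hC hP'mem hP'min hPmem
  -- ∑ (P-P')^2 ≤ ∑ (u - u')*(P - P')
  have h3 : ∑ k, (P k - P' k) ^ 2 ≤ ∑ k, (u.1 k - u'.1 k) * (P k - P' k) := by
    have e1 : ∀ k : Fin K, (P k - P' k) ^ 2 - (u.1 k - u'.1 k) * (P k - P' k)
        = ((u.1 k - P k) * (P' k - P k)) + ((u'.1 k - P' k) * (P k - P' k)) := by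
      intro k; ring
    have : ∑ k, ((P k - P' k) ^ 2 - (u.1 k - u'.1 k) * (P k - P' k)) ≤ 0 := by
      rw [Finset.sum_congr rfl (fun k _ => e1 k), Finset.sum_add_distrib]
      linarith [h1, h2]
    rw [Finset.sum_sub_distrib] at this
    linarith
  have hcs := Finset.sum_mul_sq_le_sq_mul_sq Finset.univ (fun k => u.1 k - u'.1 k)
    (fun k => P k - P' k)
  set A := ∑ k, (P k - P' k) ^ 2 with hA
  set B := ∑ k, (u.1 k - u'.1 k) ^ 2 with hB
  have hA0 : 0 ≤ A := Finset.sum_nonneg (fun k _ => sq_nonneg _)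
  have hB0 : 0 ≤ B := Finset.sum_nonneg (fun k _ => sq_nonneg _)
  have hAB : A ≤ B := by
    rcases eq_or_lt_of_le hA0 with hz | hp
    · rw [← hz]; exact hB0
    · have hsq : A ^ 2 ≤ B * A := by
        calc A ^ 2 ≤ (∑ k, (u.1 k - u'.1 k) * (P k - P' k)) ^ 2 := by
              apply pow_le_pow_left₀ hA0 h3
        _ ≤ B * A := hcs
      nlinarith
  -- B ≤ K * dist²
  have hBle : B ≤ (K : ℝ) * dist u u' ^ 2 := by
    have hco : ∀ k : Fin K, (u.1 k - u'.1 k) ^ 2 ≤ dist u u' ^ 2 := by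
      intro k
      have h5 : |u.1 k - u'.1 k| ≤ dist u u' := by
        rw [Subtype.dist_eq]
        have := dist_le_pi_dist u.1 u'.1 k
        rwa [Real.dist_eq] at this
      calc (u.1 k - u'.1 k) ^ 2 = |u.1 k - u'.1 k| ^ 2 := (sq_abs _).symm
      _ ≤ dist u u' ^ 2 := pow_le_pow_left₀ (abs_nonneg _) h5 2
    calc B ≤ ∑ _k : Fin K, dist u u' ^ 2 := Finset.sum_le_sum (fun k _ => hco k)
    _ = (K : ℝ) * dist u u' ^ 2 := by rw [Finset.sum_const]; simp [mul_comm]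
  -- conclude coordinatewise
  rw [Subtype.dist_eq]
  have hKd0 : 0 ≤ (K : ℝ) * dist u u' := mul_nonneg (Nat.cast_nonneg K) dist_nonneg
  refine (dist_pi_le_iff hKd0).2 ?_
  intro k
  rw [Real.dist_eq]
  have h6 : (P k - P' k) ^ 2 ≤ ((K : ℝ) * dist u u') ^ 2 := by
    have h7 : (P k - P' k) ^ 2 ≤ A :=
      Finset.single_le_sum (fun i _ => sq_nonneg ((P i) - (P' i))) (Finset.mem_univ k)
    have h8 : (K : ℝ) * dist u u' ^ 2 ≤ (K : ℝ) ^ 2 * dist u u' ^ 2 := by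
      have : (K : ℝ) ≤ (K : ℝ) ^ 2 := by
        rcases Nat.eq_zero_or_pos K with h | h
        · simp [h]
        · have : (1:ℝ) ≤ (K:ℝ) := by exact_mod_cast h
          nlinarith
      nlinarith [sq_nonneg (dist u u')]
    calc (P k - P' k) ^ 2 ≤ A := h7
    _ ≤ B := hAB
    _ ≤ (K : ℝ) * dist u u' ^ 2 := hBle
    _ ≤ (K : ℝ) ^ 2 * dist u u' ^ 2 := h8
    _ = ((K : ℝ) * dist u u') ^ 2 := by ring
  calc |P k - P' k| = Real.sqrt ((P k - P' k) ^ 2) := (Real.sqrt_sq_eq_abs _).symm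
  _ ≤ Real.sqrt (((K : ℝ) * dist u u') ^ 2) := Real.sqrt_le_sqrt h6
  _ = (K : ℝ) * dist u u' := Real.sqrt_sq hKd0

end Aux3

section Aux4
variable {K : ℕ} {C : Fin K → ℝ} {H Hwc : Orth K → Orth K}

/-- Claim C: every point of the orthant can be approximated from strictly above by
continuity points of `Hwc`, with `Hwc`-values converging as well. -/
lemma approxAbove (hK : 1 ≤ K) (hC : ∀ k, 0 < C k)
    (hHqc : QuasiContinuous H)
    (hHsel : ∀ w : Orth K, (H w).1 ∈ simplexRegion C ∧
      ∀ r ∈ simplexRegion C, ip r w.1 ≤ ip (H w).1 w.1)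
    (hHwcdef : ∀ w : Orth K,
      ((∀ k, w.1 k < C k) →
        ((Hwc w).1 ∈ simplexRegion C ∧
          ∀ r ∈ simplexRegion C,
            ∑ k, (w.1 k - (Hwc w).1 k) ^ 2 ≤ ∑ k, (w.1 k - r k) ^ 2)) ∧
      ((¬ ∀ k, w.1 k < C k) → Hwc w = H w))
    (w : Orth K) {ε : ℝ} (hε : 0 < ε) :
    ∃ (v : Orth K) (μ : ℝ), 0 < μ ∧ (∀ k, w.1 k + μ ≤ v.1 k) ∧ dist v w < ε ∧
      ContinuousAt Hwc v ∧ dist (Hwc v) (Hwc w) < ε := by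
  have hne : (Finset.univ : Finset (Fin K)).Nonempty := ⟨⟨0, hK⟩, Finset.mem_univ _⟩
  have hKpos : (0:ℝ) < K := by exact_mod_cast hK
  have hK1 : (1:ℝ) ≤ K := by exact_mod_cast hK
  by_cases hbox : ∀ k, w.1 k < C k
  · -- inside the open box: move up a little, use projection Lipschitz continuity
    set m := Finset.univ.inf' hne (fun k => C k - w.1 k) with hm
    have hmpos : 0 < m := (Finset.lt_inf'_iff hne).2 (fun i _ => by linarith [hbox i])
    set δ := min (ε / (2 * K)) (m / 2) with hδ
    have hδpos : 0 < δ := lt_min (by positivity) (by positivity)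
    set v : Orth K := ⟨fun i => w.1 i + δ, fun i => add_nonneg (w.2 i) hδpos.le⟩ with hv
    have hvbox : ∀ k, v.1 k < C k := by
      intro k
      have h1 : m ≤ C k - w.1 k := Finset.inf'_le _ (Finset.mem_univ k)
      have h2 : δ ≤ m / 2 := min_le_right _ _
      show w.1 k + δ < C k
      linarith
    have hdistvw : dist v w ≤ δ := by
      rw [Subtype.dist_eq]
      refine (dist_pi_le_iff hδpos.le).2 (fun i => ?_)
      rw [Real.dist_eq]
      show |w.1 i + δ - w.1 i| ≤ δ
      rw [show w.1 i + δ - w.1 i = δ by ring, abs_of_nonneg hδpos.le]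
    have hδε2 : δ ≤ ε / 2 := by
      have h1 : ε / (2 * K) ≤ ε / 2 :=
        div_le_div_of_nonneg_left hε.le two_pos (by linarith)
      exact le_trans (min_le_left _ _) h1
    -- continuity at v
    have hcont : ContinuousAt Hwc v := by
      rw [Metric.continuousAt_iff]
      intro ε' hε'
      set m2 := Finset.univ.inf' hne (fun k => C k - v.1 k) with hm2
      have hm2pos : 0 < m2 := (Finset.lt_inf'_iff hne).2 (fun i _ => by linarith [hvbox i])
      refine ⟨min (ε' / (K + 1)) m2, lt_min (by positivity) hm2pos, ?_⟩
      intro u hu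
      have hubox : ∀ k, u.1 k < C k := by
        intro k
        have h1 : |u.1 k - v.1 k| ≤ dist u v := by
          rw [Subtype.dist_eq]
          have := dist_le_pi_dist u.1 v.1 k
          rwa [Real.dist_eq] at this
        have h2 : m2 ≤ C k - v.1 k := Finset.inf'_le _ (Finset.mem_univ k)
        have h3 : dist u v < m2 := lt_of_lt_of_le hu (min_le_right _ _)
        have := abs_lt.1 (lt_of_le_of_lt h1 h3)
        linarith
      have hl := proj_lip hC (Hwc := Hwc) ((hHwcdef u).1 hubox).1 ((hHwcdef u).1 hubox).2
        ((hHwcdef v).1 hvbox).1 ((hHwcdef v).1 hvbox).2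
      have h4 : dist u v < ε' / (K + 1) := lt_of_lt_of_le hu (min_le_left _ _)
      calc dist (Hwc u) (Hwc v) ≤ K * dist u v := hl
      _ < K * (ε' / (K + 1)) := mul_lt_mul_of_pos_left h4 hKpos
      _ ≤ ε' := by
          rw [mul_div_assoc', div_le_iff₀ (by positivity)]
          nlinarith
    refine ⟨v, δ, hδpos, fun k => le_of_eq rfl, lt_of_le_of_lt hdistvw (by linarith), hcont, ?_⟩
    have hl := proj_lip hC (Hwc := Hwc) ((hHwcdef v).1 hvbox).1 ((hHwcdef v).1 hvbox).2
      ((hHwcdef w).1 hbox).1 ((hHwcdef w).1 hbox).2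
    calc dist (Hwc v) (Hwc w) ≤ K * dist v w := hl
    _ ≤ K * δ := mul_le_mul_of_nonneg_left hdistvw hKpos.le
    _ ≤ K * (ε / (2 * K)) := mul_le_mul_of_nonneg_left (min_le_left _ _) hKpos.le
    _ = ε / 2 := by field_simp
    _ < ε := by linarith
  · -- outside the box
    push_neg at hbox
    obtain ⟨k0, hk0⟩ := hbox
    obtain ⟨k1, hk1v, hk1max⟩ := Hvert hK hC hHqc hHsel w
    have hHwcw : Hwc w = vertO hC k1 := by
      have h1 : ¬ ∀ k, w.1 k < C k := by
        push_neg; exact ⟨k0, hk0⟩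
      rw [(hHwcdef w).2 h1]; exact Subtype.ext hk1v
    set Mc := Finset.univ.sup' hne C with hMc
    have hMcge : ∀ j, C j ≤ Mc := fun j => Finset.le_sup' C (Finset.mem_univ j)
    have hMcpos : 0 < Mc := lt_of_lt_of_le (hC k0) (hMcge k0)
    have hCk1 : 0 < C k1 := hC k1
    set B0 := 2 + 2 * Mc / C k1 with hB0
    have hB0pos : 0 < B0 := by positivity
    set δ := ε / (2 * B0) with hδ
    have hδpos : 0 < δ := by positivity
    set η := 2 * Mc * δ / C k1 with hη
    have hηpos : 0 < η := by positivity
    have hCk1η : C k1 * η = 2 * Mc * δ := by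
      rw [hη]; field_simp
    set vf : Fin K → ℝ :=
      fun i => w.1 i + δ + (if i = k0 then δ else 0) + (if i = k1 then η else 0) with hvf
    have hvflb : ∀ i, w.1 i + δ ≤ vf i := by
      intro i
      have h1 : (0:ℝ) ≤ if i = k0 then δ else 0 := by split <;> simp [hδpos.le]
      have h2 : (0:ℝ) ≤ if i = k1 then η else 0 := by split <;> simp [hηpos.le]
      rw [hvf]; dsimp only; linarith
    have hvfub : ∀ i, vf i ≤ w.1 i + 2 * δ + η := by
      intro i
      have h3 : (if i = k0 then δ else 0) ≤ δ := by split <;> simp [hδpos.le]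
      have h4 : (if i = k1 then η else 0) ≤ η := by split <;> simp [hηpos.le]
      rw [hvf]; dsimp only; linarith
    set v : Orth K := ⟨vf, fun i => le_trans (add_nonneg (w.2 i) hδpos.le) (hvflb i)⟩ with hv
    have hsumδη : 2 * δ + η = ε / 2 := by
      have hd : δ * B0 = ε / 2 := by
        rw [hδ]; field_simp
      have h2 : 2 * δ + η = δ * B0 := by
        rw [hη, hB0]; field_simp
      rw [h2, hd]
    have hdistvw : dist v w < ε := by
      rw [Subtype.dist_eq]
      have hb : dist v.1 w.1 ≤ 2 * δ + η := by
        refine (dist_pi_le_iff (by positivity)).2 (fun i => ?_)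
        rw [Real.dist_eq, abs_of_nonneg (by linarith [hvflb i, hδpos.le])]
        linarith [hvfub i]
      rw [hsumδη] at hb
      linarith
    -- v lies in the open set where Hwc is the constant vertex k1
    have hvk0 : C k0 < v.1 k0 := by
      have h2 : (0:ℝ) ≤ if k0 = k1 then η else 0 := by split <;> simp [hηpos.le]
      have : v.1 k0 = w.1 k0 + δ + δ + (if k0 = k1 then η else 0) := by
        show vf k0 = _
        rw [hvf]; dsimp only; rw [if_pos rfl]
      rw [this]; linarith
    have hvargmax : ∀ j, j ≠ k1 → C j * v.1 j < C k1 * v.1 k1 := by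
      intro j hj
      have hvj : v.1 j ≤ w.1 j + 2 * δ := by
        have h3 : (if j = k0 then δ else 0) ≤ δ := by split <;> simp [hδpos.le]
        have : v.1 j = w.1 j + δ + (if j = k0 then δ else 0) + 0 := by
          show vf j = _
          rw [hvf]; dsimp only; rw [if_neg hj]
        rw [this]; linarith
      have hvk1lb : w.1 k1 + δ + η ≤ v.1 k1 := by
        have h2 : (0:ℝ) ≤ if k1 = k0 then δ else 0 := by split <;> simp [hδpos.le]
        have : v.1 k1 = w.1 k1 + δ + (if k1 = k0 then δ else 0) + η := by
          show vf k1 = _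
          rw [hvf]; dsimp only; rw [if_pos rfl]
        rw [this]; linarith
      have hCj : 0 < C j := hC j
      calc C j * v.1 j ≤ C j * (w.1 j + 2 * δ) := mul_le_mul_of_nonneg_left hvj hCj.le
      _ = C j * w.1 j + 2 * C j * δ := by ring
      _ ≤ C k1 * w.1 k1 + 2 * Mc * δ := by
          have := hk1max j
          have := hMcge j
          nlinarith
      _ < C k1 * w.1 k1 + C k1 * δ + 2 * Mc * δ := by nlinarith
      _ = C k1 * (w.1 k1 + δ) + C k1 * η := by rw [hCk1η]; ring
      _ = C k1 * (w.1 k1 + δ + η) := by ring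
      _ ≤ C k1 * v.1 k1 := mul_le_mul_of_nonneg_left hvk1lb hCk1.le
    -- the open set
    set T : Set (Fin K → ℝ) := {x | C k0 < x k0} ∩ ⋂ j, {x | j ≠ k1 → C j * x j < C k1 * x k1}
      with hT
    have hTopen : IsOpen T := by
      apply IsOpen.inter
      · exact isOpen_lt continuous_const (continuous_apply k0)
      · refine isOpen_iInter_of_finite (fun j => ?_)
        by_cases hj : j = k1
        · subst hj
          have : {x : Fin K → ℝ | j ≠ j → C j * x j < C j * x j} = Set.univ := by
            ext x; simp
          rw [this]
          exact isOpen_univ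
        · have : {x : Fin K → ℝ | j ≠ k1 → C j * x j < C k1 * x k1}
              = {x | C j * x j < C k1 * x k1} := by
            ext x; simp [hj]
          rw [this]
          exact isOpen_lt (continuous_const.mul (continuous_apply j))
            (continuous_const.mul (continuous_apply k1))
    -- on T, Hwc is the constant vertex k1
    have hconstT : ∀ u : Orth K, u.1 ∈ T → Hwc u = vertO hC k1 := by
      intro u hu
      obtain ⟨hu0, hu1⟩ := hu
      have hu0' : C k0 < u.1 k0 := hu0
      have hu1' : ∀ j, j ≠ k1 → C j * u.1 j < C k1 * u.1 k1 :=
        fun j hj => (Set.mem_iInter.1 hu1 j) hj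
      have hnb : ¬ ∀ k, u.1 k < C k := by
        push_neg
        exact ⟨k0, le_of_lt hu0'⟩
      rw [(hHwcdef u).2 hnb]
      apply Subtype.ext
      refine forced hC (x := u.1) (hHsel u).1 k1 hu1' ?_ ((hHsel u).2 _ (vertFn_mem hC k1))
      have h2 : 0 < C k0 * u.1 k0 := by nlinarith [hC k0]
      by_cases hk : k0 = k1
      · subst hk; exact h2
      · exact lt_trans h2 (hu1' k0 hk)
    have hvT : v.1 ∈ T := by
      exact ⟨hvk0, Set.mem_iInter.2 (fun j hj => hvargmax j hj)⟩
    have hcont : ContinuousAt Hwc v := by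
      have hnhds : (Subtype.val ⁻¹' T : Set (Orth K)) ∈ 𝓝 v :=
        (hTopen.preimage continuous_subtype_val).mem_nhds hvT
      have hconst : ContinuousAt (fun _ : Orth K => vertO hC k1) v := continuousAt_const
      exact hconst.congr (Filter.eventuallyEq_of_mem hnhds (fun u hu => (hconstT u hu).symm))
    refine ⟨v, δ, hδpos, fun k => hvflb k, hdistvw, hcont, ?_⟩
    rw [hconstT v hvT, hHwcw, dist_self]
    exact hε

end Aux4

section Aux5
variable {K : ℕ}

/-- The one-step "leftover work" map. -/
def psiW (Hwc : Orth K → Orth K) (w : Orth K) : Orth K := posPart (w.1 - (Hwc w).1)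

lemma GwcL_cons (Hwc : Orth K → Orth K) (x : Orth K) (l : List (Orth K)) (hl : l ≠ []) :
    GwcL Hwc (x :: l) = addO x (psiW Hwc (GwcL Hwc l)) := by
  cases l with
  | nil => exact absurd rfl hl
  | cons b r => rfl

def FF (Hwc : Orth K → Orth K) (n : ℕ) : (Fin n → Orth K) → Orth K :=
  fun b => GwcL Hwc (List.ofFn b)

lemma FF_one (Hwc : Orth K → Orth K) (a : Fin 1 → Orth K) : FF Hwc 1 a = a 0 := by
  show GwcL Hwc (List.ofFn a) = a 0
  rw [List.ofFn_succ]
  simp [GwcL]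

lemma FF_succ (Hwc : Orth K → Orth K) (n : ℕ) (a : Fin (n + 2) → Orth K) :
    FF Hwc (n + 2) a = addO (a 0) (psiW Hwc (FF Hwc (n + 1) (Fin.tail a))) := by
  show GwcL Hwc (List.ofFn a) = _
  rw [List.ofFn_succ]
  have hne : (List.ofFn fun i : Fin (n+1) => a i.succ) ≠ [] := by
    simp [← List.length_pos_iff_ne_nil]
  rw [GwcL_cons Hwc _ _ hne]
  rfl

lemma continuous_addO : Continuous (fun p : Orth K × Orth K => addO p.1 p.2) := by
  refine Continuous.subtype_mk ?_ _
  refine continuous_pi (fun k => ?_)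
  exact ((continuous_apply k).comp (continuous_subtype_val.comp continuous_fst)).add
    ((continuous_apply k).comp (continuous_subtype_val.comp continuous_snd))

lemma continuous_posPartO : Continuous (posPart : (Fin K → ℝ) → Orth K) := by
  refine Continuous.subtype_mk ?_ _
  exact continuous_pi (fun k => (continuous_apply k).max continuous_const)

lemma psiW_contAt {Hwc : Orth K → Orth K} {v : Orth K} (h : ContinuousAt Hwc v) :
    ContinuousAt (psiW Hwc) v := by
  have hval : ContinuousAt (fun w : Orth K => w.1) v := continuous_subtype_val.continuousAt
  have hval2 : ContinuousAt (fun w : Orth K => (Hwc w).1) v :=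
    ContinuousAt.comp continuous_subtype_val.continuousAt h
  have h1 : ContinuousAt (fun w : Orth K => w.1 - (Hwc w).1) v := hval.sub hval2
  exact continuous_posPartO.continuousAt.comp h1

lemma dist_psiW_le (Hwc : Orth K → Orth K) (u u' : Orth K) :
    dist (psiW Hwc u) (psiW Hwc u') ≤ dist u u' + dist (Hwc u) (Hwc u') := by
  rw [Subtype.dist_eq]
  refine (dist_pi_le_iff (add_nonneg dist_nonneg dist_nonneg)).2 (fun k => ?_)
  rw [Real.dist_eq]
  show |max (u.1 k - (Hwc u).1 k) 0 - max (u'.1 k - (Hwc u').1 k) 0| ≤ _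
  calc |max (u.1 k - (Hwc u).1 k) 0 - max (u'.1 k - (Hwc u').1 k) 0|
      ≤ |(u.1 k - (Hwc u).1 k) - (u'.1 k - (Hwc u').1 k)| := abs_max_sub_max_le_abs _ _ _
  _ = |(u.1 k - u'.1 k) - ((Hwc u).1 k - (Hwc u').1 k)| := by ring_nf
  _ ≤ |u.1 k - u'.1 k| + |(Hwc u).1 k - (Hwc u').1 k| := abs_sub _ _
  _ ≤ dist u u' + dist (Hwc u) (Hwc u') := by
      have h1 : |u.1 k - u'.1 k| ≤ dist u u' := by
        rw [Subtype.dist_eq]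
        have := dist_le_pi_dist u.1 u'.1 k
        rwa [Real.dist_eq] at this
      have h2 : |(Hwc u).1 k - (Hwc u').1 k| ≤ dist (Hwc u) (Hwc u') := by
        rw [Subtype.dist_eq]
        have := dist_le_pi_dist (Hwc u).1 (Hwc u').1 k
        rwa [Real.dist_eq] at this
      linarith

lemma dist_addO_le (c q q' : Orth K) : dist (addO c q) (addO c q') ≤ dist q q' := by
  rw [Subtype.dist_eq]
  refine (dist_pi_le_iff dist_nonneg).2 (fun k => ?_)
  rw [Real.dist_eq]
  show |c.1 k + q.1 k - (c.1 k + q'.1 k)| ≤ _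
  rw [show c.1 k + q.1 k - (c.1 k + q'.1 k) = q.1 k - q'.1 k by ring]
  rw [Subtype.dist_eq]
  have := dist_le_pi_dist q.1 q'.1 k
  rwa [Real.dist_eq] at this

lemma FF_contAt {Hwc : Orth K → Orth K} (n : ℕ) (a' : Fin (n + 2) → Orth K)
    (h : ContinuousAt (fun b : Fin (n+1) → Orth K => psiW Hwc (FF Hwc (n+1) b)) (Fin.tail a')) :
    ContinuousAt (FF Hwc (n + 2)) a' := by
  have heq : FF Hwc (n + 2) = fun a => addO (a 0) (psiW Hwc (FF Hwc (n+1) (Fin.tail a))) :=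
    funext (FF_succ Hwc n)
  rw [heq]
  have htail : Continuous (Fin.tail : (Fin (n+2) → Orth K) → (Fin (n+1) → Orth K)) :=
    continuous_pi (fun i => continuous_apply i.succ)
  have h1 : ContinuousAt (fun a : Fin (n+2) → Orth K =>
      psiW Hwc (FF Hwc (n+1) (Fin.tail a))) a' :=
    h.comp htail.continuousAt
  have h2 : ContinuousAt (fun a : Fin (n+2) → Orth K =>
      ((a 0, psiW Hwc (FF Hwc (n+1) (Fin.tail a))) : Orth K × Orth K)) a' :=
    ContinuousAt.prodMk ((continuous_apply 0).continuousAt) h1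
  exact continuous_addO.continuousAt.comp h2

end Aux5

section Aux6
variable {K : ℕ} {C : Fin K → ℝ} {H Hwc : Orth K → Orth K}

lemma tendsto_of_dist_lt_inv {X : Type*} [PseudoMetricSpace X] (z : ℕ → X) (z0 : X)
    (h : ∀ n : ℕ, dist (z n) z0 < 1 / (n + 1 : ℝ)) : Tendsto z atTop (𝓝 z0) :=
  tendsto_iff_dist_tendsto_zero.2
    (squeeze_zero (fun _ => dist_nonneg) (fun n => (h n).le)
      tendsto_one_div_add_atTop_nhds_zero_nat)

/-- Main induction: the maps `Ψ ∘ G_n` admit dense continuity points with value control. -/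
lemma Pmain (hK : 1 ≤ K) (hC : ∀ k, 0 < C k)
    (hHqc : QuasiContinuous H)
    (hHsel : ∀ w : Orth K, (H w).1 ∈ simplexRegion C ∧
      ∀ r ∈ simplexRegion C, ip r w.1 ≤ ip (H w).1 w.1)
    (hHwcdef : ∀ w : Orth K,
      ((∀ k, w.1 k < C k) →
        ((Hwc w).1 ∈ simplexRegion C ∧
          ∀ r ∈ simplexRegion C,
            ∑ k, (w.1 k - (Hwc w).1 k) ^ 2 ≤ ∑ k, (w.1 k - r k) ^ 2)) ∧
      ((¬ ∀ k, w.1 k < C k) → Hwc w = H w)) :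
    ∀ n : ℕ, ∀ a : Fin (n+1) → Orth K, ∀ ε : ℝ, 0 < ε →
      ∃ a' : Fin (n+1) → Orth K, dist a' a < ε ∧
        ContinuousAt (fun b => psiW Hwc (FF Hwc (n+1) b)) a' ∧
        dist (psiW Hwc (FF Hwc (n+1) a')) (psiW Hwc (FF Hwc (n+1) a)) < ε := by
  intro n
  induction n with
  | zero =>
    intro a ε hε
    obtain ⟨v, μ, hμ, hup, hdv, hcont, hdH⟩ :=
      approxAbove hK hC hHqc hHsel hHwcdef (a 0) (ε := ε/3) (by positivity)
    refine ⟨fun _ => v, ?_, ?_, ?_⟩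
    · refine (dist_pi_lt_iff hε).2 (fun i => ?_)
      have hi : i = 0 := Fin.eq_zero i
      subst hi
      calc dist v (a 0) < ε / 3 := hdv
      _ < ε := by linarith
    · have heq : (fun b : Fin 1 → Orth K => psiW Hwc (FF Hwc 1 b))
          = fun b => psiW Hwc (b 0) := funext (fun b => by rw [FF_one])
      rw [heq]
      exact (psiW_contAt hcont).comp (f := fun b : Fin 1 → Orth K => b 0) (x := fun _ => v) (continuous_apply (0 : Fin 1)).continuousAt
    · rw [FF_one, FF_one]
      calc dist (psiW Hwc v) (psiW Hwc (a 0))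
          ≤ dist v (a 0) + dist (Hwc v) (Hwc (a 0)) := dist_psiW_le Hwc _ _
      _ < ε / 3 + ε / 3 := by exact add_lt_add hdv hdH
      _ < ε := by linarith
  | succ n IH =>
    intro a ε hε
    set x := a 0 with hx
    set tl := Fin.tail a with htl
    set p := psiW Hwc (FF Hwc (n+1) tl) with hp
    set w := addO x p with hw
    have hFa : FF Hwc (n+2) a = w := FF_succ Hwc n a
    obtain ⟨v, μ, hμpos, hvup, hdvw, hvcont, hdH⟩ :=
      approxAbove hK hC hHqc hHsel hHwcdef w (ε := ε/4) (by positivity)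
    set ε₂ := min (μ/2) (ε/2) with hε₂def
    have hε₂ : 0 < ε₂ := lt_min (by positivity) (by positivity)
    obtain ⟨tl', hd1, hcont1, hd2⟩ := IH tl ε₂ hε₂
    set p' := psiW Hwc (FF Hwc (n+1) tl') with hp'
    have hco : ∀ (y y' : Orth K) (k : Fin K), |y.1 k - y'.1 k| ≤ dist y y' := by
      intro y y' k
      rw [Subtype.dist_eq]
      have := dist_le_pi_dist y.1 y'.1 k
      rwa [Real.dist_eq] at this
    have hx'nn : ∀ k, 0 ≤ v.1 k - p'.1 k := by
      intro k
      have h1 : w.1 k + μ ≤ v.1 k := hvup k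
      have h2 : w.1 k = x.1 k + p.1 k := rfl
      have h3 : |p'.1 k - p.1 k| ≤ dist p' p := hco p' p k
      have h4 : dist p' p < ε₂ := hd2
      have h5 : ε₂ ≤ μ/2 := min_le_left _ _
      have h6 := abs_lt.1 (lt_of_le_of_lt h3 h4)
      have := x.2 k
      linarith
    set x' : Orth K := ⟨fun k => v.1 k - p'.1 k, hx'nn⟩ with hx'
    set a' : Fin (n+2) → Orth K := Fin.cons x' tl' with ha'
    have hta' : Fin.tail a' = tl' := Fin.tail_cons _ _
    have hFa' : FF Hwc (n+2) a' = v := by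
      rw [FF_succ Hwc n a']
      have h0 : a' 0 = x' := Fin.cons_zero _ _
      rw [h0, hta']
      apply Subtype.ext
      funext k
      show (v.1 k - p'.1 k) + p'.1 k = v.1 k
      ring
    have hdistx' : dist x' x ≤ dist v w + dist p' p := by
      rw [Subtype.dist_eq]
      refine (dist_pi_le_iff (add_nonneg dist_nonneg dist_nonneg)).2 (fun k => ?_)
      rw [Real.dist_eq]
      have h2 : w.1 k = x.1 k + p.1 k := rfl
      have e1 : x'.1 k - x.1 k = (v.1 k - w.1 k) + (p.1 k - p'.1 k) := by
        show (v.1 k - p'.1 k) - x.1 k = _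
        rw [h2]; ring
      rw [e1]
      calc |(v.1 k - w.1 k) + (p.1 k - p'.1 k)|
          ≤ |v.1 k - w.1 k| + |p.1 k - p'.1 k| := abs_add_le _ _
      _ ≤ dist v w + dist p p' := add_le_add (hco v w k) (hco p p' k)
      _ = dist v w + dist p' p := by rw [dist_comm p p']
    refine ⟨a', ?_, ?_, ?_⟩
    · refine (dist_pi_lt_iff hε).2 (fun i => ?_)
      refine Fin.cases ?_ ?_ i
      · have h0 : a' 0 = x' := Fin.cons_zero _ _
        rw [h0]
        have h5 : ε₂ ≤ ε/2 := min_le_right _ _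
        calc dist x' (a 0) = dist x' x := rfl
        _ ≤ dist v w + dist p' p := hdistx'
        _ < ε/4 + ε₂ := add_lt_add hdvw hd2
        _ ≤ ε/4 + ε/2 := by linarith
        _ < ε := by linarith
      · intro i
        have h0 : a' i.succ = tl' i := Fin.cons_succ _ _ _
        rw [h0]
        have h1 : dist (tl' i) (a i.succ) = dist (tl' i) (tl i) := rfl
        rw [h1]
        have h5 : ε₂ ≤ ε/2 := min_le_right _ _
        calc dist (tl' i) (tl i) ≤ dist tl' tl := dist_le_pi_dist tl' tl i
        _ < ε₂ := hd1
        _ < ε := by linarith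
    · have hFFc : ContinuousAt (FF Hwc (n+2)) a' := by
        refine FF_contAt n a' ?_
        rw [hta']
        exact hcont1
      have hpsiAt : ContinuousAt (psiW Hwc) (FF Hwc (n+2) a') := by
        rw [hFa']
        exact psiW_contAt hvcont
      exact hpsiAt.comp hFFc
    · rw [hFa', hFa]
      calc dist (psiW Hwc v) (psiW Hwc w)
          ≤ dist v w + dist (Hwc v) (Hwc w) := dist_psiW_le Hwc _ _
      _ < ε/4 + ε/4 := add_lt_add hdvw hdH
      _ < ε := by linarith

end Aux6


/-- For the simplex rate region, the finite-horizon work-conserving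
workload maps `G_t^wc : (ℝ₊^K)^t → ℝ₊^K` are quasi-continuous (product metric on the
domain). -/
theorem finite_horizon_wc_workload_quasicontinuous
    (K : ℕ) (hK : 1 ≤ K) (C : Fin K → ℝ) (hC : ∀ k, 0 < C k)
    (H Hwc : Orth K → Orth K)
    (hHqc : QuasiContinuous H)
    (hHsel : ∀ w : Orth K, (H w).1 ∈ simplexRegion C ∧
      ∀ r ∈ simplexRegion C, ip r w.1 ≤ ip (H w).1 w.1)
    (hHwcdef : ∀ w : Orth K,
      ((∀ k, w.1 k < C k) →
        ((Hwc w).1 ∈ simplexRegion C ∧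
          ∀ r ∈ simplexRegion C,
            ∑ k, (w.1 k - (Hwc w).1 k) ^ 2 ≤ ∑ k, (w.1 k - r k) ^ 2)) ∧
      ((¬ ∀ k, w.1 k < C k) → Hwc w = H w))
    (hHwcqc : QuasiContinuous Hwc)
    (t : ℕ) (ht : 1 ≤ t) :
    QuasiContinuous (fun a : Fin t → Orth K => GwcL Hwc (List.ofFn a)) := by

  match t, ht with
  | 1, _ =>
    intro a
    have heq : (fun a : Fin 1 → Orth K => GwcL Hwc (List.ofFn a)) = fun a => a 0 :=
      funext (fun b => FF_one Hwc b)
    refine ⟨fun _ => a, tendsto_const_nhds, tendsto_const_nhds, fun _ => ?_⟩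
    rw [heq]
    exact (continuous_apply (0 : Fin 1)).continuousAt
  | (m + 2), _ =>
    intro a
    show QuasiContinuousAt (FF Hwc (m+2)) a
    have hseq : ∀ j : ℕ, ∃ b : Fin (m+1) → Orth K,
        dist b (Fin.tail a) < 1 / (j + 1 : ℝ) ∧
        ContinuousAt (fun b' => psiW Hwc (FF Hwc (m+1) b')) b ∧
        dist (psiW Hwc (FF Hwc (m+1) b)) (psiW Hwc (FF Hwc (m+1) (Fin.tail a))) < 1/(j+1 : ℝ) :=
      fun j => Pmain hK hC hHqc hHsel hHwcdef m (Fin.tail a) (1/(j+1 : ℝ)) (by positivity)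
    choose b hb1 hb2 hb3 using hseq
    set u : ℕ → (Fin (m+2) → Orth K) := fun j => Fin.cons (a 0) (b j) with hu
    have hFuj : ∀ j, FF Hwc (m+2) (u j) = addO (a 0) (psiW Hwc (FF Hwc (m+1) (b j))) := by
      intro j
      rw [FF_succ Hwc m (u j)]
      have h0 : u j 0 = a 0 := Fin.cons_zero _ _
      have h1 : Fin.tail (u j) = b j := Fin.tail_cons _ _
      rw [h0, h1]
    have hFa : FF Hwc (m+2) a = addO (a 0) (psiW Hwc (FF Hwc (m+1) (Fin.tail a))) :=
      FF_succ Hwc m a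
    refine ⟨u, ?_, ?_, ?_⟩
    · refine tendsto_of_dist_lt_inv u a (fun j => ?_)
      refine (dist_pi_lt_iff (by positivity)).2 (fun i => ?_)
      refine Fin.cases ?_ ?_ i
      · have h0 : u j 0 = a 0 := Fin.cons_zero _ _
        rw [h0, dist_self]
        positivity
      · intro i
        have h0 : u j i.succ = b j i := Fin.cons_succ _ _ _
        rw [h0]
        calc dist (b j i) (a i.succ) = dist (b j i) (Fin.tail a i) := rfl
        _ ≤ dist (b j) (Fin.tail a) := dist_le_pi_dist _ _ i
        _ < 1/(j+1 : ℝ) := hb1 j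
    · refine tendsto_of_dist_lt_inv _ _ (fun j => ?_)
      rw [hFuj j, hFa]
      calc dist (addO (a 0) (psiW Hwc (FF Hwc (m+1) (b j))))
            (addO (a 0) (psiW Hwc (FF Hwc (m+1) (Fin.tail a))))
          ≤ dist (psiW Hwc (FF Hwc (m+1) (b j))) (psiW Hwc (FF Hwc (m+1) (Fin.tail a))) :=
            dist_addO_le _ _ _
      _ < 1/(j+1 : ℝ) := hb3 j
    · intro j
      refine FF_contAt m (u j) ?_
      have h1 : Fin.tail (u j) = b j := Fin.tail_cons _ _
      rw [h1]
      exact hb2 j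
end

section
/- Let K ≥ 1, ℛ ⊆ ℝ₊^K a nonempty compact convex coordinate-convex rate region, and t ∈ ℕ. Then there exists a quasi-continuous function G_t : (ℝ₊^K)^t → ℝ₊^K (with respect to the product metric) such that G_t(a) ∈ 𝒢_t(a) for every a ∈ (ℝ₊^K)^t, where 𝒢_t is the achievable max-weight workload correspondence. -/
set_option maxHeartbeats 1000000


open Filter Topology MeasureTheory
open scoped ENNReal NNReal

/-- The achievable max-weight workload correspondence `𝒢_t`, on arrival lists
`[a_1, …, a_t]`: `𝒢_1(a_1) = {a_1}` and
`𝒢_t(a_1,…,a_t) = {a_1 + [w − r]⁺ : w ∈ 𝒢_{t−1}(a_2,…,a_t), r ∈ argmax_{ρ∈R} ⟨ρ,w⟩}`. -/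
def GSetL {K : ℕ} (R : Set (Fin K → ℝ)) : List (Orth K) → Set (Orth K)
  | [] => {⟨fun _ => 0, fun _ => le_rfl⟩}
  | [a] => {a}
  | a :: b :: rest =>
      {z | ∃ w ∈ GSetL R (b :: rest), ∃ r ∈ R,
        (∀ ρ ∈ R, ip ρ w.1 ≤ ip r w.1) ∧ z = addO a (posPart (w.1 - r))}


namespace MWAux

variable {K : ℕ} {R : Set (Fin K → ℝ)}

lemma ip_cont2 : Continuous fun p : (Fin K → ℝ) × (Fin K → ℝ) => ip p.1 p.2 := by
  unfold ip
  exact continuous_finset_sum _ fun k _ =>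
    ((continuous_apply k).comp continuous_fst).mul ((continuous_apply k).comp continuous_snd)

lemma ip_cont1 (x : Fin K → ℝ) : Continuous fun r : Fin K → ℝ => ip r x :=
  ip_cont2.comp (continuous_id.prodMk continuous_const)

/-- The argmax set of `⟨·, x⟩` over `R`. -/
def Amax (R : Set (Fin K → ℝ)) (x : Fin K → ℝ) : Set (Fin K → ℝ) :=
  {r | r ∈ R ∧ ∀ ρ ∈ R, ip ρ x ≤ ip r x}

lemma Amax_nonempty (hRne : R.Nonempty) (hRcomp : IsCompact R) (x : Fin K → ℝ) :
    (Amax R x).Nonempty := by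
  obtain ⟨r, hrR, hr⟩ := hRcomp.exists_isMaxOn hRne (ip_cont1 x).continuousOn
  exact ⟨r, hrR, fun ρ hρ => hr hρ⟩

/-- Upper hemicontinuity of the argmax correspondence, sequence form. -/
lemma Amax_uhc (hRcomp : IsCompact R) {v : ℕ → Fin K → ℝ} {w : Fin K → ℝ}
    {rs : ℕ → Fin K → ℝ} {r : Fin K → ℝ}
    (hv : Tendsto v atTop (𝓝 w)) (hrs : ∀ j, rs j ∈ Amax R (v j))
    (hr : Tendsto rs atTop (𝓝 r)) : r ∈ Amax R w := by
  have hrR : r ∈ R :=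
    hRcomp.isClosed.mem_of_tendsto hr (Eventually.of_forall fun j => (hrs j).1)
  refine ⟨hrR, fun ρ hρ => ?_⟩
  have h1 : Tendsto (fun j => ip ρ (v j)) atTop (𝓝 (ip ρ w)) :=
    ((ip_cont2.comp (continuous_const.prodMk continuous_id)).tendsto w).comp hv
  have h2 : Tendsto (fun j => ip (rs j) (v j)) atTop (𝓝 (ip r w)) :=
    (ip_cont2.tendsto (r, w)).comp (hr.prodMk_nhds hv)
  exact le_of_tendsto_of_tendsto' h1 h2 fun j => (hrs j).2 ρ hρ

/-- Support function of `R`. -/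
noncomputable def hsup (R : Set (Fin K → ℝ)) (x : Fin K → ℝ) : ℝ := sSup ((fun r => ip r x) '' R)

lemma bddAbove_image (hRcomp : IsCompact R) (x : Fin K → ℝ) :
    BddAbove ((fun r => ip r x) '' R) :=
  (hRcomp.image (ip_cont1 x)).bddAbove

lemma le_hsup (hRcomp : IsCompact R) {r : Fin K → ℝ} (hr : r ∈ R) (x : Fin K → ℝ) :
    ip r x ≤ hsup R x :=
  le_csSup (bddAbove_image hRcomp x) ⟨r, hr, rfl⟩

lemma hsup_eq (hRne : R.Nonempty) (hRcomp : IsCompact R) {x r : Fin K → ℝ}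
    (hr : r ∈ Amax R x) : hsup R x = ip r x := by
  refine le_antisymm (csSup_le (hRne.image _) ?_) (le_hsup hRcomp hr.1 x)
  rintro _ ⟨ρ, hρ, rfl⟩
  exact hr.2 ρ hρ

lemma exists_lip (hRne : R.Nonempty) (hRcomp : IsCompact R) :
    ∃ C : ℝ≥0, LipschitzWith C (hsup R) := by
  obtain ⟨C, hC⟩ := isBounded_iff_forall_norm_le.1 hRcomp.isBounded
  have hC0 : 0 ≤ C := le_trans (norm_nonneg _) (hC _ hRne.some_mem)
  have key : ∀ x y : Fin K → ℝ, hsup R x ≤ hsup R y + K * C * dist x y := by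
    intro x y
    refine csSup_le (hRne.image _) ?_
    rintro _ ⟨r, hr, rfl⟩
    have h1 : ip r x - ip r y ≤ K * C * dist x y := by
      have : ip r x - ip r y = ∑ k, r k * (x k - y k) := by
        simp only [ip, mul_sub, Finset.sum_sub_distrib]
      rw [this]
      calc ∑ k, r k * (x k - y k) ≤ ∑ k : Fin K, C * dist x y := by
            refine Finset.sum_le_sum fun k _ => ?_
            calc r k * (x k - y k) ≤ |r k * (x k - y k)| := le_abs_self _
              _ = |r k| * |x k - y k| := abs_mul _ _
              _ ≤ C * dist x y := by
                  refine mul_le_mul ?_ ?_ (abs_nonneg _) hC0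
                  · exact le_trans (norm_le_pi_norm r k) (hC r hr)
                  · rw [← Real.dist_eq]; exact dist_le_pi_dist x y k
        _ = K * C * dist x y := by
            rw [Finset.sum_const, Finset.card_univ, Fintype.card_fin, nsmul_eq_mul]; ring
    have h2 : ip r y ≤ hsup R y := le_hsup hRcomp hr y
    linarith
  refine ⟨⟨K * C, by positivity⟩, LipschitzWith.of_dist_le_mul fun x y => ?_⟩
  rw [Real.dist_eq, abs_sub_le_iff]
  constructor
  · have := key x y; change _ ≤ (K : ℝ) * C * dist x y; linarith
  · have := key y x; rw [dist_comm] at this; change _ ≤ (K : ℝ) * C * dist x y; linarith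

/-- `ip r ·` as a continuous linear map. -/
noncomputable def ipCLM (r : Fin K → ℝ) : (Fin K → ℝ) →L[ℝ] ℝ :=
  ∑ k, r k • ContinuousLinearMap.proj k

lemma ipCLM_apply (r x : Fin K → ℝ) : ipCLM r x = ip r x := by
  simp [ipCLM, ip, ContinuousLinearMap.sum_apply, ContinuousLinearMap.proj_apply,
    smul_eq_mul]

lemma ip_single (r : Fin K → ℝ) (k : Fin K) : ip r (Pi.single k (1 : ℝ)) = r k := by
  simp only [ip, Pi.single_apply, mul_ite, mul_one, mul_zero]
  simp

lemma eq_of_diff (hRne : R.Nonempty) (hRcomp : IsCompact R) {x : Fin K → ℝ}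
    (hd : DifferentiableAt ℝ (hsup R) x) {r₁ r₂ : Fin K → ℝ}
    (h1 : r₁ ∈ Amax R x) (h2 : r₂ ∈ Amax R x) : r₁ = r₂ := by
  have key : ∀ r, r ∈ Amax R x → ipCLM r = fderiv ℝ (hsup R) x := by
    intro r hr
    have hmin : IsLocalMin (fun y => hsup R y - ipCLM r y) x := by
      refine Eventually.of_forall fun y => ?_
      have hy : ip r y ≤ hsup R y := le_hsup hRcomp hr.1 y
      have hx : hsup R x = ip r x := hsup_eq hRne hRcomp hr
      simp only [ipCLM_apply]
      linarith
    have hder : HasFDerivAt (fun y => hsup R y - ipCLM r y)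
        (fderiv ℝ (hsup R) x - ipCLM r) x :=
      hd.hasFDerivAt.sub (ipCLM r).hasFDerivAt
    have h0 := hmin.hasFDerivAt_eq_zero hder
    have : fderiv ℝ (hsup R) x - ipCLM r = 0 := h0
    exact (sub_eq_zero.1 this).symm
  have hh : ipCLM r₁ = ipCLM r₂ := (key r₁ h1).trans (key r₂ h2).symm
  funext k
  have := congrArg (fun L : (Fin K → ℝ) →L[ℝ] ℝ => L (Pi.single k 1)) hh
  simpa [ipCLM_apply, ip_single] using this


/-- Dense set of differentiability points strictly above any point. -/
lemma dense_diff (hRne : R.Nonempty) (hRcomp : IsCompact R) (w : Fin K → ℝ) {ε : ℝ}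
    (hε : 0 < ε) :
    ∃ v : Fin K → ℝ, DifferentiableAt ℝ (hsup R) v ∧ ∀ k, w k < v k ∧ v k < w k + ε := by
  obtain ⟨C, hlip⟩ := exists_lip hRne hRcomp
  have hae : ∀ᵐ x : Fin K → ℝ, DifferentiableAt ℝ (hsup R) x := hlip.ae_differentiableAt
  set B : Set (Fin K → ℝ) := Set.univ.pi fun k => Set.Ioo (w k) (w k + ε) with hB
  have hpos : 0 < volume B := by
    rw [hB, volume_pi_pi, CanonicallyOrderedAdd.prod_pos]
    intro k _
    rw [Real.volume_Ioo]
    simp [ENNReal.ofReal_pos, hε]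
  by_contra h
  have hsub : B ⊆ {x | ¬ DifferentiableAt ℝ (hsup R) x} := by
    intro v hv hdiff
    refine h ⟨v, hdiff, fun k => ?_⟩
    have h1 := hv k (Set.mem_univ k)
    simpa using h1
  have h0 : volume B = 0 :=
    le_antisymm (le_trans (measure_mono hsub) (le_of_eq (ae_iff.1 hae))) zero_le
  exact absurd h0 (ne_of_gt hpos)


/-- Tendsto in the orthant is tendsto of the underlying functions. -/
lemma tendsto_orth {ι : Type*} {l : Filter ι} {v : ι → Orth K} {w : Orth K} :
    Tendsto v l (𝓝 w) ↔ Tendsto (fun j => (v j).1) l (𝓝 w.1) :=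
  tendsto_subtype_rng

lemma exists_H (hRne : R.Nonempty) (hRcomp : IsCompact R)
    (hRpos : ∀ r ∈ R, ∀ k, 0 ≤ r k) :
    ∃ H : Orth K → Orth K,
      (∀ w : Orth K, (H w).1 ∈ Amax R w.1) ∧
      ∀ w : Orth K, ∃ v : ℕ → Orth K,
        (∀ j, DifferentiableAt ℝ (hsup R) (v j).1) ∧
        (∀ j k, w.1 k < (v j).1 k) ∧
        Tendsto v atTop (𝓝 w) ∧
        Tendsto (fun j => (H (v j)).1) atTop (𝓝 (H w).1) := by
  classical
  -- a measurable-free maximizer selection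
  have hsel : ∀ x : Fin K → ℝ, ∃ r, r ∈ Amax R x := fun x => Amax_nonempty hRne hRcomp x
  choose sel hselmem using hsel
  -- for each w, an approximating sequence from strictly above made of differentiability points
  have hv : ∀ (w : Orth K) (j : ℕ), ∃ v : Orth K,
      DifferentiableAt ℝ (hsup R) v.1 ∧
      (∀ k, w.1 k < v.1 k) ∧ (∀ k, v.1 k < w.1 k + 1 / (j + 1)) := by
    intro w j
    have hj : (0:ℝ) < 1 / (j + 1) := by positivity
    obtain ⟨v, hvd, hvb⟩ := dense_diff hRne hRcomp w.1 hj
    exact ⟨⟨v, fun k => le_of_lt (lt_of_le_of_lt (w.2 k) (hvb k).1)⟩, hvd,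
      fun k => (hvb k).1, fun k => (hvb k).2⟩
  choose vs hvd hvlo hvhi using hv
  -- the sequence converges to w
  have hvtend : ∀ w : Orth K, Tendsto (vs w) atTop (𝓝 w) := by
    intro w
    rw [tendsto_orth, tendsto_pi_nhds]
    intro k
    have hlow : ∀ j : ℕ, w.1 k ≤ (vs w j).1 k := fun j => le_of_lt (hvlo w j k)
    have hhigh : ∀ j : ℕ, (vs w j).1 k ≤ w.1 k + 1 / (j + 1) :=
      fun j => le_of_lt (hvhi w j k)
    have h2 : Tendsto (fun j : ℕ => w.1 k + 1 / (j + 1 : ℝ)) atTop (𝓝 (w.1 k)) := by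
      have := tendsto_one_div_add_atTop_nhds_zero_nat (𝕜 := ℝ)
      have h3 := this.const_add (w.1 k)
      simpa using h3
    exact tendsto_of_tendsto_of_tendsto_of_le_of_le tendsto_const_nhds h2 hlow hhigh
  -- extract a convergent subsequence of maximizers along the approximating sequence
  have hsub : ∀ w : Orth K, ∃ (r : Fin K → ℝ) (φ : ℕ → ℕ), StrictMono φ ∧
      r ∈ Amax R w.1 ∧ Tendsto (fun j => sel ((vs w (φ j)).1)) atTop (𝓝 r) := by
    intro w
    obtain ⟨r, hrR, φ, hφ, hlim⟩ := hRcomp.tendsto_subseq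
      (x := fun j => sel ((vs w j).1)) (fun j => (hselmem ((vs w j).1)).1)
    refine ⟨r, φ, hφ, ?_, hlim⟩
    have hvφ : Tendsto (fun j => (vs w (φ j)).1) atTop (𝓝 w.1) :=
      (tendsto_orth.1 ((hvtend w).comp hφ.tendsto_atTop))
    exact Amax_uhc hRcomp hvφ (fun j => hselmem ((vs w (φ j)).1)) hlim
  choose rr φφ hφmono hrmem hrlim using hsub
  refine ⟨fun w => ⟨rr w, fun k => hRpos _ (hrmem w).1 k⟩, fun w => hrmem w, fun w => ?_⟩
  refine ⟨fun j => vs w (φφ w j), fun j => hvd w (φφ w j), fun j k => hvlo w (φφ w j) k,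
    (hvtend w).comp (hφmono w).tendsto_atTop, ?_⟩
  have : ∀ j, rr (vs w (φφ w j)) = sel ((vs w (φφ w j)).1) := by
    intro j
    exact eq_of_diff hRne hRcomp (hvd w (φφ w j)) (hrmem _) (hselmem _)
  simp only [this]
  exact hrlim w

lemma H_cont (hRne : R.Nonempty) (hRcomp : IsCompact R) {H : Orth K → Orth K}
    (hH : ∀ w : Orth K, (H w).1 ∈ Amax R w.1) {w : Orth K}
    (hw : DifferentiableAt ℝ (hsup R) w.1) : ContinuousAt H w := by
  rw [ContinuousAt]
  refine tendsto_iff_seq_tendsto.2 fun u hu => ?_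
  rw [tendsto_orth]
  refine tendsto_of_subseq_tendsto fun ns hns => ?_
  obtain ⟨r, hrR, ms, hms, hlim⟩ := hRcomp.tendsto_subseq
    (x := fun n => (H (u (ns n))).1) (fun n => (hH (u (ns n))).1)
  have hvtend : Tendsto (fun n => (u (ns (ms n))).1) atTop (𝓝 w.1) :=
    tendsto_orth.1 (hu.comp (hns.comp hms.tendsto_atTop))
  have hrA : r ∈ Amax R w.1 :=
    Amax_uhc hRcomp hvtend (fun n => hH (u (ns (ms n)))) hlim
  refine ⟨ms, ?_⟩
  have : r = (H w).1 := eq_of_diff hRne hRcomp hw hrA (hH w)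
  exact this ▸ hlim


/-- membership of the selection in the correspondence -/
lemma GwcL_mem_GSetL {H : Orth K → Orth K} (hH : ∀ w : Orth K, (H w).1 ∈ Amax R w.1) :
    ∀ l : List (Orth K), GwcL H l ∈ GSetL R l := by
  intro l
  induction l with
  | nil => simp [GwcL, GSetL]
  | cons a l ih =>
    cases l with
    | nil => simp [GwcL, GSetL]
    | cons b rest =>
      refine ⟨GwcL H (b :: rest), ih, (H (GwcL H (b :: rest))).1,
        (hH _).1, (hH _).2, rfl⟩

/-- `Φ(w) = [w - H w]⁺`. -/
def Phi {K : ℕ} (H : Orth K → Orth K) (w : Orth K) : Orth K :=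
  ⟨fun k => max (w.1 k - (H w).1 k) 0, fun k => le_max_right _ _⟩

/-- the two-step unfolding of GwcL on ofFn -/
lemma GwcL_ofFn_succ {H : Orth K → Orth K} {n : ℕ} (a : Fin (n + 2) → Orth K) :
    GwcL H (List.ofFn a) = addO (a 0) (Phi H (GwcL H (List.ofFn (Fin.tail a)))) := by
  have h1 : List.ofFn a = a 0 :: List.ofFn (Fin.tail a) := List.ofFn_succ (f := a)
  have h2 : List.ofFn (Fin.tail a) = Fin.tail a 0 :: List.ofFn (Fin.tail (Fin.tail a)) :=
    List.ofFn_succ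
  rw [h1, h2]
  rfl

lemma continuous_posPart : Continuous (posPart (K := K)) := by
  refine Continuous.subtype_mk ?_ _
  exact continuous_pi fun k => ((continuous_apply k).max continuous_const)

lemma continuous_addO : Continuous fun p : Orth K × Orth K => addO p.1 p.2 := by
  refine Continuous.subtype_mk ?_ _
  exact continuous_pi fun k =>
    (((continuous_apply k).comp (continuous_subtype_val.comp continuous_fst)).add
      ((continuous_apply k).comp (continuous_subtype_val.comp continuous_snd)))

/-- goodness of a list: all workloads along nonempty suffixes are differentiability points -/
def Good (R : Set (Fin K → ℝ)) (H : Orth K → Orth K) (l : List (Orth K)) : Prop :=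
  ∀ l' : List (Orth K), l' <:+ l → l' ≠ [] → DifferentiableAt ℝ (hsup R) (GwcL H l').1

lemma Good_tail {H : Orth K → Orth K} {a : Orth K} {l : List (Orth K)}
    (h : Good R H (a :: l)) : Good R H l :=
  fun l' hsuf hne => h l' (hsuf.trans (List.suffix_cons a l)) hne

lemma Good_cons_iff {H : Orth K → Orth K} {a : Orth K} {l : List (Orth K)} :
    Good R H (a :: l) ↔
      DifferentiableAt ℝ (hsup R) (GwcL H (a :: l)).1 ∧ Good R H l := by
  constructor
  · exact fun h => ⟨h _ (List.suffix_refl _) (by simp), Good_tail h⟩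
  · rintro ⟨h1, h2⟩ l' hsuf hne
    rcases List.suffix_cons_iff.1 hsuf with rfl | hsuf'
    · exact h1
    · exact h2 l' hsuf' hne

/-- Lemma A: continuity of the workload map at tail-good points. -/
lemma contA (hRne : R.Nonempty) (hRcomp : IsCompact R) {H : Orth K → Orth K}
    (hH : ∀ w : Orth K, (H w).1 ∈ Amax R w.1) :
    ∀ (n : ℕ) (a : Fin (n + 1) → Orth K), Good R H (List.ofFn (Fin.tail a)) →
      ContinuousAt (fun x : Fin (n + 1) → Orth K => GwcL H (List.ofFn x)) a := by
  intro n
  induction n with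
  | zero =>
    intro a _
    have : (fun x : Fin 1 → Orth K => GwcL H (List.ofFn x)) = fun x => x 0 := by
      funext x
      rfl
    rw [this]
    exact (continuous_apply 0).continuousAt
  | succ n ih =>
    intro a hgood
    have heqn : (fun x : Fin (n + 2) → Orth K => GwcL H (List.ofFn x)) =
        fun x => addO (x 0) (Phi H (GwcL H (List.ofFn (Fin.tail x)))) := by
      funext x
      exact GwcL_ofFn_succ x
    rw [heqn]
    have htail : Continuous fun x : Fin (n + 2) → Orth K => Fin.tail x :=
      continuous_pi fun i => continuous_apply i.succ
    have h2 : List.ofFn (Fin.tail a) = Fin.tail a 0 :: List.ofFn (Fin.tail (Fin.tail a)) :=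
      List.ofFn_succ
    have hgood' : Good R H (List.ofFn (Fin.tail (Fin.tail a))) := Good_tail (h2 ▸ hgood)
    have hW : ContinuousAt (fun x : Fin (n + 2) → Orth K =>
        GwcL H (List.ofFn (Fin.tail x))) a := by
      have h := Filter.Tendsto.comp (ih (Fin.tail a) hgood') htail.continuousAt
      exact h
    have hWD : DifferentiableAt ℝ (hsup R) (GwcL H (List.ofFn (Fin.tail a))).1 :=
      hgood _ (List.suffix_refl _) (by simp [List.ofFn_succ])
    have hHc : ContinuousAt H (GwcL H (List.ofFn (Fin.tail a))) :=
      H_cont hRne hRcomp hH hWD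
    have hWv : Tendsto (fun x : Fin (n + 2) → Orth K => (GwcL H (List.ofFn (Fin.tail x))).1)
        (𝓝 a) (𝓝 ((GwcL H (List.ofFn (Fin.tail a))).1)) := by
      have h := Filter.Tendsto.comp (continuous_subtype_val.tendsto
        (GwcL H (List.ofFn (Fin.tail a)))) hW
      exact h
    have hHv : Tendsto (fun x : Fin (n + 2) → Orth K =>
        (H (GwcL H (List.ofFn (Fin.tail x)))).1)
        (𝓝 a) (𝓝 ((H (GwcL H (List.ofFn (Fin.tail a)))).1)) := by
      have h := Filter.Tendsto.comp (continuous_subtype_val.tendsto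
        (H (GwcL H (List.ofFn (Fin.tail a))))) (Filter.Tendsto.comp hHc hW)
      exact h
    have hPhi : Tendsto (fun x : Fin (n + 2) → Orth K =>
        Phi H (GwcL H (List.ofFn (Fin.tail x))))
        (𝓝 a) (𝓝 (Phi H (GwcL H (List.ofFn (Fin.tail a))))) := by
      have h := Filter.Tendsto.comp (continuous_posPart.tendsto
        ((GwcL H (List.ofFn (Fin.tail a))).1 - (H (GwcL H (List.ofFn (Fin.tail a)))).1))
        (hWv.sub hHv)
      exact h
    have hx0 : Tendsto (fun x : Fin (n + 2) → Orth K => x 0) (𝓝 a) (𝓝 (a 0)) :=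
      (continuous_apply 0).tendsto a
    have h := Filter.Tendsto.comp
      (continuous_addO.tendsto (a 0, Phi H (GwcL H (List.ofFn (Fin.tail a)))))
      (hx0.prodMk_nhds hPhi)
    exact h

lemma GwcL_ofFn_one {H : Orth K → Orth K} (a : Fin 1 → Orth K) :
    GwcL H (List.ofFn a) = a 0 := rfl

lemma ofFn_cons {m : ℕ} (x : Orth K) (p : Fin m → Orth K) :
    List.ofFn (Fin.cons x p) = x :: List.ofFn p := by
  rw [List.ofFn_succ]
  simp [Fin.cons_succ]

lemma Phi_val_tendsto {ι : Type*} {l : Filter ι} {H : Orth K → Orth K}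
    {Wm : ι → Orth K} {Wl : Orth K}
    (hW : Tendsto (fun m => (Wm m).1) l (𝓝 Wl.1))
    (hH : Tendsto (fun m => (H (Wm m)).1) l (𝓝 (H Wl).1)) :
    Tendsto (fun m => (Phi H (Wm m)).1) l (𝓝 (Phi H Wl).1) := by
  have h := Filter.Tendsto.comp (continuous_subtype_val.tendsto
      (posPart (Wl.1 - (H Wl).1)))
    (Filter.Tendsto.comp (continuous_posPart.tendsto (Wl.1 - (H Wl).1)) (hW.sub hH))
  exact h

/-- Lemma B': approximation by good tuples. -/
lemma approxB (hRne : R.Nonempty) (hRcomp : IsCompact R) {H : Orth K → Orth K}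
    (hH1 : ∀ w : Orth K, (H w).1 ∈ Amax R w.1)
    (hH2 : ∀ w : Orth K, ∃ v : ℕ → Orth K,
        (∀ j, DifferentiableAt ℝ (hsup R) (v j).1) ∧
        (∀ j k, w.1 k < (v j).1 k) ∧
        Tendsto v atTop (𝓝 w) ∧
        Tendsto (fun j => (H (v j)).1) atTop (𝓝 ((H w).1))) :
    ∀ (n : ℕ) (a : Fin (n + 1) → Orth K),
      ∃ u : ℕ → (Fin (n + 1) → Orth K),
        Tendsto u atTop (𝓝 a) ∧
        (∀ m, Good R H (List.ofFn (u m))) ∧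
        Tendsto (fun m => GwcL H (List.ofFn (u m))) atTop (𝓝 (GwcL H (List.ofFn a))) ∧
        Tendsto (fun m => (H (GwcL H (List.ofFn (u m)))).1) atTop
          (𝓝 ((H (GwcL H (List.ofFn a))).1)) := by
  intro n
  induction n with
  | zero =>
    intro a
    obtain ⟨v, hvd, _, hvtend, hvH⟩ := hH2 (a 0)
    refine ⟨fun m => fun _ => v m, ?_, ?_, ?_, ?_⟩
    · rw [tendsto_pi_nhds]
      intro i
      have : i = 0 := Fin.eq_zero i
      rw [this]
      exact hvtend
    · intro m l' hsuf hne
      have : l' = [v m] := by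
        rcases List.suffix_cons_iff.1 hsuf with h | h
        · exact h
        · exact absurd (List.suffix_nil.1 h) hne
      rw [this]
      exact hvd m
    · simpa only [GwcL_ofFn_one] using hvtend
    · simpa only [GwcL_ofFn_one] using hvH
  | succ n ih =>
    intro a
    obtain ⟨u', hu'tend, hu'good, hu'W, hu'H⟩ := ih (Fin.tail a)
    set Wl : Orth K := GwcL H (List.ofFn (Fin.tail a)) with hWl
    set wfull : Orth K := GwcL H (List.ofFn a) with hwfull
    have hw : wfull = addO (a 0) (Phi H Wl) := GwcL_ofFn_succ a
    obtain ⟨v, hvd, hvlo, hvtend, hvH⟩ := hH2 wfull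
    set Wm : ℕ → Orth K := fun m => GwcL H (List.ofFn (u' m)) with hWm
    have hPhim : Tendsto (fun m => (Phi H (Wm m)).1) atTop (𝓝 ((Phi H Wl).1)) :=
      Phi_val_tendsto (tendsto_orth.1 hu'W) hu'H
    -- eventual domination
    have hdom : ∀ j : ℕ, ∃ M : ℕ, ∀ m, M ≤ m →
        ∀ k, (Phi H (Wm m)).1 k + (a 0).1 k ≤ (v j).1 k := by
      intro j
      have hev : ∀ᶠ m in atTop, ∀ k, (Phi H (Wm m)).1 k + (a 0).1 k ≤ (v j).1 k := by
        rw [eventually_all]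
        intro k
        have hk : Tendsto (fun m => (Phi H (Wm m)).1 k) atTop (𝓝 ((Phi H Wl).1 k)) := by
          have h := Filter.Tendsto.comp ((continuous_apply k).tendsto ((Phi H Wl).1)) hPhim
          exact h
        have hstrict : (Phi H Wl).1 k < (v j).1 k - (a 0).1 k := by
          have h1 := hvlo j k
          rw [hw] at h1
          simp only [addO] at h1
          linarith
        have := hk.eventually_le_const hstrict
        filter_upwards [this] with m hm
        linarith
      exact eventually_atTop.1 hev
    choose M hM using hdom
    set mm : ℕ → ℕ := fun j => max j (M j) with hmm
    have hmmtend : Tendsto mm atTop atTop :=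
      tendsto_atTop_mono (fun j => le_max_left _ _) tendsto_id
    have hbnn : ∀ j k, 0 ≤ (v j).1 k - (Phi H (Wm (mm j))).1 k := by
      intro j k
      have h1 := hM j (mm j) (le_max_right _ _) k
      have h0 := (a 0).2 k
      linarith
    set b : ℕ → Orth K := fun j =>
      ⟨fun k => (v j).1 k - (Phi H (Wm (mm j))).1 k, fun k => hbnn j k⟩ with hb
    set u : ℕ → Fin (n + 2) → Orth K := fun j => Fin.cons (b j) (u' (mm j)) with hu
    -- the key equation
    have hkey : ∀ j, GwcL H (List.ofFn (u j)) = v j := by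
      intro j
      rw [hu]
      rw [GwcL_ofFn_succ]
      apply Subtype.ext
      funext k
      simp only [addO, Fin.cons_zero, Fin.tail_cons, hb, hWm]
      abel
    refine ⟨u, ?_, ?_, ?_, ?_⟩
    · rw [tendsto_pi_nhds]
      intro i
      refine Fin.cases ?_ ?_ i
      · -- coordinate 0 : b j → a 0
        have hval : Tendsto (fun j => (b j).1) atTop (𝓝 (wfull.1 - (Phi H Wl).1)) := by
          have h := (tendsto_orth.1 hvtend).sub (hPhim.comp hmmtend)
          exact h
        have heqq : wfull.1 - (Phi H Wl).1 = (a 0).1 := by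
          funext k
          rw [hw]
          simp only [addO]
          simp
        rw [heqq] at hval
        have : Tendsto (fun j => u j 0) atTop (𝓝 (a 0)) := by
          rw [tendsto_orth]
          have hco : (fun j => (u j 0).1) = fun j => (b j).1 := by
            funext j; rw [hu]; simp [Fin.cons_zero]
          rw [hco]
          exact hval
        exact this
      · intro i'
        have h1 : Tendsto (fun j => u' (mm j) i') atTop (𝓝 (Fin.tail a i')) :=
          ((tendsto_pi_nhds.1 hu'tend) i').comp hmmtend
        have hco : (fun j => u j i'.succ) = fun j => u' (mm j) i' := by
          funext j; rw [hu]; simp [Fin.cons_succ]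
        rw [hco]
        exact h1
    · intro j
      have hofn : List.ofFn (u j) = b j :: List.ofFn (u' (mm j)) := by
        rw [hu]; exact ofFn_cons _ _
      rw [hofn, Good_cons_iff]
      constructor
      · have : (b j :: List.ofFn (u' (mm j))) = List.ofFn (u j) := hofn.symm
        rw [this, hkey j]
        exact hvd j
      · exact hu'good (mm j)
    · have hco : (fun m => GwcL H (List.ofFn (u m))) = fun m => v m := by
        funext m; exact hkey m
      rw [hco]
      exact hvtend
    · have hco : (fun m => (H (GwcL H (List.ofFn (u m)))).1) = fun m => (H (v m)).1 := by
        funext m; rw [hkey m]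
      rw [hco]
      exact hvH



lemma Good_ofFn_tail {H : Orth K → Orth K} {n : ℕ} {f : Fin (n + 1) → Orth K}
    (h : Good R H (List.ofFn f)) : Good R H (List.ofFn (Fin.tail f)) := by
  have h1 : List.ofFn f = f 0 :: List.ofFn (Fin.tail f) := List.ofFn_succ (f := f)
  exact Good_tail (h1 ▸ h)

end MWAux

/-- There is a quasi-continuous selection `G_t` of the achievable
max-weight workload correspondence `𝒢_t`. -/
theorem maxweight_workload_quasicontinuous_selection
    (K : ℕ) (hK : 1 ≤ K) (R : Set (Fin K → ℝ))
    (hRne : R.Nonempty) (hRcomp : IsCompact R) (hRconv : Convex ℝ R)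
    (hRpos : ∀ r ∈ R, ∀ k, 0 ≤ r k)
    (hRcc : ∀ r ∈ R, ∀ r' : Fin K → ℝ, (∀ k, 0 ≤ r' k) → (∀ k, r' k ≤ r k) → r' ∈ R)
    (t : ℕ) (ht : 1 ≤ t) :
    ∃ G : (Fin t → Orth K) → Orth K, QuasiContinuous G ∧
      ∀ a : Fin t → Orth K, G a ∈ GSetL R (List.ofFn a) := by
  classical
  obtain ⟨n, rfl⟩ : ∃ n, t = n + 1 := ⟨t - 1, (Nat.succ_pred_eq_of_pos ht).symm⟩
  obtain ⟨H, hH1, hH2⟩ := MWAux.exists_H hRne hRcomp hRpos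
  refine ⟨fun a => GwcL H (List.ofFn a), ?_, fun a => MWAux.GwcL_mem_GSetL hH1 _⟩
  intro a
  obtain ⟨u, hu1, hu2, hu3, _⟩ := MWAux.approxB hRne hRcomp hH1 hH2 n a
  exact ⟨u, hu1, hu3, fun m =>
    MWAux.contA hRne hRcomp hH1 n (u m) (MWAux.Good_ofFn_tail (hu2 m))⟩
end

section
/- (Finite-horizon LDP under max-weight.) Let K ≥ 1, ℛ ⊆ ℝ₊^K a nonempty compact convex coordinate-convex rate region, t ∈ ℕ, and G_t : (ℝ₊^K)^t → ℝ₊^K a Borel-measurable quasi-continuous selection of the achievable max-weight workload correspondence, i.e., G_t(a) ∈ 𝒢_t(a) for all a. Let (A^L)_{L∈ℕ} be Borel random elements of (ℝ₊^K)^t satisfying the LDP with good rate function I_t^♯ that is continuous on (ℝ₊^K)^t. Then the sequence (G_t(A^L))_L satisfies the LDP on ℝ₊^K with good rate function I_t(b) = inf{I_t^♯(x) : x ∈ (ℝ₊^K)^t, b ∈ ^xG_t}. -/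
open Filter Topology MeasureTheory
open scoped ENNReal NNReal

/-- The cluster set `^xF` of `F` at `x`: all limits of `F` along sequences converging to `x`. -/
def clusterSet {X Y : Type*} [MetricSpace X] [MetricSpace Y] (F : X → Y) (x : X) : Set Y :=
  {y | ∃ u : ℕ → X, Tendsto u atTop (nhds x) ∧ Tendsto (fun n => F (u n)) atTop (nhds y)}

/-- A good rate function: lower semicontinuous with compact sublevel sets. -/
def GoodRateFunction {X : Type*} [TopologicalSpace X] (I : X → ℝ≥0∞) : Prop :=
  LowerSemicontinuous I ∧ ∀ c : ℝ≥0, IsCompact {x | I x ≤ (c : ℝ≥0∞)}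

/-- The sequence of random elements `A L` satisfies the large deviations principle with
good rate function `I`. -/
def SatisfiesLDP {Ω X : Type*} [MeasurableSpace Ω] [TopologicalSpace X] [MeasurableSpace X]
    (P : Measure Ω) (A : ℕ → Ω → X) (I : X → ℝ≥0∞) : Prop :=
  GoodRateFunction I ∧
  ∀ B : Set X, MeasurableSet B →
    (-((⨅ x ∈ interior B, I x : ℝ≥0∞) : EReal) ≤
      liminf (fun L : ℕ => (((L : ℝ)⁻¹ : ℝ) : EReal) * ENNReal.log (P ((A L) ⁻¹' B))) atTop) ∧
    (limsup (fun L : ℕ => (((L : ℝ)⁻¹ : ℝ) : EReal) * ENNReal.log (P ((A L) ⁻¹' B))) atTop ≤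
      -((⨅ x ∈ closure B, I x : ℝ≥0∞) : EReal))

section AuxLemmas

open Metric

variable {Xs Ys : Type*} [MetricSpace Xs] [MetricSpace Ys]

private lemma aux_tendsto_of_dist (y : ℕ → Xs) (x : Xs)
    (h : ∀ n : ℕ, dist (y n) x < 1 / (n + 1)) : Tendsto y atTop (nhds x) := by
  rw [Metric.tendsto_atTop]
  intro ε hε
  obtain ⟨N, hN⟩ := exists_nat_one_div_lt hε
  refine ⟨N, fun n hn => (h n).trans (lt_of_le_of_lt ?_ hN)⟩
  apply one_div_le_one_div_of_le
  · positivity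
  · exact_mod_cast Nat.succ_le_succ hn

lemma mem_clusterSet_iff (F : Xs → Ys) (x : Xs) (b : Ys) :
    b ∈ clusterSet F x ↔ ∀ ε : ℝ, 0 < ε → ∃ y, dist y x < ε ∧ dist (F y) b < ε := by
  constructor
  · rintro ⟨u, hu, hFu⟩ ε hε
    obtain ⟨N1, h1⟩ := Metric.tendsto_atTop.1 hu ε hε
    obtain ⟨N2, h2⟩ := Metric.tendsto_atTop.1 hFu ε hε
    exact ⟨u (max N1 N2), h1 _ (le_max_left _ _), h2 _ (le_max_right _ _)⟩
  · intro h
    choose y hy1 hy2 using fun n : ℕ => h (1 / (n + 1)) (by positivity)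
    exact ⟨y, aux_tendsto_of_dist y x hy1, aux_tendsto_of_dist (fun n => F (y n)) b hy2⟩

lemma mem_clusterSet_of_seq (F : Xs → Ys) {x : Xs} {b : Ys} (xs : ℕ → Xs) (bs : ℕ → Ys)
    (hx : Tendsto xs atTop (nhds x)) (hb : Tendsto bs atTop (nhds b))
    (h : ∀ n, bs n ∈ clusterSet F (xs n)) : b ∈ clusterSet F x := by
  rw [mem_clusterSet_iff]
  intro ε hε
  obtain ⟨N1, h1⟩ := Metric.tendsto_atTop.1 hx (ε/3) (by positivity)
  obtain ⟨N2, h2⟩ := Metric.tendsto_atTop.1 hb (ε/3) (by positivity)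
  obtain ⟨y, hy1, hy2⟩ := (mem_clusterSet_iff F (xs (max N1 N2)) (bs (max N1 N2))).1
    (h (max N1 N2)) (ε/3) (by positivity)
  refine ⟨y, ?_, ?_⟩
  · have ht := dist_triangle y (xs (max N1 N2)) x
    have h1' := h1 (max N1 N2) (le_max_left _ _)
    linarith
  · have ht := dist_triangle (F y) (bs (max N1 N2)) b
    have h2' := h2 (max N1 N2) (le_max_right _ _)
    linarith

end AuxLemmas

lemma orth_coord_dist {K : ℕ} (a b : Orth K) (k : Fin K) : |a.1 k - b.1 k| ≤ dist a b := by
  have h := dist_le_pi_dist a.1 b.1 k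
  rw [Real.dist_eq] at h
  rwa [Subtype.dist_eq]

lemma GSetL_bound {K : ℕ} (R : Set (Fin K → ℝ)) (hRpos : ∀ r ∈ R, ∀ k, 0 ≤ r k) :
    ∀ l : List (Orth K), ∀ z ∈ GSetL R l, ∀ k, z.1 k ≤ (l.map (fun a => a.1 k)).sum := by
  intro l
  induction l with
  | nil =>
    intro z hz k
    simp only [GSetL, Set.mem_singleton_iff] at hz
    subst hz; simp
  | cons a l2 ih =>
    cases l2 with
    | nil =>
      intro z hz k
      simp only [GSetL, Set.mem_singleton_iff] at hz
      subst hz; simp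
    | cons b rest =>
      intro z hz k
      simp only [GSetL, Set.mem_setOf_eq] at hz
      obtain ⟨w, hw, r, hr, -, rfl⟩ := hz
      have hw' := ih w hw k
      have hpp : (_root_.posPart (w.1 - r)).1 k ≤ w.1 k := by
        simp only [_root_.posPart, Pi.sub_apply]
        exact max_le (sub_le_self _ (hRpos r hr k)) (w.2 k)
      simp only [addO, List.map_cons, List.sum_cons] at hw' ⊢
      exact add_le_add_right (hpp.trans hw') _

lemma box_compact (K : ℕ) (M : ℝ) : IsCompact {b : Orth K | ∀ k, b.1 k ≤ M} := by
  rw [Subtype.isCompact_iff]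
  have h : (Subtype.val '' {b : Orth K | ∀ k, b.1 k ≤ M})
      = Set.pi Set.univ (fun _ : Fin K => Set.Icc (0:ℝ) M) := by
    ext w
    simp only [Set.mem_image, Set.mem_setOf_eq, Set.mem_univ_pi, Set.mem_Icc]
    constructor
    · rintro ⟨c, hc, rfl⟩ k; exact ⟨c.2 k, hc k⟩
    · intro hw; exact ⟨⟨w, fun k => (hw k).1⟩, fun k => (hw k).2, rfl⟩
  rw [h]
  exact isCompact_univ_pi fun _ => isCompact_Icc

lemma ereal_le_coe_iInf {ι : Sort*} (f : ι → ℝ≥0∞) (a : EReal) (h : ∀ i, a ≤ (f i : EReal)) :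
    a ≤ ((⨅ i, f i : ℝ≥0∞) : EReal) := by
  by_contra hcon
  push_neg at hcon
  obtain ⟨c, hc1, hc2⟩ := EReal.exists_between_coe_real hcon
  have hc0 : (0:ℝ) ≤ c := by
    have h0 : ((0:ℝ):EReal) < (c:EReal) := by
      rw [EReal.coe_zero]
      exact lt_of_le_of_lt (EReal.coe_ennreal_nonneg _) hc1
    exact (EReal.coe_lt_coe_iff.1 h0).le
  have hcoe : ((c:ℝ):EReal) = ((ENNReal.ofReal c : ℝ≥0∞) : EReal) := by
    rw [EReal.coe_ennreal_ofReal, max_eq_left hc0]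
  have hlt : (⨅ i, f i) < ENNReal.ofReal c := by
    rw [← EReal.coe_ennreal_lt_coe_ennreal_iff]
    exact hcoe ▸ hc1
  obtain ⟨i, hi⟩ := iInf_lt_iff.1 hlt
  have h2 : (f i : EReal) < (c : EReal) :=
    hcoe ▸ (EReal.coe_ennreal_lt_coe_ennreal_iff.2 hi)
  exact absurd (h i) (not_le.2 (h2.trans hc2))

lemma ereal_le_coe_of_forall_add (s : ℝ≥0∞) (a : EReal)
    (h : ∀ ε : ℝ≥0∞, 0 < ε → ε ≠ ⊤ → a ≤ ((s + ε : ℝ≥0∞) : EReal)) : a ≤ (s : EReal) := by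
  by_contra hcon
  push_neg at hcon
  have hs : s ≠ ⊤ := by
    intro hst
    rw [hst, EReal.coe_ennreal_top] at hcon
    exact not_top_lt hcon
  obtain ⟨c, hc1, hc2⟩ := EReal.exists_between_coe_real hcon
  have hc0 : (0:ℝ) ≤ c := by
    have h0 : ((0:ℝ):EReal) < (c:EReal) := by
      rw [EReal.coe_zero]
      exact lt_of_le_of_lt (EReal.coe_ennreal_nonneg _) hc1
    exact (EReal.coe_lt_coe_iff.1 h0).le
  have hcoe : ((c:ℝ):EReal) = ((ENNReal.ofReal c : ℝ≥0∞) : EReal) := by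
    rw [EReal.coe_ennreal_ofReal, max_eq_left hc0]
  have hsc : s < ENNReal.ofReal c := by
    rw [← EReal.coe_ennreal_lt_coe_ennreal_iff]
    exact hcoe ▸ hc1
  have hne : ENNReal.ofReal c - s ≠ ⊤ := by
    intro hT
    exact absurd (ENNReal.sub_eq_top_iff.1 hT).1 ENNReal.ofReal_ne_top
  have hpos : 0 < ENNReal.ofReal c - s := tsub_pos_of_lt hsc
  have hfin := h _ hpos hne
  rw [add_tsub_cancel_of_le hsc.le, ← hcoe] at hfin
  exact absurd (hc2.trans_le hfin) (lt_irrefl _)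

instance orth_opensMeasurableSpace (K : ℕ) : OpensMeasurableSpace (Orth K) :=
  Subtype.opensMeasurableSpace {w : Fin K → ℝ | ∀ k, 0 ≤ w k}
/-- Finite-horizon LDP under max-weight scheduling: if the arrivals
satisfy an LDP with a continuous good rate function `I_t^♯`, then the workloads
`G_t(A^L)` satisfy an LDP with good rate function
`I_t(b) = inf {I_t^♯(x) : b ∈ ^xG_t}`. -/
theorem finite_horizon_LDP_maxweight
    (K : ℕ) (hK : 1 ≤ K) (R : Set (Fin K → ℝ))
    (hRne : R.Nonempty) (hRcomp : IsCompact R) (hRconv : Convex ℝ R)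
    (hRpos : ∀ r ∈ R, ∀ k, 0 ≤ r k)
    (hRcc : ∀ r ∈ R, ∀ r' : Fin K → ℝ, (∀ k, 0 ≤ r' k) → (∀ k, r' k ≤ r k) → r' ∈ R)
    (t : ℕ) (ht : 1 ≤ t)
    (G : (Fin t → Orth K) → Orth K) (hGmeas : Measurable G)
    (hGqc : QuasiContinuous G) (hGsel : ∀ a : Fin t → Orth K, G a ∈ GSetL R (List.ofFn a))
    {Ω : Type*} [MeasurableSpace Ω] (P : Measure Ω) [IsProbabilityMeasure P]
    (A : ℕ → Ω → (Fin t → Orth K)) (hA : ∀ L, Measurable (A L))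
    (Isharp : (Fin t → Orth K) → ℝ≥0∞)
    (hldp : SatisfiesLDP P A Isharp) (hIc : Continuous Isharp) :
    SatisfiesLDP P (fun L ω => G (A L ω))
      (fun b : Orth K => ⨅ (x : Fin t → Orth K) (_ : b ∈ clusterSet G x), Isharp x) := by
  classical
  -- notation
  have hbd : ∀ (x : Fin t → Orth K) (k : Fin K), (G x).1 k ≤ ∑ i, (x i).1 k := by
    intro x k
    have h := GSetL_bound R hRpos (List.ofFn x) (G x) (hGsel x) k
    rwa [List.map_ofFn, List.sum_ofFn] at h
  set f : (Fin t → Orth K) → ℝ := fun x => ∑ k, ∑ i, (x i).1 k with hf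
  have hfc : Continuous f := by
    apply continuous_finset_sum
    intro k _
    apply continuous_finset_sum
    intro i _
    exact (continuous_apply k).comp (continuous_subtype_val.comp (continuous_apply i))
  have hsum_le_f : ∀ (x : Fin t → Orth K) (k : Fin K), ∑ i, (x i).1 k ≤ f x := by
    intro x k
    exact Finset.single_le_sum
      (fun k' _ => Finset.sum_nonneg fun i _ => (x i).2 k') (Finset.mem_univ k)
  have hGf : ∀ (x : Fin t → Orth K) (k : Fin K), (G x).1 k ≤ f x :=
    fun x k => (hbd x k).trans (hsum_le_f x k)
  set It : Orth K → ℝ≥0∞ :=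
    fun b : Orth K => ⨅ (x : Fin t → Orth K) (_ : b ∈ clusterSet G x), Isharp x with hIt
  -- closedness of sublevel sets of It
  have hIt_closed : ∀ c : ℝ≥0∞, IsClosed {b : Orth K | It b ≤ c} := by
    intro c
    rcases eq_or_ne c ⊤ with rfl | hc
    · have h : {b : Orth K | It b ≤ ⊤} = Set.univ := Set.eq_univ_of_forall fun b => by simp
      rw [h]; exact isClosed_univ
    · apply IsSeqClosed.isClosed
      intro bs b hbs hb
      simp only [Set.mem_setOf_eq] at hbs ⊢
      set δ : ℕ → ℝ≥0∞ := fun n => ((n : ℝ≥0∞) + 1)⁻¹ with hδ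
      have hδ0 : ∀ n, δ n ≠ 0 := by
        intro n
        simp only [hδ, ne_eq, ENNReal.inv_eq_zero]
        finiteness
      have hδ1 : ∀ n, δ n ≤ 1 := by
        intro n
        simpa only [hδ, ENNReal.inv_le_one] using (le_add_self : 1 ≤ (n : ℝ≥0∞) + 1)
      have hkey : ∀ n, ∃ x, bs n ∈ clusterSet G x ∧ Isharp x < c + δ n := by
        intro n
        have hlt : It (bs n) < c + δ n :=
          lt_of_le_of_lt (hbs n) (ENNReal.lt_add_right hc (hδ0 n))
        obtain ⟨x, hx⟩ := iInf_lt_iff.1 hlt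
        obtain ⟨hmem, hx2⟩ := iInf_lt_iff.1 hx
        exact ⟨x, hmem, hx2⟩
      choose xs hxs1 hxs2 using hkey
      have hS : IsCompact {x | Isharp x ≤ c + 1} := by
        have h := hldp.1.2 (c + 1).toNNReal
        rwa [ENNReal.coe_toNNReal (by finiteness)] at h
      have hmemS : ∀ n, xs n ∈ {x | Isharp x ≤ c + 1} := fun n =>
        le_of_lt (lt_of_lt_of_le (hxs2 n) (add_le_add_right (hδ1 n) c))
      obtain ⟨xinf, hxinfS, φ, hφ, hxφ⟩ := hS.tendsto_subseq hmemS
      have hbcl : b ∈ clusterSet G xinf :=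
        mem_clusterSet_of_seq G (fun n => xs (φ n)) (fun n => bs (φ n)) hxφ
          (hb.comp hφ.tendsto_atTop) (fun n => hxs1 (φ n))
      refine le_trans (iInf_le_of_le xinf (iInf_le_of_le hbcl le_rfl)) ?_
      have lim1 : Tendsto (fun n => Isharp (xs (φ n))) atTop (nhds (Isharp xinf)) :=
        (hIc.tendsto xinf).comp hxφ
      have hδlim : Tendsto δ atTop (nhds 0) := by
        apply tendsto_of_tendsto_of_tendsto_of_le_of_le tendsto_const_nhds
          ENNReal.tendsto_inv_nat_nhds_zero (fun n => zero_le)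
        intro n
        exact ENNReal.inv_le_inv.2 le_self_add
      have lim2 : Tendsto (fun n => c + δ (φ n)) atTop (nhds c) := by
        have h := (Tendsto.const_add c hδlim).comp hφ.tendsto_atTop
        simpa [Function.comp_def] using h
      exact le_of_tendsto_of_tendsto' lim1 lim2 (fun n => (hxs2 (φ n)).le)
  -- boundedness of sublevel sets of It
  have hboxbd : ∀ c : ℝ≥0, ∃ M : ℝ, ∀ b : Orth K, It b ≤ (c : ℝ≥0∞) → ∀ k, b.1 k ≤ M := by
    intro c
    have hS : IsCompact {x | Isharp x ≤ (c : ℝ≥0∞) + 1} := by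
      have h := hldp.1.2 (c + 1)
      rwa [show (((c + 1 : ℝ≥0)) : ℝ≥0∞) = (c : ℝ≥0∞) + 1 by push_cast; ring] at h
    obtain ⟨C, hC⟩ := hS.bddAbove_image hfc.continuousOn
    have hC' : ∀ x ∈ {x | Isharp x ≤ (c : ℝ≥0∞) + 1}, f x ≤ C := fun x hx =>
      hC ⟨x, hx, rfl⟩
    refine ⟨C + t + 1, ?_⟩
    intro b hble k
    have hlt : It b < (c : ℝ≥0∞) + 1 :=
      lt_of_le_of_lt hble (ENNReal.lt_add_right ENNReal.coe_ne_top one_ne_zero)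
    obtain ⟨x, hx⟩ := iInf_lt_iff.1 hlt
    obtain ⟨hmem, hxlt⟩ := iInf_lt_iff.1 hx
    obtain ⟨y, hy1, hy2⟩ := (mem_clusterSet_iff G x b).1 hmem 1 one_pos
    have h1 : b.1 k ≤ (G y).1 k + 1 := by
      have h := orth_coord_dist (G y) b k
      have h' := abs_sub_abs_le_abs_sub ((G y).1 k) (b.1 k)
      have h'' := abs_sub ((G y).1 k) (b.1 k)
      have := neg_abs_le ((G y).1 k - b.1 k)
      linarith [abs_nonneg ((G y).1 k - b.1 k)]
    have h2 : ∀ i, (y i).1 k ≤ (x i).1 k + 1 := by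
      intro i
      have hi : dist (y i) (x i) ≤ dist y x := dist_le_pi_dist y x i
      have h := orth_coord_dist (y i) (x i) k
      have := neg_abs_le ((y i).1 k - (x i).1 k)
      linarith [le_abs_self ((y i).1 k - (x i).1 k)]
    have h3 : ∑ i, (y i).1 k ≤ (∑ i, (x i).1 k) + t := by
      calc ∑ i, (y i).1 k ≤ ∑ i, ((x i).1 k + 1) := Finset.sum_le_sum fun i _ => h2 i
        _ = (∑ i, (x i).1 k) + t := by
            rw [Finset.sum_add_distrib]
            simp [Finset.card_univ]
    have h4 : ∑ i, (x i).1 k ≤ C := (hsum_le_f x k).trans (hC' x hxlt.le)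
    have h5 := hbd y k
    linarith
  refine ⟨⟨?_, ?_⟩, ?_⟩
  · -- lower semicontinuity
    rw [lowerSemicontinuous_iff_isClosed_preimage]
    intro c
    exact hIt_closed c
  · -- compact sublevel sets
    intro c
    obtain ⟨M, hM⟩ := hboxbd c
    exact (box_compact K M).of_isClosed_subset (hIt_closed (c : ℝ≥0∞))
      (fun b hble k => hM b hble k)
  · -- the LDP bounds
    intro B hB
    have hmono : ∀ (S1 S2 : Set (Fin t → Orth K)), S1 ⊆ S2 → ∀ L : ℕ,
        (((L : ℝ)⁻¹ : ℝ) : EReal) * ENNReal.log (P ((A L) ⁻¹' S1)) ≤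
        (((L : ℝ)⁻¹ : ℝ) : EReal) * ENNReal.log (P ((A L) ⁻¹' S2)) := by
      intro S1 S2 hsub L
      apply mul_le_mul_of_nonneg_left
      · exact ENNReal.log_monotone (measure_mono (Set.preimage_mono hsub))
      · exact EReal.coe_nonneg.2 (by positivity)
    have hpre : ∀ (L : ℕ) (S : Set (Orth K)),
        ((fun ω => G (A L ω)) ⁻¹' S) = (A L) ⁻¹' (G ⁻¹' S) := fun L S => rfl
    constructor
    · -- lower bound
      simp only [hpre]
      rw [EReal.neg_le]
      refine ereal_le_coe_iInf _ _ fun b => ?_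
      refine ereal_le_coe_iInf _ _ fun hbB => ?_
      simp only [hIt]
      refine ereal_le_coe_iInf _ _ fun x => ?_
      refine ereal_le_coe_iInf _ _ fun hbx => ?_
      refine ereal_le_coe_of_forall_add _ _ fun ε hε hεtop => ?_
      rcases eq_or_ne (Isharp x) ⊤ with htop | htop
      · rw [htop, top_add, EReal.coe_ennreal_top]; exact le_top
      rw [EReal.neg_le]
      have hVopen : IsOpen {x' : Fin t → Orth K | Isharp x' < Isharp x + ε} :=
        isOpen_lt hIc continuous_const
      have hxV : x ∈ {x' : Fin t → Orth K | Isharp x' < Isharp x + ε} :=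
        ENNReal.lt_add_right htop hε.ne'
      obtain ⟨ε₁, hε₁, hball1⟩ := Metric.isOpen_iff.1 hVopen x hxV
      obtain ⟨ε₂, hε₂, hball2⟩ := Metric.isOpen_iff.1 isOpen_interior b hbB
      obtain ⟨y, hy1, hy2⟩ := (mem_clusterSet_iff G x b).1 hbx (min (ε₁/2) (ε₂/2)) (by positivity)
      obtain ⟨u, hu, hGu, hcont⟩ := hGqc y
      obtain ⟨N1, hN1⟩ := Metric.tendsto_atTop.1 hu (ε₁/2) (by positivity)
      obtain ⟨N2, hN2⟩ := Metric.tendsto_atTop.1 hGu (ε₂/2) (by positivity)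
      have hwx : dist (u (max N1 N2)) x < ε₁ := by
        have ht1 := dist_triangle (u (max N1 N2)) y x
        have ht2 := hN1 (max N1 N2) (le_max_left _ _)
        have ht3 := lt_of_lt_of_le hy1 (min_le_left _ _)
        linarith
      have hGw : dist (G (u (max N1 N2))) b < ε₂ := by
        have ht1 := dist_triangle (G (u (max N1 N2))) (G y) b
        have ht2 := hN2 (max N1 N2) (le_max_right _ _)
        have ht3 := lt_of_lt_of_le hy2 (min_le_right _ _)
        linarith
      have hwV : Isharp (u (max N1 N2)) < Isharp x + ε := hball1 (Metric.mem_ball.mpr hwx)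
      have hnb : G ⁻¹' (Metric.ball b ε₂) ∈ nhds (u (max N1 N2)) :=
        (hcont (max N1 N2)).preimage_mem_nhds
          (Metric.isOpen_ball.mem_nhds (Metric.mem_ball.mpr hGw))
      obtain ⟨O, hOsub, hOopen, hwO⟩ := mem_nhds_iff.1 hnb
      have hOB : O ⊆ G ⁻¹' B := fun z hz => Set.mem_preimage.2 (interior_subset (hball2 (hOsub hz)))
      have hkey := (hldp.2 O hOopen.measurableSet).1
      refine le_trans ?_ (le_trans hkey (liminf_le_liminf (Eventually.of_forall fun L =>
        hmono _ _ hOB L)))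
      rw [EReal.neg_le_neg_iff, EReal.coe_ennreal_le_coe_ennreal_iff, hOopen.interior_eq]
      exact iInf₂_le_of_le (u (max N1 N2)) hwO hwV.le
    · -- upper bound
      simp only [hpre]
      have hkey := (hldp.2 (closure (G ⁻¹' closure B)) isClosed_closure.measurableSet).2
      refine le_trans (limsup_le_limsup (Eventually.of_forall fun L =>
        hmono _ _ (subset_trans (Set.preimage_mono subset_closure) subset_closure) L))
        (le_trans hkey ?_)
      rw [EReal.neg_le_neg_iff, EReal.coe_ennreal_le_coe_ennreal_iff, closure_closure]
      refine le_iInf₂ fun x hx => ?_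
      obtain ⟨u, hu1, hu2⟩ := mem_closure_iff_seq_limit.1 hx
      obtain ⟨M, hM⟩ := Filter.Tendsto.bddAbove_range ((hfc.tendsto x).comp hu2)
      have hGbox : ∀ n, G (u n) ∈ {b : Orth K | ∀ k, b.1 k ≤ M} := by
        intro n k
        exact (hGf (u n) k).trans (hM ⟨n, rfl⟩)
      obtain ⟨b, hbbox, φ, hφ, hGlim⟩ := (box_compact K M).tendsto_subseq hGbox
      have hbB : b ∈ closure B :=
        isClosed_closure.mem_of_tendsto hGlim (Eventually.of_forall fun n => hu1 (φ n))
      have hbcl : b ∈ clusterSet G x := ⟨fun n => u (φ n), hu2.comp hφ.tendsto_atTop, hGlim⟩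
      exact iInf₂_le_of_le b hbB (iInf₂_le_of_le x hbcl le_rfl)
end

section
/- Let K ≥ 1, C^1,…,C^K > 0 and ℛ_s be the simplex rate region; let μ ∈ ℝ₊^K with μ̂ := Σ_k μ^k/C^k < 1, and a ∈ 𝒟^K_μ. Write â_s := Σ_k a^k_s/C^k and â(m, m+t] := Σ_{s=m+1}^{m+t} â_s. Then there exists s* ∈ ℕ such that sup_{t≥1} (â(s*, s*+t] − (t−1)) ≤ 1 (i.e., under the work-conserving max-weight policy the infinite-horizon workload at time −s* lies in ℛ_s); moreover, for every sequence (aⁿ) in 𝒟^K_μ converging to a in the scaled uniform metric there exists n₀ such that sup_{t≥1} (âⁿ(s*, s*+t] − (t−1)) ≤ 1 for all n ≥ n₀. -/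
open Filter Topology MeasureTheory
open scoped ENNReal NNReal

/-- The space 𝒟^K of nonnegative arrival sequences with bounded scaled partial sums;
`f s k` is the work brought into queue `k` at time `-(s+1)` (i.e. the paper's `a^k_{s+1}`). -/
structure DK (K : ℕ) where
  f : ℕ → Fin K → ℝ
  nonneg : ∀ s k, 0 ≤ f s k
  bdd : ∀ k, BddAbove (Set.range fun t : ℕ => (∑ s ∈ Finset.range (t + 1), f s k) / (t + 1))

namespace DK

/-- Embedding of `DK K` into bounded functions via the scaled partial sums
`(t, k) ↦ a^k(0, t+1] / (t+1)`; the induced metric is the scaled uniform metric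
`d(x,y) = sup_{t≥1} max_k |x^k(0,t] − y^k(0,t]| / t`. -/
noncomputable def emb {K : ℕ} (a : DK K) : BoundedContinuousFunction (ℕ × Fin K) ℝ :=
  ⟨⟨fun p => (∑ s ∈ Finset.range (p.1 + 1), a.f s p.2) / (p.1 + 1),
    continuous_of_discreteTopology⟩, by
    classical
    choose M hM using fun k => (a.bdd k).imp (fun M hM => fun t =>
      hM (Set.mem_range_self t))
    refine ⟨∑ k : Fin K, |M k|, fun x y => ?_⟩
    have hb : ∀ p : ℕ × Fin K,
        (∑ s ∈ Finset.range (p.1 + 1), a.f s p.2) / (p.1 + 1) ∈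
          Set.Icc (0 : ℝ) (∑ k : Fin K, |M k|) := by
      intro p
      constructor
      · exact div_nonneg (Finset.sum_nonneg fun s _ => a.nonneg s p.2) (by positivity)
      · refine le_trans (hM p.2 p.1) (le_trans (le_abs_self _) ?_)
        exact Finset.single_le_sum (f := fun k => |M k|) (fun k _ => abs_nonneg _)
          (Finset.mem_univ p.2)
    have hx := hb x; have hy := hb y
    rw [Real.dist_eq, abs_sub_le_iff]
    constructor <;> linarith [hx.1, hx.2, hy.1, hy.2]⟩

theorem emb_injective {K : ℕ} : Function.Injective (emb (K := K)) := by
  intro a b h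
  have hval : ∀ t : ℕ, ∀ k, (∑ s ∈ Finset.range (t + 1), a.f s k) / (t + 1)
      = (∑ s ∈ Finset.range (t + 1), b.f s k) / (t + 1) := by
    intro t k
    exact congrArg (fun F : BoundedContinuousFunction (ℕ × Fin K) ℝ => F (t, k)) h
  have hsum : ∀ t : ℕ, ∀ k, (∑ s ∈ Finset.range t, a.f s k) = ∑ s ∈ Finset.range t, b.f s k := by
    intro t k
    cases t with
    | zero => simp
    | succ t =>
      have := hval t k
      have ht : ((t : ℝ) + 1) ≠ 0 := by positivity
      field_simp at this
      exact this
  have hf : a.f = b.f := by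
    funext s k
    have h1 := hsum (s + 1) k
    have h2 := hsum s k
    rw [Finset.sum_range_succ, Finset.sum_range_succ] at h1
    linarith
  cases a; cases b; simp_all

/-- The scaled uniform metric on 𝒟^K. -/
noncomputable instance {K : ℕ} : MetricSpace (DK K) :=
  MetricSpace.induced emb emb_injective inferInstance

end DK

/-- 𝒟^K_μ : arrival processes with long-run rate `μ`, as a metric subspace of 𝒟^K. -/
abbrev Dmu (K : ℕ) (μ : Fin K → ℝ) :=
  {a : DK K // ∀ k,
    Tendsto (fun t : ℕ => (∑ s ∈ Finset.range t, a.f s k) / t) atTop (nhds (μ k))}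

/-- Per-coordinate partial sums differ by at most `dist x y * m`. -/
lemma DK.abs_partial_sum_sub_le {K : ℕ} (x y : DK K) (m : ℕ) (k : Fin K) :
    |(∑ s ∈ Finset.range m, x.f s k) - ∑ s ∈ Finset.range m, y.f s k| ≤ dist x y * m := by
  cases m with
  | zero => simp
  | succ m =>
    have h := BoundedContinuousFunction.dist_coe_le_dist (f := DK.emb x) (g := DK.emb y) (m, k)
    have hdist : dist (DK.emb x) (DK.emb y) = dist x y := rfl
    rw [hdist, Real.dist_eq] at h
    have hm : (0 : ℝ) < (m : ℝ) + 1 := by positivity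
    have h2 : |((∑ s ∈ Finset.range (m + 1), x.f s k) -
        ∑ s ∈ Finset.range (m + 1), y.f s k) / ((m : ℝ) + 1)| ≤ dist x y := by
      rw [sub_div]; exact h
    rw [abs_div, abs_of_pos hm, div_le_iff₀ hm] at h2
    calc |(∑ s ∈ Finset.range (m + 1), x.f s k) - ∑ s ∈ Finset.range (m + 1), y.f s k|
        ≤ dist x y * ((m : ℝ) + 1) := h2
      _ = dist x y * ((m + 1 : ℕ) : ℝ) := by push_cast; ring

/-- For `μ` strictly inside the simplex rate region and `a ∈ 𝒟^K_μ`,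
there is a finite `s*` with `sup_{t≥1} (â(s*, s*+t] − (t−1)) ≤ 1` (the stationary
workload at time `−s*` lies in `ℛ_s`), and the same bound holds eventually along any
sequence `aⁿ → a` in the scaled uniform metric. -/
theorem stationary_workload_in_region_at_finite_time
    (K : ℕ) (hK : 1 ≤ K) (C : Fin K → ℝ) (hC : ∀ k, 0 < C k)
    (μ : Fin K → ℝ) (hμ0 : ∀ k, 0 ≤ μ k) (hμ : ∑ k, μ k / C k < 1)
    (a : Dmu K μ) :
    ∃ sstar : ℕ,
      (∀ t : ℕ,
        (∑ s ∈ Finset.Ico sstar (sstar + t + 1), ∑ k, a.1.f s k / C k) - t ≤ 1) ∧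
      ∀ aN : ℕ → Dmu K μ, Tendsto aN atTop (nhds a) →
        ∃ n₀ : ℕ, ∀ n, n₀ ≤ n → ∀ t : ℕ,
          (∑ s ∈ Finset.Ico sstar (sstar + t + 1), ∑ k, (aN n).1.f s k / C k) - t ≤ 1 := by
  classical
  set μhat : ℝ := ∑ k, μ k / C k with hμhat
  set ε : ℝ := (1 - μhat) / 2 with hεdef
  have hε : 0 < ε := by simp only [hεdef]; linarith
  have hμε : μhat < 1 - ε := by simp only [hεdef]; linarith
  -- partial sums of total scaled work, for any process
  set B : DK K → ℕ → ℝ := fun x n => ∑ s ∈ Finset.range n, ∑ k, x.f s k / C k with hBdef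
  have hBk : ∀ (x : DK K) n, B x n = ∑ k, (∑ s ∈ Finset.range n, x.f s k) / C k := by
    intro x n
    show (∑ s ∈ Finset.range n, ∑ k, x.f s k / C k) = _
    rw [Finset.sum_comm]
    exact Finset.sum_congr rfl fun k _ => (Finset.sum_div _ _ _).symm
  set S : ℝ := ∑ k : Fin K, 1 / C k with hSdef
  haveI : Nonempty (Fin K) := Fin.pos_iff_nonempty.mp hK
  have hS : 0 < S := Finset.sum_pos (fun k _ => one_div_pos.mpr (hC k)) Finset.univ_nonempty
  -- uniform bound on the difference of total partial sums
  have hBdiff : ∀ (x y : DK K) (m : ℕ), |B x m - B y m| ≤ dist x y * m * S := by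
    intro x y m
    rw [hBk, hBk, ← Finset.sum_sub_distrib]
    calc |∑ k, ((∑ s ∈ Finset.range m, x.f s k) / C k - (∑ s ∈ Finset.range m, y.f s k) / C k)|
        ≤ ∑ k, |(∑ s ∈ Finset.range m, x.f s k) / C k - (∑ s ∈ Finset.range m, y.f s k) / C k| :=
          Finset.abs_sum_le_sum_abs _ _
      _ ≤ ∑ k : Fin K, dist x y * m * (1 / C k) := by
          refine Finset.sum_le_sum fun k _ => ?_
          rw [← sub_div, abs_div, abs_of_pos (hC k), div_eq_mul_inv, one_div]
          exact mul_le_mul_of_nonneg_right (DK.abs_partial_sum_sub_le x y m k)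
            (inv_nonneg.mpr (hC k).le)
      _ = dist x y * m * S := by rw [hSdef, ← Finset.mul_sum]
  -- the scaled partial sums of `a` tend to `μhat < 1`
  have htend : Tendsto (fun n : ℕ => B a.1 n / n) atTop (nhds μhat) := by
    have h1 : ∀ n : ℕ, B a.1 n / n = ∑ k, ((∑ s ∈ Finset.range n, a.1.f s k) / n) / C k := by
      intro n
      rw [hBk, Finset.sum_div]
      exact Finset.sum_congr rfl fun k _ => by rw [div_div, div_div, mul_comm]
    simp only [h1, hμhat]
    exact tendsto_finset_sum _ fun k _ => (a.2 k).div_const (C k)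
  have hev : ∀ᶠ n : ℕ in atTop, B a.1 n / n < 1 - ε := htend.eventually_lt_const hμε
  obtain ⟨N, hN⟩ := Filter.eventually_atTop.mp hev
  have hlate : ∀ n : ℕ, N + 1 ≤ n → B a.1 n ≤ (1 - ε) * n := by
    intro n hn
    have hn0 : (0 : ℝ) < n := by exact_mod_cast Nat.lt_of_lt_of_le (Nat.succ_pos N) hn
    have := hN n (by omega)
    rw [div_lt_iff₀ hn0] at this
    linarith
  -- argmax of `n ↦ B a n - (1-ε) n`
  obtain ⟨sstar, hsmem, hsmax⟩ := Finset.exists_max_image (Finset.range (N + 2))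
    (fun n => B a.1 n - (1 - ε) * n) ⟨0, by simp⟩
  have hkey : ∀ n : ℕ, B a.1 n - (1 - ε) * n ≤ B a.1 sstar - (1 - ε) * sstar := by
    intro n
    by_cases h : n < N + 2
    · exact hsmax n (Finset.mem_range.mpr h)
    · have h0 := hsmax 0 (by simp)
      have : B a.1 n ≤ (1 - ε) * n := hlate n (by omega)
      simp only [hBdef, Finset.range_zero, Finset.sum_empty, Nat.cast_zero, mul_zero,
        sub_zero] at h0 ⊢
      linarith
  have hmain : ∀ t : ℕ, B a.1 (sstar + t + 1) - B a.1 sstar ≤ (1 - ε) * (t + 1) := by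
    intro t
    have := hkey (sstar + t + 1)
    push_cast at this ⊢
    linarith
  have hIco : ∀ (x : DK K) (t : ℕ),
      (∑ s ∈ Finset.Ico sstar (sstar + t + 1), ∑ k, x.f s k / C k)
        = B x (sstar + t + 1) - B x sstar := by
    intro x t
    exact Finset.sum_Ico_eq_sub _ (by omega)
  refine ⟨sstar, fun t => ?_, ?_⟩
  · rw [hIco]
    have h1 := hmain t
    have ht : (0 : ℝ) ≤ ε * ((t : ℝ) + 1) :=
      mul_nonneg hε.le (by positivity)
    linarith
  · intro aN hconv
    set δ : ℝ := ε / (S * (2 * sstar + 1)) with hδdef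
    have hδS : 0 < S * (2 * (sstar : ℝ) + 1) := by positivity
    have hδ : 0 < δ := by positivity
    have hδε : δ * (S * (2 * (sstar : ℝ) + 1)) = ε := div_mul_cancel₀ _ (ne_of_gt hδS)
    obtain ⟨n₀, hn₀⟩ := (Metric.tendsto_atTop.mp hconv) δ hδ
    refine ⟨n₀, fun n hn t => ?_⟩
    rw [hIco]
    have hd : dist (aN n) a < δ := hn₀ n hn
    have hdeq : dist (aN n) a = dist (aN n).1 a.1 := Subtype.dist_eq _ _
    have hd0 : 0 ≤ dist (aN n) a := dist_nonneg
    set d : ℝ := dist (aN n) a with hddef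
    have h1 : |B (aN n).1 (sstar + t + 1) - B a.1 (sstar + t + 1)|
        ≤ d * (sstar + t + 1) * S := by
      have := hBdiff (aN n).1 a.1 (sstar + t + 1)
      rw [← hdeq] at this
      convert this using 3
      push_cast; ring
    have h2 : |B (aN n).1 sstar - B a.1 sstar| ≤ d * sstar * S := by
      have := hBdiff (aN n).1 a.1 sstar
      rw [← hdeq] at this
      exact this
    have h1' := (abs_le.mp h1).2
    have h2' := (abs_le.mp h2).1
    have hm := hmain t
    -- combine
    have hts : (0 : ℝ) ≤ (t : ℝ) := Nat.cast_nonneg t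
    have hss : (0 : ℝ) ≤ (sstar : ℝ) := Nat.cast_nonneg sstar
    have hpert : d * ((sstar : ℝ) + t + 1) * S + d * sstar * S ≤ ε * (t + 1) := by
      have e1 : d * ((sstar : ℝ) + t + 1) * S + d * sstar * S
          = d * S * (2 * sstar + t + 1) := by ring
      rw [e1]
      have e2 : d * S * (2 * (sstar : ℝ) + t + 1) ≤ δ * S * (2 * sstar + t + 1) := by
        rw [mul_assoc, mul_assoc]
        exact mul_le_mul_of_nonneg_right hd.le (by positivity)
      refine e2.trans ?_
      have e3 : δ * S * (2 * (sstar : ℝ) + t + 1) ≤ δ * S * ((2 * sstar + 1) * (t + 1)) := by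
        refine mul_le_mul_of_nonneg_left ?_ (by positivity)
        nlinarith
      refine e3.trans ?_
      have : δ * S * ((2 * (sstar : ℝ) + 1) * (t + 1)) = ε * (t + 1) := by
        rw [← hδε]; ring
      linarith
    linarith
end

section
/- (Bounds on the finite-horizon rate function for K = 2.) Let K = 2 with C^1 = C^2 = 1, ℛ_s = {r ∈ ℝ₊² : r¹ + r² ≤ 1}, and H^wc a quasi-continuous work-conserving max-weight scheduler for ℛ_s. Let Λ : ℝ₊ → [0,∞) be convex, and for b ∈ ℝ₊² and t ∈ ℕ define I_t(b) := min_{1 ≤ u ≤ t} inf_{x ∈ 𝔸(u,b)} Σ_{i=1}^u Σ_{k=1}^2 Λ(x_i^k) (with inf over the empty set equal to +∞), where 𝔸(1,b) := {b}. Then: (i) I_t(b) ≥ min_{1 ≤ u ≤ t} u·Σ_{k=1}^2 Λ( (Proj_{𝕏(u,b)}(0))^k / u ), where 𝕏(u,b) := {b + v : v ∈ ℝ₊², v¹ + v² = u−1} and Proj_{𝕏(u,b)}(0) is the Euclidean projection of the origin onto the closed convex set 𝕏(u,b); and (ii) if b ∉ [0,1)², then I_t(b) ≤ min_{1 ≤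 u ≤ t} u·Σ_{k=1}^2 Λ( (b^k + (u−1)h^k)/u ), where h := (1,0) if b¹ ≥ b² and h := (0,1) otherwise. -/
open Filter Topology MeasureTheory
open scoped ENNReal NNReal

/-- `H` is a work-conserving max-weight scheduler for rate region `R` with capacities `C`:
on `Π_k [0, C^k)` it is the (Euclidean) metric projection onto `R`, elsewhere it is a
max-weight choice. -/
def IsWCScheduler {K : ℕ} (R : Set (Fin K → ℝ)) (C : Fin K → ℝ) (H : Orth K → Orth K) : Prop :=
  ∀ w : Orth K,
    ((∀ k, w.1 k < C k) →
      ((H w).1 ∈ R ∧ ∀ r ∈ R, ∑ k, (w.1 k - (H w).1 k) ^ 2 ≤ ∑ k, (w.1 k - r k) ^ 2)) ∧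
    ((¬ ∀ k, w.1 k < C k) →
      ((H w).1 ∈ R ∧ ∀ r ∈ R, ip r w.1 ≤ ip (H w).1 w.1))

/-- The constraint set `𝔸(u, b)`: arrival paths of length `u` whose cluster set at the
horizon-`u` workload map contains `b` and whose intermediate workloads stay outside
`ℛ_s`. -/
def AA {K : ℕ} (Hwc : Orth K → Orth K) (C : Fin K → ℝ) (u : ℕ) (b : Orth K) :
    Set (Fin u → Orth K) :=
  {x | b ∈ clusterSet (fun y : Fin u → Orth K => GwcL Hwc (List.ofFn y)) x ∧
    ∀ v ∈ Finset.Icc 1 (u - 1), (GwcL Hwc ((List.ofFn x).drop v)).1 ∉ simplexRegion C}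

/-- `𝔸(u, b)` including the convention `𝔸(1, b) = {b}`. -/
def AAfull (Hwc : Orth 2 → Orth 2) (u : ℕ) (b : Orth 2) : Set (Fin u → Orth 2) :=
  if u = 1 then {x | ∀ i, x i = b} else AA Hwc (fun _ => 1) u b

/-- The finite-horizon rate function
`I_t(b) = min_{1≤u≤t} inf_{x ∈ 𝔸(u,b)} ∑_{i=1}^u ∑_{k=1}^2 Λ(x_i^k)`
(infimum over the empty set being `+∞`). -/
noncomputable def Irate (Hwc : Orth 2 → Orth 2) (Λ : ℝ → ℝ) (t : ℕ) (b : Orth 2) : ℝ≥0∞ :=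
  ⨅ u ∈ Finset.Icc 1 t, ⨅ x ∈ AAfull Hwc u b,
    ENNReal.ofReal (∑ i, (Λ ((x i).1 0) + Λ ((x i).1 1)))

/-- The target set `𝕏(u, b) = {b + v : v ∈ ℝ₊², v¹ + v² = u − 1}`. -/
def XX (u : ℕ) (b : Orth 2) : Set (Fin 2 → ℝ) :=
  {p | ∃ v : Fin 2 → ℝ, (∀ k, 0 ≤ v k) ∧ v 0 + v 1 = (u : ℝ) - 1 ∧
    p = fun k => b.1 k + v k}

/-- The direction `h`: `(1,0)` if `b¹ ≥ b²` and `(0,1)` otherwise. -/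
noncomputable def hvec (b : Orth 2) : Fin 2 → ℝ := if b.1 1 ≤ b.1 0 then ![1, 0] else ![0, 1]


/-! ### Auxiliary lemmas -/

lemma mem_simplexRegion_iff (r : Fin 2 → ℝ) :
    r ∈ simplexRegion (fun _ : Fin 2 => 1) ↔ (∀ k, 0 ≤ r k) ∧ r 0 + r 1 ≤ 1 := by
  simp [simplexRegion, Fin.sum_univ_two]

section Aux
variable {Hwc : Orth 2 → Orth 2}

lemma maxweight_eval
    (hwc : IsWCScheduler (simplexRegion (fun _ : Fin 2 => 1)) (fun _ => 1) Hwc)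
    (w : Orth 2) (i : Fin 2) (hi : 1 ≤ w.1 i) (hle : w.1 (i+1) ≤ w.1 i) :
    (Hwc w).1 0 + (Hwc w).1 1 = 1 ∧ (Hwc w).1 0 ≤ w.1 0 ∧ (Hwc w).1 1 ≤ w.1 1 ∧
    (w.1 (i+1) < w.1 i → (Hwc w).1 i = 1 ∧ (Hwc w).1 (i+1) = 0) := by
  have hno : ¬ ∀ k, w.1 k < (fun _ : Fin 2 => (1:ℝ)) k := fun h => absurd (h i) (not_lt.2 hi)
  obtain ⟨hmem, hmax⟩ := (hwc w).2 hno
  rw [mem_simplexRegion_iff] at hmem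
  obtain ⟨hh0, hhsum⟩ := hmem
  have h0 := hh0 0; have h1 := hh0 1
  have w0 := w.2 0; have w1 := w.2 1
  fin_cases i
  · replace hi : 1 ≤ w.1 0 := hi
    replace hle : w.1 1 ≤ w.1 0 := hle
    have hkey : ip ![1,0] w.1 ≤ ip (Hwc w).1 w.1 := by
      apply hmax; rw [mem_simplexRegion_iff]
      exact ⟨fun k => by fin_cases k <;> norm_num, by norm_num⟩
    simp only [ip, Fin.sum_univ_two, Matrix.cons_val_zero, Matrix.cons_val_one,
      Matrix.head_cons, one_mul, zero_mul, add_zero] at hkey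
    have hzle : w.1 (0+1) ≤ w.1 0 := hle
    have hone : (Hwc w).1 0 + (Hwc w).1 1 = 1 := by nlinarith
    have hz : (Hwc w).1 1 * (w.1 0 - w.1 1) = 0 := by nlinarith
    refine ⟨hone, by nlinarith, by nlinarith, fun hlt' => ?_⟩
    replace hlt : w.1 1 < w.1 0 := hlt'
    have : (Hwc w).1 1 = 0 := by
      by_contra hc
      have := lt_of_le_of_ne (h1) (Ne.symm hc)
      nlinarith
    exact ⟨by simpa [this] using hone, this⟩
  · replace hi : 1 ≤ w.1 1 := hi
    replace hle : w.1 0 ≤ w.1 1 := hle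
    have hkey : ip ![0,1] w.1 ≤ ip (Hwc w).1 w.1 := by
      apply hmax; rw [mem_simplexRegion_iff]
      exact ⟨fun k => by fin_cases k <;> norm_num, by norm_num⟩
    simp only [ip, Fin.sum_univ_two, Matrix.cons_val_zero, Matrix.cons_val_one,
      Matrix.head_cons, one_mul, zero_mul, zero_add] at hkey
    have hone : (Hwc w).1 0 + (Hwc w).1 1 = 1 := by nlinarith
    have hz : (Hwc w).1 0 * (w.1 1 - w.1 0) = 0 := by nlinarith
    refine ⟨hone, by nlinarith, by nlinarith, fun hlt' => ?_⟩
    replace hlt : w.1 0 < w.1 1 := hlt'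
    have : (Hwc w).1 0 = 0 := by
      by_contra hc
      have := lt_of_le_of_ne (h0) (Ne.symm hc)
      nlinarith
    exact ⟨by simpa [this] using hone, this⟩

set_option maxHeartbeats 1000000 in
lemma service (hwc : IsWCScheduler (simplexRegion (fun _ : Fin 2 => 1)) (fun _ => 1) Hwc)
    (w : Orth 2) :
    (_root_.posPart (w.1 - (Hwc w).1)).1 0 + (_root_.posPart (w.1 - (Hwc w).1)).1 1
      = max (w.1 0 + w.1 1 - 1) 0 := by
  have w0 := w.2 0; have w1 := w.2 1
  simp only [_root_.posPart, Pi.sub_apply]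
  by_cases hlt : ∀ k, w.1 k < (fun _ : Fin 2 => (1:ℝ)) k
  · obtain ⟨hmem, hmin⟩ := (hwc w).1 hlt
    rw [mem_simplexRegion_iff] at hmem
    obtain ⟨hh0, hhsum⟩ := hmem
    have l0 := hlt 0; have l1 := hlt 1
    simp only at l0 l1
    rcases le_total (w.1 0 + w.1 1) 1 with hs | hs
    · have hww : ∑ k, (w.1 k - (Hwc w).1 k) ^ 2 ≤ ∑ k, (w.1 k - w.1 k) ^ 2 := by
        apply hmin; rw [mem_simplexRegion_iff]; exact ⟨w.2, hs⟩
      simp only [Fin.sum_univ_two, sub_self] at hww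
      have e0 : w.1 0 - (Hwc w).1 0 = 0 := by
        nlinarith [sq_nonneg (w.1 0 - (Hwc w).1 0), sq_nonneg (w.1 1 - (Hwc w).1 1)]
      have e1 : w.1 1 - (Hwc w).1 1 = 0 := by
        nlinarith [sq_nonneg (w.1 0 - (Hwc w).1 0), sq_nonneg (w.1 1 - (Hwc w).1 1)]
      rw [e0, e1]
      simp [max_eq_right (by linarith : w.1 0 + w.1 1 - 1 ≤ (0:ℝ))]
    · set δ := (w.1 0 + w.1 1 - 1) / 2 with hδ
      have hδ0 : 0 ≤ δ := by simp [hδ]; linarith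
      have hr : (![(w.1 0 - w.1 1 + 1)/2, (w.1 1 - w.1 0 + 1)/2] : Fin 2 → ℝ) ∈
          simplexRegion (fun _ : Fin 2 => 1) := by
        rw [mem_simplexRegion_iff]
        refine ⟨fun k => by fin_cases k <;> · simp; linarith, by simp; ring_nf; simp⟩
      have hww := hmin _ hr
      simp only [Fin.sum_univ_two, Matrix.cons_val_zero, Matrix.cons_val_one,
        Matrix.head_cons] at hww
      have hd0 : w.1 0 - (Hwc w).1 0 = δ := by
        nlinarith [sq_nonneg (w.1 0 - (Hwc w).1 0 - δ), sq_nonneg (w.1 1 - (Hwc w).1 1 - δ),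
          hh0 0, hh0 1, hhsum]
      have hd1 : w.1 1 - (Hwc w).1 1 = δ := by
        nlinarith [sq_nonneg (w.1 0 - (Hwc w).1 0 - δ), sq_nonneg (w.1 1 - (Hwc w).1 1 - δ),
          hh0 0, hh0 1, hhsum]
      rw [hd0, hd1, max_eq_left hδ0, max_eq_left (by linarith)]
      rw [hδ]; ring
  · have hge : 1 ≤ w.1 0 ∨ 1 ≤ w.1 1 := by
      by_contra hc; push_neg at hc; exact hlt (fun k => by fin_cases k <;> simp [hc.1, hc.2])
    rcases le_total (w.1 1) (w.1 0) with hcmp | hcmp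
    · have hi : 1 ≤ w.1 0 := by rcases hge with h | h; exact h; linarith
      obtain ⟨hone, hle0, hle1, _⟩ := maxweight_eval hwc w 0 hi (by simpa using hcmp)
      rw [max_eq_left (by linarith), max_eq_left (by linarith), max_eq_left (by linarith)]
      ring_nf; linarith [hone]
    · have hi : 1 ≤ w.1 1 := by rcases hge with h | h; linarith; exact h
      obtain ⟨hone, hle0, hle1, _⟩ := maxweight_eval hwc w 1 hi (by simpa using hcmp)
      rw [max_eq_left (by linarith), max_eq_left (by linarith), max_eq_left (by linarith)]
      ring_nf; linarith [hone]
end Aux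

/-- Auxiliary scalar recursion computing the total workload. -/
def SL : List ℝ → ℝ
  | [] => 0
  | s :: r => s + max (SL r - 1) 0

lemma contSL : ∀ u : ℕ, Continuous fun g : Fin u → ℝ => SL (List.ofFn g) := by
  intro u
  induction u with
  | zero => simp [SL]; exact continuous_const
  | succ n ih =>
      have : (fun g : Fin (n+1) → ℝ => SL (List.ofFn g))
          = fun g : Fin (n+1) → ℝ =>
              g 0 + max (SL (List.ofFn fun i : Fin n => g i.succ) - 1) 0 := by
        funext g; rw [List.ofFn_succ]; rfl
      rw [this]
      exact (continuous_apply 0).add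
        (((ih.comp (continuous_pi fun i => continuous_apply _)).sub continuous_const).max
          continuous_const)

section Aux2
variable {Hwc : Orth 2 → Orth 2}

lemma sig_eq_SL (hwc : IsWCScheduler (simplexRegion (fun _ : Fin 2 => 1)) (fun _ => 1) Hwc) :
    ∀ l : List (Orth 2),
      (GwcL Hwc l).1 0 + (GwcL Hwc l).1 1 = SL (l.map (fun a => a.1 0 + a.1 1))
  | [] => by simp [GwcL, SL]
  | [a] => by simp [GwcL, SL]
  | a :: b :: rest => by
      have ih := sig_eq_SL hwc (b :: rest)
      have hs := service hwc (GwcL Hwc (b :: rest))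
      show (addO a _).1 0 + (addO a _).1 1 = _
      simp only [addO]
      have : SL ((a :: b :: rest).map (fun a => a.1 0 + a.1 1))
          = (a.1 0 + a.1 1) + max (SL ((b :: rest).map (fun a => a.1 0 + a.1 1)) - 1) 0 := rfl
      rw [this, ← ih]
      have := hs
      simp only [_root_.posPart] at this ⊢
      linarith [this]

lemma comp_le : ∀ l : List (Orth 2), ∀ k,
    (GwcL Hwc l).1 k ≤ (l.map (fun a => a.1 k)).sum
  | [] => by intro k; simp [GwcL]
  | [a] => by intro k; simp [GwcL]
  | a :: b :: rest => by
      intro k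
      have ih := comp_le (b :: rest) k
      show (addO a _).1 k ≤ _
      simp only [addO, _root_.posPart, List.map_cons, List.sum_cons, Pi.sub_apply]
      have hH := (Hwc (GwcL Hwc (b :: rest))).2 k
      have hG := (GwcL Hwc (b :: rest)).2 k
      have : max ((GwcL Hwc (b :: rest)).1 k - (Hwc (GwcL Hwc (b :: rest))).1 k) 0
          ≤ (GwcL Hwc (b :: rest)).1 k := max_le (by linarith) hG
      simp only [List.map_cons, List.sum_cons] at ih ⊢
      linarith [this, ih]

lemma sig_unroll (hwc : IsWCScheduler (simplexRegion (fun _ : Fin 2 => 1)) (fun _ => 1) Hwc) :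
    ∀ l : List (Orth 2), l ≠ [] →
      (∀ v ∈ Finset.Icc 1 (l.length - 1),
        1 < (GwcL Hwc (l.drop v)).1 0 + (GwcL Hwc (l.drop v)).1 1) →
      (GwcL Hwc l).1 0 + (GwcL Hwc l).1 1
        = (l.map (fun a => a.1 0 + a.1 1)).sum - ((l.length : ℝ) - 1)
  | [], h, _ => absurd rfl h
  | [a], _, _ => by simp [GwcL]
  | a :: b :: rest, _, hcond => by
      have hlen : (a :: b :: rest).length = rest.length + 2 := by simp
      have h1 : 1 < (GwcL Hwc (b :: rest)).1 0 + (GwcL Hwc (b :: rest)).1 1 := by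
        have := hcond 1 (by simp [hlen])
        simpa using this
      have ih := sig_unroll hwc (b :: rest) (by simp) (by
        intro v hv
        rw [Finset.mem_Icc] at hv
        have := hcond (v + 1)
          (by rw [Finset.mem_Icc]; constructor <;> [omega; (simp at hv ⊢; omega)])
        simpa [List.drop_succ_cons] using this)
      have hs := service hwc (GwcL Hwc (b :: rest))
      show (addO a _).1 0 + (addO a _).1 1 = _
      simp only [addO, _root_.posPart]
      rw [max_eq_left
        (by linarith : (0:ℝ) ≤ (GwcL Hwc (b::rest)).1 0 + (GwcL Hwc (b::rest)).1 1 - 1)] at hs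
      simp only [_root_.posPart] at hs
      simp only [List.map_cons, List.sum_cons]
      have := ih
      push_cast [hlen]
      push_cast [List.length_cons] at this
      simp only [List.map_cons, List.sum_cons] at this ⊢
      linarith [hs, this]
end Aux2

lemma majorize_aux {Λ : ℝ → ℝ} (hΛ : ConvexOn ℝ (Set.Ici 0) Λ)
    (p0 p1 q0 q1 : ℝ) (hq0 : 0 ≤ q0) (hq1 : 0 ≤ q1) (hqlt : q0 < q1)
    (hsum : p0 + p1 = q0 + q1) (hd : (p0 - p1) ^ 2 ≤ (q0 - q1) ^ 2) :
    Λ p0 + Λ p1 ≤ Λ q0 + Λ q1 := by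
  have habs : |p0 - p1| ≤ q1 - q0 := by
    rw [abs_le]; constructor <;> nlinarith [abs_nonneg (p0 - p1), sq_abs (p0 - p1)]
  have h1 : q0 ≤ p0 := by rw [abs_le] at habs; linarith [habs.1, habs.2]
  have h2 : p0 ≤ q1 := by rw [abs_le] at habs; linarith [habs.1, habs.2]
  set s : ℝ := (q1 - p0) / (q1 - q0) with hs
  have hden : 0 < q1 - q0 := by linarith
  have hs0 : 0 ≤ s := div_nonneg (by linarith) (by linarith)
  have hs1 : s ≤ 1 := by rw [div_le_one hden]; linarith
  have hp0 : p0 = s * q0 + (1 - s) * q1 := by rw [hs]; field_simp; ring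
  have hp1 : p1 = (1 - s) * q0 + s * q1 := by
    have : p1 = q0 + q1 - p0 := by linarith
    rw [this, hp0]; ring
  have c0 : Λ p0 ≤ s * Λ q0 + (1 - s) * Λ q1 := by
    have := hΛ.2 (Set.mem_Ici.2 hq0) (Set.mem_Ici.2 hq1) hs0 (by linarith : (0:ℝ) ≤ 1 - s)
      (by ring)
    simpa [smul_eq_mul, ← hp0] using this
  have c1 : Λ p1 ≤ (1 - s) * Λ q0 + s * Λ q1 := by
    have := hΛ.2 (Set.mem_Ici.2 hq0) (Set.mem_Ici.2 hq1) (by linarith : (0:ℝ) ≤ 1 - s) hs0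
      (by ring)
    simpa [smul_eq_mul, ← hp1] using this
  nlinarith [c0, c1]

lemma majorize {Λ : ℝ → ℝ} (hΛ : ConvexOn ℝ (Set.Ici 0) Λ)
    (p0 p1 q0 q1 : ℝ) (hq0 : 0 ≤ q0) (hq1 : 0 ≤ q1)
    (hsum : p0 + p1 = q0 + q1) (hsq : p0 ^ 2 + p1 ^ 2 ≤ q0 ^ 2 + q1 ^ 2) :
    Λ p0 + Λ p1 ≤ Λ q0 + Λ q1 := by
  have hd : (p0 - p1) ^ 2 ≤ (q0 - q1) ^ 2 := by nlinarith
  rcases lt_trichotomy q0 q1 with h | h | h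
  · exact majorize_aux hΛ p0 p1 q0 q1 hq0 hq1 h hsum hd
  · have h0 : p0 = q0 := by nlinarith
    have h1 : p1 = q1 := by nlinarith
    rw [h0, h1]
  · have := majorize_aux hΛ p1 p0 q1 q0 hq1 hq0 h (by linarith) (by nlinarith)
    linarith

section Aux3
variable {Hwc : Orth 2 → Orth 2}

lemma fin2_other (i : Fin 2) : i + 1 ≠ i := by fin_cases i <;> decide

lemma fin2_cases (i k : Fin 2) : k = i ∨ k = i + 1 := by fin_cases i <;> fin_cases k <;> simp

lemma fin2_sum (i : Fin 2) (g : Fin 2 → ℝ) : g 0 + g 1 = g i + g (i + 1) := by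
  fin_cases i <;> simp <;> ring

lemma constG (hwc : IsWCScheduler (simplexRegion (fun _ : Fin 2 => 1)) (fun _ => 1) Hwc)
    (a : Orth 2) (i : Fin 2) (hai : 1 ≤ a.1 i) :
    ∀ n : ℕ, 1 ≤ n →
      (∀ m : ℕ, 1 ≤ m → m < n → 0 < (m : ℝ) * (a.1 i - a.1 (i+1) - 1) + 1) →
      (GwcL Hwc (List.replicate n a)).1 i = n * a.1 i - ((n : ℝ) - 1) ∧
      (GwcL Hwc (List.replicate n a)).1 (i+1) = n * a.1 (i+1) := by
  intro n
  induction n with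
  | zero => omega
  | succ m ih =>
      intro _ hcond
      rcases Nat.eq_or_lt_of_le (Nat.one_le_iff_ne_zero.2 (Nat.succ_ne_zero m)) with h1 | h1
      · have hm0 : m = 0 := by omega
        subst hm0
        simp [GwcL]
      · have hm : 1 ≤ m := by omega
        obtain ⟨e1, e2⟩ := ih hm (fun k hk1 hk2 => hcond k hk1 (by omega))
        have ha1 := a.2 (i+1)
        have hwi : 1 ≤ (GwcL Hwc (List.replicate m a)).1 i := by
          rw [e1]; have : (1:ℝ) ≤ (m:ℝ) := by exact_mod_cast hm
          nlinarith
        have hlt : (GwcL Hwc (List.replicate m a)).1 (i+1)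
            < (GwcL Hwc (List.replicate m a)).1 i := by
          rw [e1, e2]
          have := hcond m hm (by omega)
          nlinarith
        obtain ⟨_, _, _, hstep⟩ := maxweight_eval hwc _ i hwi (le_of_lt hlt)
        obtain ⟨hHi, hHi1⟩ := hstep hlt
        have hrep : List.replicate (m+1) a = a :: List.replicate m a := rfl
        have hrep2 : List.replicate m a = a :: List.replicate (m-1) a := by
          conv_lhs => rw [show m = (m-1) + 1 by omega, List.replicate_succ]
        have hG : GwcL Hwc (List.replicate (m+1) a)
            = addO a (_root_.posPart ((GwcL Hwc (List.replicate m a)).1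
                - (Hwc (GwcL Hwc (List.replicate m a))).1)) := by
          rw [hrep, hrep2]
          rfl
        rw [hG]
        simp only [addO, _root_.posPart, Pi.sub_apply]
        rw [e1, e2, hHi, hHi1]
        push_cast
        constructor
        · rw [max_eq_left (by linarith)]; ring
        · rw [max_eq_left (by nlinarith)]; ring

lemma constMem (hwc : IsWCScheduler (simplexRegion (fun _ : Fin 2 => 1)) (fun _ => 1) Hwc)
    (u : ℕ) (hu : 2 ≤ u) (b : Orth 2) (i : Fin 2)
    (hbi : 1 ≤ b.1 i) (hble : b.1 (i+1) ≤ b.1 i) (hbsum : 1 < b.1 0 + b.1 1)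
    (a : Orth 2) (ha : ∀ k, a.1 k = (b.1 k + ((u:ℝ) - 1) * (if k = i then 1 else 0)) / u) :
    (fun _ : Fin u => a) ∈ AA Hwc (fun _ => 1) u b := by
  have hu0 : (0:ℝ) < (u:ℝ) := by positivity
  have hu1 : (1:ℝ) ≤ (u:ℝ) := by exact_mod_cast (by omega : 1 ≤ u)
  have hai : a.1 i = (b.1 i + ((u:ℝ) - 1)) / u := by rw [ha i]; simp
  have hai1 : a.1 (i+1) = b.1 (i+1) / u := by rw [ha (i+1)]; simp [fin2_other i]
  have haige : 1 ≤ a.1 i := by rw [hai]; rw [le_div_iff₀ hu0]; linarith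
  have hcond : ∀ m : ℕ, 1 ≤ m → m < u → 0 < (m : ℝ) * (a.1 i - a.1 (i+1) - 1) + 1 := by
    intro m hm1 hm2
    have hmu : (m:ℝ) ≤ (u:ℝ) - 1 := by
      have : (m:ℝ) + 1 ≤ (u:ℝ) := by exact_mod_cast hm2
      linarith
    have hm0 : (0:ℝ) ≤ (m:ℝ) := by positivity
    have hd : 0 ≤ b.1 i - b.1 (i+1) := by linarith
    have key : 0 < (m:ℝ) * ((b.1 i - b.1 (i+1) - 1)) + (u:ℝ) := by nlinarith
    have hform : a.1 i - a.1 (i+1) - 1 = (b.1 i - b.1 (i+1) - 1) / u := by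
      rw [hai, hai1]; field_simp; ring
    rw [hform]
    calc (0:ℝ) < ((m:ℝ) * (b.1 i - b.1 (i+1) - 1) + u) / u := div_pos key hu0
      _ = (m:ℝ) * ((b.1 i - b.1 (i+1) - 1) / u) + 1 := by field_simp
  have hofn : List.ofFn (fun _ : Fin u => a) = List.replicate u a := List.ofFn_const u a
  constructor
  · refine ⟨fun _ => (fun _ : Fin u => a), tendsto_const_nhds, ?_⟩
    have hGb : GwcL Hwc (List.ofFn (fun _ : Fin u => a)) = b := by
      rw [hofn]
      obtain ⟨e1, e2⟩ := constG hwc a i haige u (by omega) (fun m hm1 hm2 => hcond m hm1 hm2)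
      apply Subtype.ext
      funext k
      rcases fin2_cases i k with hk | hk
      · rw [hk, e1, hai]; field_simp; ring
      · rw [hk, e2, hai1]; field_simp
    show Tendsto (fun _ : ℕ => GwcL Hwc (List.ofFn (fun _ : Fin u => a))) atTop (nhds b)
    rw [hGb]
    exact tendsto_const_nhds
  · intro v hv
    rw [Finset.mem_Icc] at hv
    rw [hofn, List.drop_replicate]
    set n := u - v with hn
    have hn1 : 1 ≤ n := by omega
    have hnu : n ≤ u - 1 := by omega
    obtain ⟨e1, e2⟩ := constG hwc a i haige n hn1 (fun m hm1 hm2 => hcond m hm1 (by omega))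
    rw [mem_simplexRegion_iff]
    rintro ⟨-, hsum⟩
    have hsum2 : (GwcL Hwc (List.replicate n a)).1 0
        + (GwcL Hwc (List.replicate n a)).1 1 ≤ 1 := by simpa using hsum
    rw [fin2_sum i, e1, e2] at hsum2
    have hsig : 1 < a.1 i + a.1 (i+1) := by
      rw [hai, hai1]
      rw [← add_div, lt_div_iff₀ hu0]
      have := fin2_sum i b.1
      linarith
    have hnn : (1:ℝ) ≤ (n:ℝ) := by exact_mod_cast hn1
    nlinarith
end Aux3


lemma jensen_sum {Λ : ℝ → ℝ} (hΛ : ConvexOn ℝ (Set.Ici 0) Λ) (u : ℕ) (hu : 1 ≤ u)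
    (g : Fin u → ℝ) (hg : ∀ i, 0 ≤ g i) :
    (u:ℝ) * Λ ((∑ i, g i) / u) ≤ ∑ i, Λ (g i) := by
  have huR : (0:ℝ) < u := by exact_mod_cast hu
  have h₁ : ∑ _i : Fin u, ((u:ℝ))⁻¹ = 1 := by
    rw [Finset.sum_const, Finset.card_univ, Fintype.card_fin, nsmul_eq_mul]
    field_simp
  have hmain := hΛ.map_sum_le (fun (i : Fin u) _ => by positivity) h₁
    (fun i _ => Set.mem_Ici.2 (hg i))
  have e1 : (∑ i, ((u:ℝ))⁻¹ * g i) = (∑ i, g i) / u := by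
    rw [← Finset.mul_sum, div_eq_inv_mul]
  have e2 : ∑ i, ((u:ℝ))⁻¹ * Λ (g i) = (∑ i, Λ (g i)) / u := by
    rw [← Finset.mul_sum, div_eq_inv_mul]
  simp only [smul_eq_mul] at hmain
  rw [e1, e2] at hmain
  calc (u:ℝ) * Λ ((∑ i, g i)/u) ≤ (u:ℝ) * ((∑ i, Λ (g i))/u) :=
        mul_le_mul_of_nonneg_left hmain (le_of_lt huR)
    _ = ∑ i, Λ (g i) := by field_simp

lemma sum_mem_XX {Hwc : Orth 2 → Orth 2}
    (hwc : IsWCScheduler (simplexRegion (fun _ : Fin 2 => 1)) (fun _ => 1) Hwc)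
    (u : ℕ) (hu : 2 ≤ u) (b : Orth 2) (x : Fin u → Orth 2)
    (hx : x ∈ AA Hwc (fun _ => 1) u b) :
    (fun k => ∑ i, (x i).1 k) ∈ XX u b := by
  obtain ⟨⟨y, hy1, hy2⟩, hint⟩ := hx
  have hcomp : ∀ k, b.1 k ≤ ∑ i, (x i).1 k := by
    intro k
    have hcont : Continuous fun z : Fin u → Orth 2 => ∑ i, (z i).1 k :=
      continuous_finset_sum _ fun i _ =>
        (continuous_apply k).comp (continuous_subtype_val.comp (continuous_apply i))
    have t1 : Tendsto (fun n => ∑ i, (y n i).1 k) atTop (nhds (∑ i, (x i).1 k)) :=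
      (hcont.tendsto x).comp hy1
    have t2 : Tendsto (fun n => (GwcL Hwc (List.ofFn (y n))).1 k) atTop (nhds (b.1 k)) :=
      (((continuous_apply k).comp continuous_subtype_val).tendsto b).comp hy2
    refine le_of_tendsto_of_tendsto' t2 t1 fun n => ?_
    have hle := comp_le (Hwc := Hwc) (List.ofFn (y n)) k
    rw [List.map_ofFn, List.sum_ofFn] at hle
    simpa using hle
  set sigF : (Fin u → Orth 2) → ℝ :=
    fun z => (GwcL Hwc (List.ofFn z)).1 0 + (GwcL Hwc (List.ofFn z)).1 1 with hsigF
  have hsig_cont : Continuous sigF := by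
    have heq : sigF = fun z : Fin u → Orth 2 =>
        SL (List.ofFn fun i => (z i).1 0 + (z i).1 1) := by
      funext z
      rw [hsigF]
      have := sig_eq_SL hwc (List.ofFn z)
      rw [List.map_ofFn] at this
      simpa [Function.comp_def] using this
    rw [heq]
    exact (contSL u).comp (continuous_pi fun i =>
      Continuous.add (f := fun a : Fin u → Orth 2 => (a i).1 0) (g := fun a : Fin u → Orth 2 => (a i).1 1)
        ((continuous_apply 0).comp (continuous_subtype_val.comp (continuous_apply i)))
        ((continuous_apply 1).comp (continuous_subtype_val.comp (continuous_apply i))))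
  have t3 : Tendsto (fun n => sigF (y n)) atTop (nhds (sigF x)) := (hsig_cont.tendsto x).comp hy1
  have t4 : Tendsto (fun n => sigF (y n)) atTop (nhds (b.1 0 + b.1 1)) := by
    have hc : Continuous fun w : Orth 2 => w.1 0 + w.1 1 :=
      ((continuous_apply 0).comp continuous_subtype_val).add
        ((continuous_apply 1).comp continuous_subtype_val)
    exact (hc.tendsto b).comp hy2
  have hsx : sigF x = b.1 0 + b.1 1 := tendsto_nhds_unique t3 t4
  have hne : List.ofFn x ≠ [] := by
    intro h
    have := congrArg List.length h
    simp at this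
    omega
  have hcnd : ∀ v ∈ Finset.Icc 1 ((List.ofFn x).length - 1),
      1 < (GwcL Hwc ((List.ofFn x).drop v)).1 0 + (GwcL Hwc ((List.ofFn x).drop v)).1 1 := by
    intro v hv
    have hv' : v ∈ Finset.Icc 1 (u - 1) := by simpa using hv
    have hni := hint v hv'
    by_contra hle
    push_neg at hle
    exact hni ((mem_simplexRegion_iff _).2 ⟨(GwcL Hwc _).2, by
      simpa [Fin.sum_univ_two] using hle⟩)
  have hunroll := sig_unroll hwc (List.ofFn x) hne hcnd
  rw [List.map_ofFn, List.sum_ofFn, List.length_ofFn] at hunroll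
  have hsum2 : (∑ i, ((x i).1 0 + (x i).1 1))
      = (∑ i, (x i).1 0) + (∑ i, (x i).1 1) := Finset.sum_add_distrib
  have hkey : (∑ i, (x i).1 0) + (∑ i, (x i).1 1) = b.1 0 + b.1 1 + ((u:ℝ) - 1) := by
    have : sigF x = (∑ i, ((x i).1 0 + (x i).1 1)) - ((u:ℝ) - 1) := by
      rw [hsigF]; simpa using hunroll
    rw [hsx] at this
    linarith [hsum2, this]
  refine ⟨fun k => (∑ i, (x i).1 k) - b.1 k, fun k => by dsimp only; linarith [hcomp k], ?_, ?_⟩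
  · dsimp only; linarith [hkey]
  · funext k; ring

/-- Bounds on the finite-horizon rate function for `K = 2` with unit
capacities: (i) lower bound via the Euclidean projection of the origin onto `𝕏(u,b)`;
(ii) upper bound via constant-speed linear paths, when `b ∉ [0,1)²`. -/
theorem finite_horizon_rate_function_bounds_K2
    (Hwc : Orth 2 → Orth 2)
    (hwc : IsWCScheduler (simplexRegion (fun _ : Fin 2 => 1)) (fun _ => 1) Hwc)
    (hqc : QuasiContinuous Hwc)
    (Λ : ℝ → ℝ) (hΛconv : ConvexOn ℝ (Set.Ici 0) Λ) (hΛ0 : ∀ x : ℝ, 0 ≤ x → 0 ≤ Λ x)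
    (t : ℕ) (ht : 1 ≤ t) (b : Orth 2) :
    (∀ proj : ℕ → Fin 2 → ℝ,
      (∀ u ∈ Finset.Icc 1 t, proj u ∈ XX u b ∧
        ∀ q ∈ XX u b, (proj u 0) ^ 2 + (proj u 1) ^ 2 ≤ q 0 ^ 2 + q 1 ^ 2) →
      (⨅ u ∈ Finset.Icc 1 t,
          ENNReal.ofReal ((u : ℝ) * (Λ (proj u 0 / u) + Λ (proj u 1 / u))))
        ≤ Irate Hwc Λ t b) ∧
    (¬ (b.1 0 < 1 ∧ b.1 1 < 1) →
      Irate Hwc Λ t b ≤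
        ⨅ u ∈ Finset.Icc 1 t,
          ENNReal.ofReal ((u : ℝ) *
            (Λ ((b.1 0 + ((u : ℝ) - 1) * hvec b 0) / u)
              + Λ ((b.1 1 + ((u : ℝ) - 1) * hvec b 1) / u)))) := by
  have htR : (1:ℕ) ∈ Finset.Icc 1 t := Finset.mem_Icc.2 ⟨le_rfl, ht⟩
  constructor
  · -- (i) lower bound
    intro proj hproj
    rw [Irate]
    refine le_iInf₂ fun u hu => le_iInf₂ fun x hx => ?_
    obtain ⟨hu1, hut⟩ := Finset.mem_Icc.1 hu
    have huR : (0:ℝ) < (u:ℝ) := by exact_mod_cast Nat.pos_of_ne_zero (by omega)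
    obtain ⟨hpX, hpmin⟩ := hproj u hu
    have hsX : (fun k => ∑ i, (x i).1 k) ∈ XX u b := by
      rcases eq_or_ne u 1 with rfl | hne
      · replace hx : ∀ i, x i = b := by simpa [AAfull] using hx
        refine ⟨fun _ => 0, fun _ => le_rfl, by norm_num, ?_⟩
        funext k
        simp [hx]
      · exact sum_mem_XX hwc u (by omega) b x (by simpa [AAfull, hne] using hx)
    obtain ⟨vp, hvp0, hvpsum, hpeq⟩ := hpX
    obtain ⟨vs, hvs0, hvssum, hseq⟩ := hsX
    have hp0 : proj u 0 = b.1 0 + vp 0 := by rw [hpeq]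
    have hp1 : proj u 1 = b.1 1 + vp 1 := by rw [hpeq]
    have hs0' : ∑ i, (x i).1 0 = b.1 0 + vs 0 := congrFun hseq 0
    have hs1' : ∑ i, (x i).1 1 = b.1 1 + vs 1 := congrFun hseq 1
    have hq0 : (0:ℝ) ≤ (∑ i, (x i).1 0) / u :=
      div_nonneg (Finset.sum_nonneg fun i _ => (x i).2 0) huR.le
    have hq1 : (0:ℝ) ≤ (∑ i, (x i).1 1) / u :=
      div_nonneg (Finset.sum_nonneg fun i _ => (x i).2 1) huR.le
    have hsumeq : proj u 0 + proj u 1 = (∑ i, (x i).1 0) + (∑ i, (x i).1 1) := by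
      rw [hp0, hp1, hs0', hs1']; linarith [hvpsum, hvssum]
    have hsumpq : proj u 0 / u + proj u 1 / u
        = (∑ i, (x i).1 0)/u + (∑ i, (x i).1 1)/u := by
      rw [← add_div, ← add_div, hsumeq]
    have hsql : (proj u 0 / u)^2 + (proj u 1 / u)^2
        ≤ ((∑ i, (x i).1 0)/u)^2 + ((∑ i, (x i).1 1)/u)^2 := by
      have hmin := hpmin _ ⟨vs, hvs0, hvssum, hseq⟩
      have h2 : (0:ℝ) < (u:ℝ)^2 := by positivity
      simp only [div_pow]
      rw [← add_div, ← add_div]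
      exact (div_le_div_iff_of_pos_right h2).2 hmin
    have hmaj : Λ (proj u 0 / u) + Λ (proj u 1 / u)
        ≤ Λ ((∑ i, (x i).1 0)/u) + Λ ((∑ i, (x i).1 1)/u) :=
      majorize hΛconv _ _ _ _ hq0 hq1 hsumpq hsql
    have hj0 := jensen_sum hΛconv u hu1 (fun i => (x i).1 0) (fun i => (x i).2 0)
    have hj1 := jensen_sum hΛconv u hu1 (fun i => (x i).1 1) (fun i => (x i).2 1)
    have hdist : ∑ i, (Λ ((x i).1 0) + Λ ((x i).1 1))
        = (∑ i, Λ ((x i).1 0)) + ∑ i, Λ ((x i).1 1) := Finset.sum_add_distrib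
    have core : (u:ℝ) * (Λ (proj u 0 / u) + Λ (proj u 1 / u))
        ≤ ∑ i, (Λ ((x i).1 0) + Λ ((x i).1 1)) := by
      have hm := mul_le_mul_of_nonneg_left hmaj huR.le
      have hexp : (u:ℝ) * (Λ ((∑ i, (x i).1 0)/u) + Λ ((∑ i, (x i).1 1)/u))
          = (u:ℝ) * Λ ((∑ i, (x i).1 0)/u) + (u:ℝ) * Λ ((∑ i, (x i).1 1)/u) := by ring
      rw [hdist]
      linarith [hj0, hj1, hm, hexp]
    exact le_trans (iInf₂_le u hu) (ENNReal.ofReal_le_ofReal core)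
  · -- (ii) upper bound
    intro hb
    rw [Irate]
    refine le_iInf₂ fun u hu => ?_
    obtain ⟨hu1, hut⟩ := Finset.mem_Icc.1 hu
    have huR : (0:ℝ) < (u:ℝ) := by exact_mod_cast Nat.pos_of_ne_zero (by omega)
    have hu1R : (1:ℝ) ≤ (u:ℝ) := by exact_mod_cast hu1
    have h1mem : (fun _ : Fin 1 => b) ∈ AAfull Hwc 1 b := by
      rw [AAfull, if_pos rfl]; exact fun i => rfl
    have hIone : (⨅ u ∈ Finset.Icc 1 t, ⨅ x ∈ AAfull Hwc u b,
          ENNReal.ofReal (∑ i, (Λ ((x i).1 0) + Λ ((x i).1 1))))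
        ≤ ENNReal.ofReal (Λ (b.1 0) + Λ (b.1 1)) := by
      refine le_trans (iInf₂_le 1 htR) (le_trans (iInf₂_le _ h1mem) (le_of_eq ?_))
      congr 1
      simp
    rcases le_or_gt (b.1 1) (b.1 0) with hord | hord
    · have hv0 : hvec b 0 = 1 := by simp [hvec, hord]
      have hv1 : hvec b 1 = 0 := by simp [hvec, hord]
      have hb0 : 1 ≤ b.1 0 := by
        rcases not_and_or.1 hb with h | h
        · linarith [not_lt.1 h]
        · linarith [not_lt.1 h]
      rw [hv0, hv1]
      rcases eq_or_ne u 1 with rfl | hune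
      · refine le_trans hIone (ENNReal.ofReal_le_ofReal (le_of_eq ?_))
        norm_num
      · have hu2 : 2 ≤ u := by omega
        by_cases hedge : 1 < b.1 0 + b.1 1
        · set a : Orth 2 := ⟨fun k => (b.1 k + ((u:ℝ)-1) * (if k = (0:Fin 2) then 1 else 0))/u, by
            intro k
            apply div_nonneg _ huR.le
            have h01 : (0:ℝ) ≤ (if k = (0:Fin 2) then (1:ℝ) else 0) := by split <;> norm_num
            nlinarith [b.2 k]⟩ with hadef
          have hmem : (fun _ : Fin u => a) ∈ AAfull Hwc u b := by
            rw [AAfull, if_neg hune]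
            exact constMem hwc u hu2 b 0 hb0 hord hedge a (fun k => rfl)
          refine le_trans (iInf₂_le u hu) (le_trans (iInf₂_le _ hmem) (le_of_eq ?_))
          congr 1
          have e0 : a.1 0 = (b.1 0 + ((u:ℝ)-1) * 1)/u := by rw [hadef]; norm_num
          have e1 : a.1 1 = (b.1 1 + ((u:ℝ)-1) * 0)/u := by
            rw [hadef]
            norm_num
          calc ∑ _i : Fin u, (Λ (a.1 0) + Λ (a.1 1))
              = (u:ℝ) * (Λ (a.1 0) + Λ (a.1 1)) := by
                rw [Finset.sum_const, Finset.card_univ, Fintype.card_fin, nsmul_eq_mul]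
            _ = (u:ℝ) * (Λ ((b.1 0 + ((u:ℝ)-1) * 1)/u) + Λ ((b.1 1 + ((u:ℝ)-1) * 0)/u)) := by
                rw [e0, e1]
        · push_neg at hedge
          have hbv1 : b.1 1 = 0 := le_antisymm (by linarith) (b.2 1)
          have hbv0 : b.1 0 = 1 := le_antisymm (by linarith [b.2 1]) hb0
          refine le_trans hIone (ENNReal.ofReal_le_ofReal ?_)
          rw [hbv0, hbv1]
          have harg0 : ((1:ℝ) + ((u:ℝ)-1) * 1)/u = 1 := by field_simp; ring
          have harg1 : ((0:ℝ) + ((u:ℝ)-1) * 0)/u = 0 := by simp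
          rw [harg0, harg1]
          have h01 : 0 ≤ Λ 1 + Λ 0 := add_nonneg (hΛ0 1 (by norm_num)) (hΛ0 0 le_rfl)
          nlinarith
    · have hv0 : hvec b 0 = 0 := by simp [hvec, not_le.2 hord]
      have hv1 : hvec b 1 = 1 := by simp [hvec, not_le.2 hord]
      have hb1 : 1 ≤ b.1 1 := by
        rcases not_and_or.1 hb with h | h
        · linarith [not_lt.1 h]
        · linarith [not_lt.1 h]
      rw [hv0, hv1]
      rcases eq_or_ne u 1 with rfl | hune
      · refine le_trans hIone (ENNReal.ofReal_le_ofReal (le_of_eq ?_))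
        norm_num
      · have hu2 : 2 ≤ u := by omega
        by_cases hedge : 1 < b.1 0 + b.1 1
        · set a : Orth 2 := ⟨fun k => (b.1 k + ((u:ℝ)-1) * (if k = (1:Fin 2) then 1 else 0))/u, by
            intro k
            apply div_nonneg _ huR.le
            have h01 : (0:ℝ) ≤ (if k = (1:Fin 2) then (1:ℝ) else 0) := by split <;> norm_num
            nlinarith [b.2 k]⟩ with hadef
          have hble : b.1 ((1:Fin 2)+1) ≤ b.1 1 := by
            have he : ((1:Fin 2)+1) = 0 := by decide
            rw [he]; exact hord.le
          have hmem : (fun _ : Fin u => a) ∈ AAfull Hwc u b := by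
            rw [AAfull, if_neg hune]
            exact constMem hwc u hu2 b 1 hb1 hble hedge a (fun k => rfl)
          refine le_trans (iInf₂_le u hu) (le_trans (iInf₂_le _ hmem) (le_of_eq ?_))
          congr 1
          have e0 : a.1 0 = (b.1 0 + ((u:ℝ)-1) * 0)/u := by
            rw [hadef]
            norm_num
          have e1 : a.1 1 = (b.1 1 + ((u:ℝ)-1) * 1)/u := by rw [hadef]; norm_num
          calc ∑ _i : Fin u, (Λ (a.1 0) + Λ (a.1 1))
              = (u:ℝ) * (Λ (a.1 0) + Λ (a.1 1)) := by
                rw [Finset.sum_const, Finset.card_univ, Fintype.card_fin, nsmul_eq_mul]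
            _ = (u:ℝ) * (Λ ((b.1 0 + ((u:ℝ)-1) * 0)/u) + Λ ((b.1 1 + ((u:ℝ)-1) * 1)/u)) := by
                rw [e0, e1]
        · push_neg at hedge
          have hbv0 : b.1 0 = 0 := le_antisymm (by linarith) (b.2 0)
          have hbv1 : b.1 1 = 1 := le_antisymm (by linarith [b.2 0]) hb1
          refine le_trans hIone (ENNReal.ofReal_le_ofReal ?_)
          rw [hbv0, hbv1]
          have harg0 : ((0:ℝ) + ((u:ℝ)-1) * 0)/u = 0 := by simp
          have harg1 : ((1:ℝ) + ((u:ℝ)-1) * 1)/u = 1 := by field_simp; ring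
          rw [harg0, harg1]
          have h01 : 0 ≤ Λ 0 + Λ 1 := add_nonneg (hΛ0 0 le_rfl) (hΛ0 1 (by norm_num))
          nlinarith
end
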